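/- arXiv:1701.02075 — 9 statements merged into one kernel-verified Lean document; each statement's English description precedes it below -/
import Mathlib

section
/- Let p be an odd prime, r = p^m, and a ∈ F_r^*. Set ρ ∈ F_p^* and define Ω₂ = Σ_{x∈F_r} Σ_{y∈F_p^*} ζ_p^{y(Tr(x)-1)} Σ_{δ∈F_p^*} ζ_p^{δ(Tr(ax)-ρ)}. Then Ω₂ = (p-1)r if a ∈ F_p^* and ρ = a; Ω₂ = -r if a ∈ F_p^* and ρ ≠ a; and Ω₂ = 0 if a ∉ F_p^*. -/
/-- The value of `Ω₂ = ∑_{x∈F_r} ∑_{y∈F_p^*} ζ^{y(Tr x - 1)} ∑_{δ∈F_p^*} ζ^{δ(Tr(ax)-ρ)}`: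
it equals `(p-1)r` if `a ∈ F_p^*` and `ρ = a`, `-r` if `a ∈ F_p^*` and `ρ ≠ a`,
and `0` if `a ∉ F_p^*`. -/


theorem stmt4 (p m : ℕ) [Fact p.Prime] (hodd : p ≠ 2) (hm : 0 < m)
    (F : Type) [Field F] [Fintype F] [DecidableEq F] [Algebra (ZMod p) F]
    (hcard : Fintype.card F = p ^ m)
    (ζ : ℂ) (hζ : IsPrimitiveRoot ζ p)
    (a : F) (ha : a ≠ 0) (ρ : ZMod p) (hρ : ρ ≠ 0)
    (Ω₂ : ℂ)
    (hΩ : Ω₂ = ∑ x : F, ∑ y ∈ Finset.univ.filter (fun y : ZMod p => y ≠ 0),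
        ∑ δ ∈ Finset.univ.filter (fun δ : ZMod p => δ ≠ 0),
          ζ ^ (y * (Algebra.trace (ZMod p) F x - 1)).val *
            ζ ^ (δ * (Algebra.trace (ZMod p) F (a * x) - ρ)).val) :
    ((∃ b : ZMod p, algebraMap (ZMod p) F b = a) →
        (a = algebraMap (ZMod p) F ρ → Ω₂ = ((p : ℂ) - 1) * (p : ℂ) ^ m) ∧
        (a ≠ algebraMap (ZMod p) F ρ → Ω₂ = -(p : ℂ) ^ m)) ∧
    ((¬ ∃ b : ZMod p, algebraMap (ZMod p) F b = a) → Ω₂ = 0) := by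
  have hp : p.Prime := Fact.out
  haveI : NeZero p := ⟨hp.ne_zero⟩
  haveI : FiniteDimensional (ZMod p) F := Module.Finite.of_finite
  have hinj : Function.Injective (algebraMap (ZMod p) F) := (algebraMap (ZMod p) F).injective
  haveI : CharP F p := charP_of_injective_algebraMap hinj p
  have hp1 : ζ ^ p = 1 := hζ.pow_eq_one
  set ψ : AddChar (ZMod p) ℂ := AddChar.zmodChar p hp1 with hψdef
  have hψ : ψ.IsPrimitive := AddChar.zmodChar_primitive_of_primitive_root p hζ
  set Tr : F →ₗ[ZMod p] ZMod p := Algebra.trace (ZMod p) F with hTrdef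
  -- the composed character on F
  set Ψ : AddChar F ℂ := ψ.compAddMonoidHom Tr.toAddMonoidHom with hΨdef
  have hΨapp : ∀ x : F, Ψ x = ψ (Tr x) := fun x => rfl
  have hψ_eq_one : ∀ t : ZMod p, ψ t = 1 ↔ t = 0 :=
    fun t => hψ.zmod_char_eq_one_iff p t
  -- Ψ is primitive
  have htr1 : ∃ x : F, Tr x ≠ 0 := by
    have htr := (traceForm_nondegenerate (ZMod p) F).1 (1 : F)
    simp_rw [Algebra.traceForm_apply, one_mul] at htr
    by_contra! hf
    exact one_ne_zero (htr hf)
  have hΨprim : Ψ.IsPrimitive := by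
    apply AddChar.IsPrimitive.of_ne_one
    rw [AddChar.ne_one_iff]
    obtain ⟨x, hx⟩ := htr1
    exact ⟨x, fun h => hx ((hψ_eq_one _).mp h)⟩
  -- the two orthogonality relations
  have hS : ∀ c : F, (∑ x : F, ψ (Tr (c * x))) = if c = 0 then ((p : ℂ)) ^ m else 0 := by
    intro c
    have := AddChar.sum_mulShift (ψ := Ψ) c hΨprim
    simp_rw [hΨapp, mul_comm c] at this ⊢
    rw [this, hcard]
    push_cast
    rfl
  have hT : ∀ c : ZMod p, (∑ δ : ZMod p, ψ (δ * c)) = if c = 0 then (p : ℂ) else 0 := by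
    intro c
    have := AddChar.sum_mulShift (ψ := ψ) c hψ
    rw [this, ZMod.card, apply_ite (Nat.cast : ℕ → ℂ)]
    norm_num
  -- linearity of trace
  have hTr_smul : ∀ (t : ZMod p) (x : F), Tr (algebraMap (ZMod p) F t * x) = t * Tr x := by
    intro t x
    rw [← Algebra.smul_def, map_smul, smul_eq_mul]
  -- main computation
  have hmain : Ω₂ = ∑ y ∈ Finset.univ.filter (fun y : ZMod p => y ≠ 0),
      ∑ δ ∈ Finset.univ.filter (fun δ : ZMod p => δ ≠ 0),
        ψ (-(y + δ * ρ)) *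
          (if (algebraMap (ZMod p) F y + algebraMap (ZMod p) F δ * a) = 0
            then ((p : ℂ)) ^ m else 0) := by
    rw [hΩ, Finset.sum_comm]
    refine Finset.sum_congr rfl fun y _ => ?_
    rw [Finset.sum_comm]
    refine Finset.sum_congr rfl fun δ _ => ?_
    rw [← hS, Finset.mul_sum]
    refine Finset.sum_congr rfl fun x _ => ?_
    have h1 : (ζ : ℂ) ^ (y * (Tr x - 1)).val = ψ (y * (Tr x - 1)) := rfl
    have h2 : (ζ : ℂ) ^ (δ * (Tr (a * x) - ρ)).val = ψ (δ * (Tr (a * x) - ρ)) := rfl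
    rw [h1, h2, ← AddChar.map_add_eq_mul, ← AddChar.map_add_eq_mul]
    congr 1
    rw [add_mul, map_add, hTr_smul y x, mul_assoc, hTr_smul δ (a * x)]
    ring
  constructor
  · rintro ⟨b, hb⟩
    have hbne : b ≠ 0 := by rintro rfl; rw [map_zero] at hb; exact ha hb.symm
    -- evaluate the y-sum
    have hstep : Ω₂ = ∑ δ ∈ Finset.univ.filter (fun δ : ZMod p => δ ≠ 0),
        ψ (δ * (b - ρ)) * ((p : ℂ)) ^ m := by
      rw [hmain, Finset.sum_comm]
      refine Finset.sum_congr rfl fun δ hδ => ?_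
      rw [Finset.mem_filter] at hδ
      have hδ0 : δ ≠ 0 := hδ.2
      have hy0 : -(δ * b) ≠ 0 :=
        neg_ne_zero.mpr (mul_ne_zero hδ.2 hbne)
      rw [Finset.sum_eq_single_of_mem (-(δ * b))
        (Finset.mem_filter.mpr ⟨Finset.mem_univ _, hy0⟩)]
      · have hcond : (algebraMap (ZMod p) F (-(δ * b)) + algebraMap (ZMod p) F δ * a) = 0 := by
          rw [← hb, ← map_mul, ← map_add, neg_add_cancel, map_zero]
        rw [if_pos hcond]
        congr 1
        congr 1
        ring
      · intro y _ hyne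
        have hcond : ¬ (algebraMap (ZMod p) F y + algebraMap (ZMod p) F δ * a) = 0 := by
          rw [← hb, ← map_mul, ← map_add]
          intro h
          apply hyne
          have := hinj (by rw [h, map_zero] : algebraMap (ZMod p) F (y + δ * b) = algebraMap (ZMod p) F 0)
          linear_combination this
        rw [if_neg hcond, mul_zero]
    -- evaluate the δ-sum
    have hsum : ∀ c : ZMod p,
        (∑ δ ∈ Finset.univ.filter (fun δ : ZMod p => δ ≠ 0), ψ (δ * c))
          = (if c = 0 then (p : ℂ) else 0) - 1 := by
      intro c
      rw [← hT c]
      rw [Finset.filter_ne' Finset.univ 0]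
      rw [eq_sub_iff_add_eq]
      have h0 : ψ ((0 : ZMod p) * c) = 1 := by rw [zero_mul]; exact ψ.map_zero_eq_one
      calc ∑ δ ∈ Finset.univ.erase (0 : ZMod p), ψ (δ * c) + 1
          = ∑ δ ∈ Finset.univ.erase (0 : ZMod p), ψ (δ * c) + ψ ((0 : ZMod p) * c) := by
            rw [h0]
        _ = ∑ δ : ZMod p, ψ (δ * c) :=
            Finset.sum_erase_add _ _ (Finset.mem_univ 0)
    have hΩval : Ω₂ = ((if b - ρ = 0 then (p : ℂ) else 0) - 1) * ((p : ℂ)) ^ m := by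
      rw [hstep, ← Finset.sum_mul, hsum]
    constructor
    · intro haρ
      have hbρ : b = ρ := hinj (by rw [hb, haρ])
      rw [hΩval, if_pos (by rw [hbρ, sub_self])]
    · intro haρ
      have hbρ : b - ρ ≠ 0 := by
        intro h
        apply haρ
        rw [← hb, sub_eq_zero.mp h]
      rw [hΩval, if_neg hbρ]
      ring
  · intro hnot
    rw [hmain]
    refine Finset.sum_eq_zero fun y hy => Finset.sum_eq_zero fun δ hδ => ?_
    rw [Finset.mem_filter] at hδ
    have hcond : ¬ (algebraMap (ZMod p) F y + algebraMap (ZMod p) F δ * a) = 0 := by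
      intro h
      apply hnot
      refine ⟨-(δ⁻¹ * y), ?_⟩
      have hδ0 : (algebraMap (ZMod p) F δ) ≠ 0 := fun hh => hδ.2 (hinj (by rw [hh, map_zero]))
      have h2 : algebraMap (ZMod p) F δ * a = -(algebraMap (ZMod p) F y) := by
        linear_combination h
      rw [map_neg, map_mul, map_inv₀, ← mul_neg, ← h2, ← mul_assoc,
        inv_mul_cancel₀ hδ0, one_mul]
    rw [if_neg hcond, mul_zero]
end

section
/- Let p be an odd prime, r = p^m with m even, and a ∈ F_r^* with Tr(a²) = 0. Let ρ ∈ F_p^* and define Ω₃ = Σ_{x∈F_r} Σ_{z∈F_p^*} ζ_p^{z·Tr(x²)} Σ_{δ∈F_p^*} ζ_p^{δ(Tr(ax)-ρ)}. Then Ω₃ = -(p-1)·G_m, where G_m = Σ_{x∈F_r^*} η_m(x) ζ_p^{Tr(x)} is the quadratic Gauss sum of F_r. -/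
open Finset

section aux

variable {p : ℕ} [hp : Fact p.Prime] {ζ : ℂ}

private lemma stmt5_zval (hζ : IsPrimitiveRoot ζ p) {u : ZMod p} (h : ζ ^ u.val = 1) : u = 0 := by
  haveI : NeZero p := ⟨hp.out.pos.ne'⟩
  have h0 : u.val = 0 := hζ.pow_inj (ZMod.val_lt u) hp.out.pos (by rw [pow_zero]; exact h)
  exact (ZMod.val_eq_zero u).mp h0

private lemma stmt5_key (hζ : IsPrimitiveRoot ζ p) (A B : ZMod p) :
    ζ ^ (A + B).val = ζ ^ A.val * ζ ^ B.val := by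
  haveI : NeZero p := ⟨hp.out.pos.ne'⟩
  have hζp : ζ ^ p = 1 := hζ.pow_eq_one
  rw [← AddChar.zmodChar_apply hζp, ← AddChar.zmodChar_apply hζp, ← AddChar.zmodChar_apply hζp,
    AddChar.map_add_eq_mul]

private lemma stmt5_sumZ (hζ : IsPrimitiveRoot ζ p) :
    ∑ u : ZMod p, ζ ^ u.val = 0 := by
  haveI : NeZero p := ⟨hp.out.pos.ne'⟩
  have hζp : ζ ^ p = 1 := hζ.pow_eq_one
  have : ∑ u : ZMod p, AddChar.zmodChar p hζp u = 0 := by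
    apply AddChar.sum_eq_zero_of_ne_one
    rw [AddChar.ne_one_iff]
    refine ⟨1, fun h => ?_⟩
    rw [AddChar.zmodChar_apply] at h
    exact one_ne_zero (stmt5_zval hζ h)
  simpa [AddChar.zmodChar_apply] using this

private lemma stmt5_sumZne (hζ : IsPrimitiveRoot ζ p) :
    ∑ u ∈ univ.filter (fun u : ZMod p => u ≠ 0), ζ ^ u.val = -1 := by
  haveI : NeZero p := ⟨hp.out.pos.ne'⟩
  have h := stmt5_sumZ hζ
  rw [← Finset.sum_filter_add_sum_filter_not univ (fun u : ZMod p => u = 0)] at h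
  have h0 : univ.filter (fun u : ZMod p => u = 0) = {0} := by
    ext u; simp
  rw [h0, Finset.sum_singleton, ZMod.val_zero, pow_zero] at h
  linear_combination h

end aux

section aux2

variable {p m : ℕ} [hp : Fact p.Prime] {F : Type} [Field F] [Fintype F] [DecidableEq F]
  [Algebra (ZMod p) F] {ζ : ℂ}

set_option linter.unusedSectionVars false in
private lemma stmt5_charP : CharP F p :=
  charP_of_injective_algebraMap (algebraMap (ZMod p) F).injective p

set_option linter.unusedSectionVars false in
private lemma stmt5_ringChar : ringChar F = p := by
  haveI : CharP F p := stmt5_charP (p := p)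
  exact (ringChar.eq F p).symm ▸ rfl

set_option linter.unusedSectionVars false in
private lemma stmt5_two (hodd : p ≠ 2) : (2 : F) ≠ 0 := by
  haveI : CharP F p := stmt5_charP (p := p)
  intro h
  have h2 : ((2 : ℕ) : F) = 0 := by exact_mod_cast h
  rw [CharP.cast_eq_zero_iff F p] at h2
  exact hodd ((Nat.prime_dvd_prime_iff_eq hp.out Nat.prime_two).mp h2)

private lemma stmt5_sumTr (hζ : IsPrimitiveRoot ζ p) :
    ∑ x : F, ζ ^ (Algebra.trace (ZMod p) F x).val = 0 := by
  haveI : NeZero p := ⟨hp.out.pos.ne'⟩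
  have hζp : ζ ^ p = 1 := hζ.pow_eq_one
  set ψ := AddChar.zmodChar p hζp with hψ
  set Ψ : AddChar F ℂ := ψ.compAddMonoidHom (Algebra.trace (ZMod p) F).toAddMonoidHom with hΨ
  have : ∑ x : F, Ψ x = 0 := by
    apply AddChar.sum_eq_zero_of_ne_one
    rw [AddChar.ne_one_iff]
    obtain ⟨t, ht⟩ := Algebra.trace_surjective (ZMod p) F 1
    refine ⟨t, fun h => ?_⟩
    rw [hΨ] at h
    simp only [AddChar.compAddMonoidHom_apply, LinearMap.toAddMonoidHom_coe] at h
    rw [ht, AddChar.zmodChar_apply] at h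
    exact one_ne_zero (stmt5_zval hζ h)
  simpa [hΨ, hψ, AddChar.zmodChar_apply] using this

/-- complete-the-square substitution -/
private lemma stmt5_complete (hζ : IsPrimitiveRoot ζ p) (hodd : p ≠ 2) {u : F} (v : F)
    (hu : u ≠ 0) :
    ∑ x : F, ζ ^ (Algebra.trace (ZMod p) F (u * x ^ 2 + v * x)).val
      = ζ ^ (Algebra.trace (ZMod p) F (-(v ^ 2) / (4 * u))).val *
        ∑ x : F, ζ ^ (Algebra.trace (ZMod p) F (u * x ^ 2)).val := by
  have h2 : (2 : F) ≠ 0 := stmt5_two hodd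
  set c : F := -(v / (2 * u)) with hc
  have step : ∀ x : F, u * (x + c) ^ 2 + v * (x + c) = -(v ^ 2) / (4 * u) + u * x ^ 2 := by
    intro x
    rw [hc]
    have h4 : (4 : F) ≠ 0 := by
      rw [show (4 : F) = 2 * 2 by norm_num]
      exact mul_ne_zero h2 h2
    field_simp
    ring
  calc ∑ x : F, ζ ^ (Algebra.trace (ZMod p) F (u * x ^ 2 + v * x)).val
      = ∑ x : F, ζ ^ (Algebra.trace (ZMod p) F (u * (x + c) ^ 2 + v * (x + c))).val :=
        (Equiv.sum_comp (Equiv.addRight c)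
          (fun y => ζ ^ (Algebra.trace (ZMod p) F (u * y ^ 2 + v * y)).val)).symm
    _ = ∑ x : F, ζ ^ (Algebra.trace (ZMod p) F (-(v ^ 2) / (4 * u))).val *
          ζ ^ (Algebra.trace (ZMod p) F (u * x ^ 2)).val := by
        refine Finset.sum_congr rfl fun x _ => ?_
        rw [step x, map_add, stmt5_key hζ]
    _ = _ := by rw [← Finset.mul_sum]

/-- sum over x of ψ(Tr x²) equals the Gauss sum -/
private lemma stmt5_sumSq (hζ : IsPrimitiveRoot ζ p) (hodd : p ≠ 2) :
    ∑ x : F, ζ ^ (Algebra.trace (ZMod p) F (x ^ 2)).val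
      = ∑ y ∈ univ.filter (fun y : F => y ≠ 0),
          (quadraticChar F y : ℂ) * ζ ^ (Algebra.trace (ZMod p) F y).val := by
  have hF2 : ringChar F ≠ 2 := by rw [stmt5_ringChar (p := p)]; exact hodd
  have key : ∀ y : F, ((univ.filter (fun x : F => x ^ 2 = y)).card : ℂ)
      = (quadraticChar F y : ℂ) + 1 := by
    intro y
    have h := quadraticChar_card_sqrts hF2 y
    rw [Set.toFinset_setOf] at h
    exact_mod_cast h
  calc ∑ x : F, ζ ^ (Algebra.trace (ZMod p) F (x ^ 2)).val
      = ∑ y : F, ∑ x ∈ univ.filter (fun x : F => x ^ 2 = y),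
          ζ ^ (Algebra.trace (ZMod p) F y).val :=
        (Finset.sum_fiberwise' univ (fun x : F => x ^ 2)
          (fun y => ζ ^ (Algebra.trace (ZMod p) F y).val)).symm
    _ = ∑ y : F, ((quadraticChar F y : ℂ) + 1) * ζ ^ (Algebra.trace (ZMod p) F y).val := by
        refine Finset.sum_congr rfl fun y _ => ?_
        rw [Finset.sum_const, nsmul_eq_mul, key y]
    _ = ∑ y : F, (quadraticChar F y : ℂ) * ζ ^ (Algebra.trace (ZMod p) F y).val
          + ∑ y : F, ζ ^ (Algebra.trace (ZMod p) F y).val := by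
        rw [← Finset.sum_add_distrib]
        refine Finset.sum_congr rfl fun y _ => by ring
    _ = _ := by
        rw [stmt5_sumTr hζ, add_zero]
        refine (Finset.sum_filter_of_ne fun y _ hne => ?_).symm
        intro h0
        apply hne
        rw [h0]
        simp

/-- elements of the prime field are squares when m is even -/
private lemma stmt5_sqrt (hodd : p ≠ 2) (hm : 0 < m) (hme : Even m)
    (hcard : Fintype.card F = p ^ m) {z : ZMod p} (hz : z ≠ 0) :
    ∃ w : F, w ≠ 0 ∧ algebraMap (ZMod p) F z = w ^ 2 := by
  have hF2 : ringChar F ≠ 2 := by rw [stmt5_ringChar (p := p)]; exact hodd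
  obtain ⟨k, hk⟩ := hme
  have hop : Odd p := hp.out.odd_of_ne_two hodd
  have hdvd : 2 * (p - 1) ∣ p ^ m - 1 := by
    have h1 : (1:ℕ) ≤ p ^ m := Nat.one_le_pow _ _ hp.out.pos
    have hp1 : (1:ℕ) ≤ p := hp.out.one_lt.le
    have hZ : ((2 * (p - 1) : ℕ) : ℤ) ∣ ((p ^ m - 1 : ℕ) : ℤ) := by
      push_cast [h1, hp1]
      have e : (p : ℤ) ^ m - 1 = ((p : ℤ) ^ k + 1) * ((p : ℤ) ^ k - 1) := by
        subst hk; ring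
      rw [e]
      apply mul_dvd_mul
      · have : (2:ℕ) ∣ p ^ k + 1 := (hop.pow).add_one.two_dvd
        have := Int.natCast_dvd_natCast.mpr this
        push_cast at this
        exact this
      · simpa using sub_dvd_pow_sub_pow (p : ℤ) 1 k
    exact_mod_cast hZ
  obtain ⟨t, ht⟩ := hdvd
  have h1 : (1:ℕ) ≤ p ^ m := Nat.one_le_pow _ _ hp.out.pos
  have ht' : p ^ m - 1 = 2 * ((p - 1) * t) := by rw [ht]; ring
  have hhalf : p ^ m / 2 = (p - 1) * t := by omega
  have hu : algebraMap (ZMod p) F z ≠ 0 := fun h => hz (by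
    apply (algebraMap (ZMod p) F).injective
    rw [h, map_zero])
  have hsq : IsSquare (algebraMap (ZMod p) F z) := by
    rw [FiniteField.isSquare_iff hF2 hu, hcard, hhalf, pow_mul, ← map_pow,
      ZMod.pow_card_sub_one_eq_one hz, map_one, one_pow]
  obtain ⟨w, hw⟩ := hsq
  refine ⟨w, fun h0 => hu (by rw [hw, h0, mul_zero]), by rw [hw, sq]⟩

end aux2



/-- For `m` even and `Tr(a²) = 0` (`a ≠ 0`), the sum
`Ω₃ = ∑_{x∈F_r} ∑_{z∈F_p^*} ζ^{z Tr(x²)} ∑_{δ∈F_p^*} ζ^{δ(Tr(ax)-ρ)}` equals `-(p-1)G_m`. -/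
theorem stmt5 (p m : ℕ) [Fact p.Prime] (hodd : p ≠ 2) (hm : 0 < m) (hme : Even m)
    (F : Type) [Field F] [Fintype F] [DecidableEq F] [Algebra (ZMod p) F]
    (hcard : Fintype.card F = p ^ m)
    (ζ : ℂ) (hζ : IsPrimitiveRoot ζ p)
    (ηm : F → ℂ)
    (hηm : ∀ a : F, ηm a = if a = 0 then 0 else if IsSquare a then 1 else -1)
    (Gm : ℂ)
    (hGm : Gm = ∑ x ∈ Finset.univ.filter (fun x : F => x ≠ 0),
        ηm x * ζ ^ (Algebra.trace (ZMod p) F x).val)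
    (a : F) (ha : a ≠ 0) (hA : Algebra.trace (ZMod p) F (a ^ 2) = 0)
    (ρ : ZMod p) (hρ : ρ ≠ 0)
    (Ω₃ : ℂ)
    (hΩ : Ω₃ = ∑ x : F, ∑ z ∈ Finset.univ.filter (fun z : ZMod p => z ≠ 0),
        ∑ δ ∈ Finset.univ.filter (fun δ : ZMod p => δ ≠ 0),
          ζ ^ (z * Algebra.trace (ZMod p) F (x ^ 2)).val *
            ζ ^ (δ * (Algebra.trace (ZMod p) F (a * x) - ρ)).val) :
    Ω₃ = -((p : ℂ) - 1) * Gm := by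
  classical
  have hpp : p.Prime := Fact.out
  haveI : NeZero p := ⟨hpp.pos.ne'⟩
  set Tr := Algebra.trace (ZMod p) F with hTrdef
  -- η matches the quadratic character
  have hηχ : ∀ y : F, ηm y = ((quadraticChar F y : ℤ) : ℂ) := by
    intro y
    rw [hηm, quadraticChar_apply, quadraticCharFun]
    split_ifs <;> norm_num
  have hGmSq : ∑ x : F, ζ ^ (Tr (x ^ 2)).val = Gm := by
    rw [hGm, stmt5_sumSq hζ hodd]
    exact Finset.sum_congr rfl fun y _ => by rw [hηχ]
  -- the inner sum over x
  have inner : ∀ z δ : ZMod p, z ≠ 0 →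
      ∑ x : F, ζ ^ (z * Tr (x ^ 2)).val * ζ ^ (δ * Tr (a * x)).val = Gm := by
    intro z δ hz
    have hu : algebraMap (ZMod p) F z ≠ 0 := fun h => hz <|
      (algebraMap (ZMod p) F).injective (by rw [map_zero]; exact h)
    have h2 : (2 : F) ≠ 0 := stmt5_two hodd
    have h4 : (4 : F) ≠ 0 := by
      rw [show (4 : F) = 2 * 2 by norm_num]; exact mul_ne_zero h2 h2
    have h4z : (4 : ZMod p) ≠ 0 := by
      intro h
      apply h4
      rw [show (4 : F) = algebraMap (ZMod p) F 4 from (map_ofNat _ 4).symm, h, map_zero]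
    have e1 : ∀ x : F, z * Tr (x ^ 2) = Tr (algebraMap (ZMod p) F z * x ^ 2) := fun x => by
      rw [← Algebra.smul_def, map_smul, smul_eq_mul]
    have e2 : ∀ x : F,
        δ * Tr (a * x) = Tr ((algebraMap (ZMod p) F δ * a) * x) := fun x => by
      rw [mul_assoc, ← Algebra.smul_def, map_smul, smul_eq_mul]
    have hT0 : Tr (-((algebraMap (ZMod p) F δ * a) ^ 2) / (4 * algebraMap (ZMod p) F z))
        = 0 := by
      have e3 : -((algebraMap (ZMod p) F δ * a) ^ 2) / (4 * algebraMap (ZMod p) F z)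
          = (-(δ ^ 2) / (4 * z)) • (a ^ 2) := by
        rw [Algebra.smul_def, map_div₀, map_neg, map_pow, map_mul, map_ofNat]
        field_simp
      rw [e3, map_smul, hA, smul_zero]
    obtain ⟨w, hw0, hw⟩ := stmt5_sqrt hodd hm hme hcard hz
    calc ∑ x : F, ζ ^ (z * Tr (x ^ 2)).val * ζ ^ (δ * Tr (a * x)).val
        = ∑ x : F, ζ ^ (Tr (algebraMap (ZMod p) F z * x ^ 2
            + (algebraMap (ZMod p) F δ * a) * x)).val := by
          refine Finset.sum_congr rfl fun x _ => ?_
          rw [e1, e2, ← stmt5_key hζ, ← map_add]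
      _ = ζ ^ (Tr (-((algebraMap (ZMod p) F δ * a) ^ 2) / (4 * algebraMap (ZMod p) F z))).val *
            ∑ x : F, ζ ^ (Tr (algebraMap (ZMod p) F z * x ^ 2)).val :=
          stmt5_complete hζ hodd _ hu
      _ = ∑ x : F, ζ ^ (Tr (algebraMap (ZMod p) F z * x ^ 2)).val := by
          rw [hT0, ZMod.val_zero, pow_zero, one_mul]
      _ = ∑ x : F, ζ ^ (Tr ((w * x) ^ 2)).val := by
          refine Finset.sum_congr rfl fun x _ => ?_
          rw [hw, mul_pow]
      _ = ∑ y : F, ζ ^ (Tr (y ^ 2)).val := by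
          have := Equiv.sum_comp (Equiv.mulLeft₀ w hw0) (fun y : F => ζ ^ (Tr (y ^ 2)).val)
          simpa using this
      _ = Gm := hGmSq
  -- sum over δ of the linear character
  have sumdelta : ∑ δ ∈ Finset.univ.filter (fun δ : ZMod p => δ ≠ 0),
      ζ ^ ((-(δ * ρ)).val) = -1 := by
    have hbij : ∑ δ ∈ Finset.univ.filter (fun δ : ZMod p => δ ≠ 0), ζ ^ ((-(δ * ρ)).val)
        = ∑ u ∈ Finset.univ.filter (fun u : ZMod p => u ≠ 0), ζ ^ u.val := by
      refine Finset.sum_nbij' (fun δ => -(δ * ρ)) (fun u => -(u * ρ⁻¹)) ?_ ?_ ?_ ?_ ?_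
      · intro δ hδ
        rw [Finset.mem_filter] at hδ ⊢
        exact ⟨Finset.mem_univ _, by
          simp only [neg_ne_zero]
          exact mul_ne_zero hδ.2 hρ⟩
      · intro u hu
        rw [Finset.mem_filter] at hu ⊢
        exact ⟨Finset.mem_univ _, by
          simp only [neg_ne_zero]
          exact mul_ne_zero hu.2 (inv_ne_zero hρ)⟩
      · intro δ hδ
        field_simp
      · intro u hu
        field_simp
      · intro δ hδ; rfl
    rw [hbij, stmt5_sumZne hζ]
  -- assembling everything
  have outer : ∀ z ∈ Finset.univ.filter (fun z : ZMod p => z ≠ 0),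
      (∑ x : F, ∑ δ ∈ Finset.univ.filter (fun δ : ZMod p => δ ≠ 0),
        ζ ^ (z * Tr (x ^ 2)).val * ζ ^ (δ * (Tr (a * x) - ρ)).val) = -Gm := by
    intro z hz
    rw [Finset.mem_filter] at hz
    rw [Finset.sum_comm]
    calc ∑ δ ∈ Finset.univ.filter (fun δ : ZMod p => δ ≠ 0), ∑ x : F,
          ζ ^ (z * Tr (x ^ 2)).val * ζ ^ (δ * (Tr (a * x) - ρ)).val
        = ∑ δ ∈ Finset.univ.filter (fun δ : ZMod p => δ ≠ 0),
            Gm * ζ ^ ((-(δ * ρ)).val) := by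
          refine Finset.sum_congr rfl fun δ hδ => ?_
          calc ∑ x : F, ζ ^ (z * Tr (x ^ 2)).val * ζ ^ (δ * (Tr (a * x) - ρ)).val
              = ∑ x : F, ζ ^ (z * Tr (x ^ 2)).val * ζ ^ (δ * Tr (a * x)).val *
                  ζ ^ ((-(δ * ρ)).val) := by
                refine Finset.sum_congr rfl fun x _ => ?_
                rw [show δ * (Tr (a * x) - ρ) = δ * Tr (a * x) + -(δ * ρ) by ring,
                  stmt5_key hζ, mul_assoc]
            _ = (∑ x : F, ζ ^ (z * Tr (x ^ 2)).val * ζ ^ (δ * Tr (a * x)).val) *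
                  ζ ^ ((-(δ * ρ)).val) := by rw [Finset.sum_mul]
            _ = Gm * ζ ^ ((-(δ * ρ)).val) := by rw [inner z δ hz.2]
      _ = Gm * ∑ δ ∈ Finset.univ.filter (fun δ : ZMod p => δ ≠ 0),
            ζ ^ ((-(δ * ρ)).val) := by rw [Finset.mul_sum]
      _ = -Gm := by rw [sumdelta]; ring
  have hcardz : (Finset.univ.filter (fun z : ZMod p => z ≠ 0)).card = p - 1 := by
    have : Finset.univ.filter (fun z : ZMod p => z ≠ 0) = Finset.univ.erase 0 := by
      ext u; simp
    rw [this, Finset.card_erase_of_mem (Finset.mem_univ _), Finset.card_univ, ZMod.card]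
  rw [hΩ, Finset.sum_comm, Finset.sum_congr rfl outer, Finset.sum_const, hcardz,
    nsmul_eq_mul]
  push_cast [hpp.one_lt.le]
  ring
end

section
/- Let p be an odd prime, r = p^m with m even, and a ∈ F_r^* with Tr(a²) ≠ 0. Let ρ ∈ F_p^* and Ω₃ = Σ_{x∈F_r} Σ_{z∈F_p^*} ζ_p^{z·Tr(x²)} Σ_{δ∈F_p^*} ζ_p^{δ(Tr(ax)-ρ)}. Then Ω₃ = G_m, where G_m is the quadratic Gauss sum over F_r. -/
section aux
variable {p : ℕ} [Fact p.Prime] {ζ : ℂ} (hζ : IsPrimitiveRoot ζ p)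
include hζ

lemma aux_pow_mod (n : ℕ) : ζ ^ n = ζ ^ (n % p) := by
  conv_lhs => rw [← Nat.mod_add_div n p]
  rw [pow_add, pow_mul, hζ.pow_eq_one, one_pow, mul_one]

lemma aux_psi_add (u v : ZMod p) : ζ ^ (u + v).val = ζ ^ u.val * ζ ^ v.val := by
  rw [← pow_add, ZMod.val_add, ← aux_pow_mod hζ]

lemma aux_psi_ne_one {u : ZMod p} (hu : u ≠ 0) : ζ ^ u.val ≠ 1 := by
  apply hζ.pow_ne_one_of_pos_of_lt _ (ZMod.val_lt u)
  exact (fun h => hu (by rwa [← ZMod.val_eq_zero]))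

lemma aux_sum_zmod : ∑ c : ZMod p, ζ ^ c.val = 0 := by
  have hp : 1 < p := (Fact.out : p.Prime).one_lt
  have : ∑ c : ZMod p, ζ ^ c.val = ∑ n ∈ Finset.range p, ζ ^ n := by
    apply Finset.sum_nbij' (i := fun c : ZMod p => c.val) (j := fun n : ℕ => (n : ZMod p))
    · intro c _; exact Finset.mem_range.mpr (ZMod.val_lt c)
    · intro n _; exact Finset.mem_univ _
    · intro c _; exact ZMod.natCast_rightInverse c
    · intro n hn; exact ZMod.val_cast_of_lt (Finset.mem_range.mp hn)
    · intro c _; rfl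
  rw [this, hζ.geom_sum_eq_zero hp]

lemma aux_sum_units : ∑ c ∈ Finset.univ.filter (fun c : ZMod p => c ≠ 0), ζ ^ c.val = -1 := by
  have h := Finset.sum_erase_add Finset.univ (fun c : ZMod p => ζ ^ c.val) (Finset.mem_univ 0)
  rw [aux_sum_zmod hζ] at h
  rw [Finset.filter_ne']
  have h0 : ζ ^ (0 : ZMod p).val = 1 := by rw [ZMod.val_zero, pow_zero]
  simp only [h0] at h
  linear_combination h

lemma aux_sum_mul {t : ZMod p} (ht : t ≠ 0) :
    ∑ δ ∈ Finset.univ.filter (fun δ : ZMod p => δ ≠ 0), ζ ^ (δ * t).val = -1 := by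
  rw [← aux_sum_units hζ]
  apply Finset.sum_nbij' (i := fun δ : ZMod p => δ * t) (j := fun c : ZMod p => c * t⁻¹)
  · intro δ hδ
    simp only [Finset.mem_filter, Finset.mem_univ, true_and] at *
    exact mul_ne_zero hδ ht
  · intro c hc
    simp only [Finset.mem_filter, Finset.mem_univ, true_and] at *
    exact mul_ne_zero hc (inv_ne_zero ht)
  · intro δ _; field_simp
  · intro c _; field_simp
  · intro δ _; rfl

lemma aux_sum_inv {t : ZMod p} (ht : t ≠ 0) :
    ∑ z ∈ Finset.univ.filter (fun z : ZMod p => z ≠ 0), ζ ^ (t * z⁻¹).val = -1 := by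
  rw [← aux_sum_mul hζ ht]
  apply Finset.sum_nbij' (i := fun z : ZMod p => z⁻¹) (j := fun w : ZMod p => w⁻¹)
  · intro z hz
    simp only [Finset.mem_filter, Finset.mem_univ, true_and] at *
    exact inv_ne_zero hz
  · intro w hw
    simp only [Finset.mem_filter, Finset.mem_univ, true_and] at *
    exact inv_ne_zero hw
  · intro z _; simp
  · intro w _; simp
  · intro z _; rw [mul_comm]

end aux

lemma aux_isSquare {p m : ℕ} [Fact p.Prime] (hodd : p ≠ 2) (hme : Even m)
    {F : Type} [Field F] [Fintype F] [Algebra (ZMod p) F] (hcard : Fintype.card F = p ^ m)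
    (z : ZMod p) : IsSquare (algebraMap (ZMod p) F z) := by
  rcases eq_or_ne z 0 with rfl | hz
  · exact ⟨0, by simp⟩
  have hp : p.Prime := Fact.out
  have hinj : Function.Injective (algebraMap (ZMod p) F) := (algebraMap (ZMod p) F).injective
  have hch : CharP F p := charP_of_injective_algebraMap hinj p
  have hrc : ringChar F = p := ringChar.eq F p
  have hrc2 : ringChar F ≠ 2 := by rw [hrc]; exact hodd
  set c := algebraMap (ZMod p) F z with hcdef
  have hc : c ≠ 0 := fun h => hz (hinj (by rw [map_zero]; exact h))
  rw [FiniteField.isSquare_iff hrc2 hc]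
  obtain ⟨k, hk⟩ := hme
  have hk' : m = 2 * k := by omega
  have h1 : p ^ 2 - 1 ∣ p ^ m - 1 := by
    rw [hk', pow_mul]
    simpa using Nat.sub_dvd_pow_sub_pow (p ^ 2) 1 k
  have h2 : 2 * (p - 1) ∣ p ^ 2 - 1 := by
    obtain ⟨j, hj⟩ := hp.odd_of_ne_two hodd
    refine ⟨j + 1, ?_⟩
    have hsq : p ^ 2 = 4 * j ^ 2 + 4 * j + 1 := by rw [hj]; ring
    have hrhs : 2 * (p - 1) * (j + 1) = 4 * j ^ 2 + 4 * j := by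
      have e1 : p - 1 = 2 * j := by omega
      rw [e1]; ring
    rw [hrhs, hsq]
    simp
  obtain ⟨t, ht⟩ := h2.trans h1
  have ht' : p ^ m - 1 = 2 * ((p - 1) * t) := by rw [ht]; ring
  have hP : 1 ≤ p ^ m := Nat.one_le_pow _ _ hp.pos
  have key : Fintype.card F / 2 = (p - 1) * t := by
    rw [hcard]
    have h3 : ∀ P q : ℕ, 1 ≤ P → P - 1 = 2 * q → P / 2 = q := by intros; omega
    exact h3 _ _ hP ht'
  rw [key, pow_mul, hcdef, ← map_pow, ZMod.pow_card_sub_one_eq_one hz, map_one, one_pow]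

section Fsum
variable {p : ℕ} [Fact p.Prime] {ζ : ℂ} (hζ : IsPrimitiveRoot ζ p)
variable {F : Type} [Field F] [Fintype F] [DecidableEq F] [Algebra (ZMod p) F]

local notation "T" => Algebra.trace (ZMod p) F

include hζ

lemma aux_sum_F (w : F) (hw : T w ≠ 0) : ∑ x : F, ζ ^ (T x).val = 0 := by
  have hshift : ∑ x : F, ζ ^ (T (x + w)).val = ∑ x : F, ζ ^ (T x).val :=
    Fintype.sum_equiv (Equiv.addRight w) _ _ (fun x => rfl)
  simp only [map_add, aux_psi_add hζ] at hshift
  rw [← Finset.sum_mul] at hshift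
  have hne : ζ ^ (T w).val ≠ 1 := aux_psi_ne_one hζ hw
  by_contra h
  exact hne (mul_left_cancel₀ h (by rw [hshift, mul_one]))

lemma aux_sum_F_scaled (w : F) (hw : T w ≠ 0) {c : F} (hc : c ≠ 0) :
    ∑ x : F, ζ ^ (T (c * x)).val = 0 :=
  (Fintype.sum_equiv (Equiv.mulLeft₀ c hc) _ _ (fun x => rfl)).trans (aux_sum_F hζ w hw)

lemma aux_gauss (hrc2 : ringChar F ≠ 2) (w : F) (hw : T w ≠ 0)
    {c : F} (hc : c ≠ 0) (hcsq : IsSquare c) :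
    ∑ x : F, ζ ^ (T (c * x ^ 2)).val
      = ∑ u ∈ Finset.univ.filter (fun u : F => u ≠ 0),
          ((quadraticChar F u : ℤ) : ℂ) * ζ ^ (T u).val := by
  have step1 : ∑ x : F, ζ ^ (T (c * x ^ 2)).val
      = ∑ t : F, ∑ _x ∈ Finset.univ.filter (fun x : F => x ^ 2 = t), ζ ^ (T (c * t)).val :=
    (Finset.sum_fiberwise' Finset.univ (fun x : F => x ^ 2) (fun t => ζ ^ (T (c * t)).val)).symm
  have step2 : ∀ t : F, ∑ _x ∈ Finset.univ.filter (fun x : F => x ^ 2 = t), ζ ^ (T (c * t)).val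
      = (((quadraticChar F t : ℤ) : ℂ) + 1) * ζ ^ (T (c * t)).val := by
    intro t
    rw [Finset.sum_const, nsmul_eq_mul]
    congr 1
    have hqc := quadraticChar_card_sqrts hrc2 t
    have hset : ({x : F | x ^ 2 = t}.toFinset) = Finset.univ.filter (fun x : F => x ^ 2 = t) := by
      ext x; simp
    rw [hset] at hqc
    exact_mod_cast hqc
  rw [step1, Finset.sum_congr rfl (fun t _ => step2 t)]
  simp only [add_mul, one_mul]
  rw [Finset.sum_add_distrib, aux_sum_F_scaled hζ w hw hc, add_zero]
  have hsub : ∑ t : F, ((quadraticChar F t : ℤ) : ℂ) * ζ ^ (T (c * t)).val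
      = ∑ u : F, ((quadraticChar F u : ℤ) : ℂ) * ζ ^ (T u).val := by
    apply Fintype.sum_equiv (Equiv.mulLeft₀ c hc)
    intro t
    show ((quadraticChar F t : ℤ) : ℂ) * ζ ^ (T (c * t)).val
        = ((quadraticChar F (c * t) : ℤ) : ℂ) * ζ ^ (T (c * t)).val
    congr 2
    rw [map_mul, (quadraticChar_one_iff_isSquare hc).mpr hcsq, one_mul]
  rw [hsub]
  symm
  apply Finset.sum_filter_of_ne
  intro u _ hne h0
  apply hne
  rw [h0]
  simp [quadraticChar_zero]

end Fsum
/-- For `m` even and `Tr(a²) ≠ 0` (`a ≠ 0`), the sum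
`Ω₃ = ∑_{x∈F_r} ∑_{z∈F_p^*} ζ^{z Tr(x²)} ∑_{δ∈F_p^*} ζ^{δ(Tr(ax)-ρ)}` equals `G_m`. -/
theorem stmt6 (p m : ℕ) [Fact p.Prime] (hodd : p ≠ 2) (hm : 0 < m) (hme : Even m)
    (F : Type) [Field F] [Fintype F] [DecidableEq F] [Algebra (ZMod p) F]
    (hcard : Fintype.card F = p ^ m)
    (ζ : ℂ) (hζ : IsPrimitiveRoot ζ p)
    (ηm : F → ℂ)
    (hηm : ∀ a : F, ηm a = if a = 0 then 0 else if IsSquare a then 1 else -1)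
    (Gm : ℂ)
    (hGm : Gm = ∑ x ∈ Finset.univ.filter (fun x : F => x ≠ 0),
        ηm x * ζ ^ (Algebra.trace (ZMod p) F x).val)
    (a : F) (ha : a ≠ 0) (hA : Algebra.trace (ZMod p) F (a ^ 2) ≠ 0)
    (ρ : ZMod p) (hρ : ρ ≠ 0)
    (Ω₃ : ℂ)
    (hΩ : Ω₃ = ∑ x : F, ∑ z ∈ Finset.univ.filter (fun z : ZMod p => z ≠ 0),
        ∑ δ ∈ Finset.univ.filter (fun δ : ZMod p => δ ≠ 0),
          ζ ^ (z * Algebra.trace (ZMod p) F (x ^ 2)).val *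
            ζ ^ (δ * (Algebra.trace (ZMod p) F (a * x) - ρ)).val) :
    Ω₃ = Gm := by
  classical
  have hp : p.Prime := Fact.out
  have hinj : Function.Injective (algebraMap (ZMod p) F) := (algebraMap (ZMod p) F).injective
  have hch : CharP F p := charP_of_injective_algebraMap hinj p
  have hrc : ringChar F = p := ringChar.eq F p
  have hrc2 : ringChar F ≠ 2 := by rw [hrc]; exact hodd
  set T := Algebra.trace (ZMod p) F with hTdef
  set A := T (a ^ 2) with hAdef
  clear_value T A
  have hA0 : Algebra.trace (ZMod p) F (a ^ 2) ≠ 0 := by rw [← hTdef, ← hAdef]; exact hA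
  -- small characteristic facts
  have h2Z : (2 : ZMod p) ≠ 0 := by
    have h : ((2 : ℕ) : ZMod p) ≠ 0 := by
      rw [Ne, ZMod.natCast_eq_zero_iff]
      exact fun h => hodd ((Nat.prime_dvd_prime_iff_eq hp Nat.prime_two).mp h)
    simpa using h
  have h4Z : (4 : ZMod p) ≠ 0 := by
    have h : (4 : ZMod p) = 2 * 2 := by norm_num
    rw [h]; exact mul_ne_zero h2Z h2Z
  have h2F : (2 : F) ≠ 0 := by
    have h : (2 : F) = algebraMap (ZMod p) F 2 := by rw [map_ofNat]
    rw [h]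
    exact fun hh => h2Z (hinj (by rw [map_zero]; exact hh))
  have h4F : (4 : F) ≠ 0 := by
    have h : (4 : F) = algebraMap (ZMod p) F 4 := by rw [map_ofNat]
    rw [h]
    exact fun hh => h4Z (hinj (by rw [map_zero]; exact hh))
  -- Gm in quadratic character form
  have hGm' : Gm = ∑ u ∈ Finset.univ.filter (fun u : F => u ≠ 0),
      ((quadraticChar F u : ℤ) : ℂ) * ζ ^ (T u).val := by
    rw [hGm]
    refine Finset.sum_congr rfl (fun u _ => ?_)
    congr 1
    rw [hηm u]
    simp only [quadraticChar_apply, quadraticCharFun]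
    split_ifs <;> norm_num
  -- the inner Gauss sum evaluation
  have inner : ∀ z : ZMod p, z ≠ 0 → ∀ δ : ZMod p, δ ≠ 0 →
      (∑ x : F, ζ ^ (z * T (x ^ 2)).val * ζ ^ (δ * (T (a * x) - ρ)).val)
        = ζ ^ ((δ * (-ρ)).val) * (ζ ^ ((-(δ ^ 2 * A) / 4 * z⁻¹).val) * Gm) := by
    intro z hz δ hδ
    set c := algebraMap (ZMod p) F z with hcdef
    have hc : c ≠ 0 := fun h => hz (hinj (by rw [map_zero]; exact h))
    set b := algebraMap (ZMod p) F δ * a with hbdef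
    -- rewrite each summand
    have step_term : ∀ x : F,
        ζ ^ (z * T (x ^ 2)).val * ζ ^ (δ * (T (a * x) - ρ)).val
          = ζ ^ (T (c * x ^ 2 + b * x)).val * ζ ^ ((δ * (-ρ)).val) := by
      intro x
      have e1 : z * T (x ^ 2) = T (c * x ^ 2) := by
        rw [hcdef, ← Algebra.smul_def, map_smul, smul_eq_mul]
      have e2 : δ * (T (a * x) - ρ) = T (b * x) + δ * (-ρ) := by
        have hb : b * x = δ • (a * x) := by rw [Algebra.smul_def, hbdef]; ring
        rw [hb, map_smul, smul_eq_mul]; ring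
      rw [e1, e2, map_add, aux_psi_add hζ, aux_psi_add hζ]
      ring
    rw [Finset.sum_congr rfl (fun x _ => step_term x), ← Finset.sum_mul]
    -- complete the square
    have key : ∀ y : F, c * (y - b / (2 * c)) ^ 2 + b * (y - b / (2 * c))
        = c * y ^ 2 + -(b ^ 2) / (4 * c) := by
      intro y
      field_simp
      ring
    have hshift : ∑ x : F, ζ ^ (T (c * x ^ 2 + b * x)).val
        = (∑ y : F, ζ ^ (T (c * y ^ 2)).val) * ζ ^ (T (-(b ^ 2) / (4 * c))).val := by
      have e := Fintype.sum_equiv (Equiv.subRight (b / (2 * c)))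
          (fun y : F => ζ ^ (T (c * (y - b / (2 * c)) ^ 2 + b * (y - b / (2 * c)))).val)
          (fun x : F => ζ ^ (T (c * x ^ 2 + b * x)).val)
          (fun y => rfl)
      rw [← e, Finset.sum_mul]
      refine Finset.sum_congr rfl (fun y _ => ?_)
      simp only [key y, map_add, aux_psi_add hζ]
    -- evaluate the pure quadratic sum
    have hgauss : ∑ y : F, ζ ^ (T (c * y ^ 2)).val = Gm := by
      rw [hGm']
      rw [hTdef]
      exact aux_gauss hζ hrc2 (a ^ 2) hA0 hc (aux_isSquare hodd hme hcard z)
    -- evaluate the trace of the correction term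
    have hTq : T (-(b ^ 2) / (4 * c)) = -(δ ^ 2 * A) / 4 * z⁻¹ := by
      have hq : -(b ^ 2) / (4 * c) = (-(δ ^ 2) / (4 * z)) • a ^ 2 := by
        rw [Algebra.smul_def, map_div₀, map_neg, map_pow, map_mul, map_ofNat, hbdef, ← hcdef]
        field_simp
      rw [hq, map_smul, smul_eq_mul, ← hAdef]
      field_simp
    rw [hshift, hgauss, hTq]
    ring
  -- assemble
  rw [hΩ, Finset.sum_comm]
  have hswap : ∀ z ∈ Finset.univ.filter (fun z : ZMod p => z ≠ 0),
      (∑ x : F, ∑ δ ∈ Finset.univ.filter (fun δ : ZMod p => δ ≠ 0),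
          ζ ^ (z * T (x ^ 2)).val * ζ ^ (δ * (T (a * x) - ρ)).val)
        = ∑ δ ∈ Finset.univ.filter (fun δ : ZMod p => δ ≠ 0),
            ζ ^ ((δ * (-ρ)).val) * (ζ ^ ((-(δ ^ 2 * A) / 4 * z⁻¹).val) * Gm) := by
    intro z hz
    simp only [Finset.mem_filter, Finset.mem_univ, true_and] at hz
    rw [Finset.sum_comm]
    exact Finset.sum_congr rfl (fun δ hδ => by
      simp only [Finset.mem_filter, Finset.mem_univ, true_and] at hδ
      exact inner z hz δ hδ)
  rw [Finset.sum_congr rfl hswap, Finset.sum_comm]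
  have hzsum : ∀ δ : ZMod p, δ ≠ 0 →
      (∑ z ∈ Finset.univ.filter (fun z : ZMod p => z ≠ 0),
          ζ ^ ((δ * (-ρ)).val) * (ζ ^ ((-(δ ^ 2 * A) / 4 * z⁻¹).val) * Gm))
        = ζ ^ ((δ * (-ρ)).val) * (-Gm) := by
    intro δ hδ
    have htδ : -(δ ^ 2 * A) / 4 ≠ 0 :=
      div_ne_zero (neg_ne_zero.mpr (mul_ne_zero (pow_ne_zero 2 hδ) hA)) h4Z
    have step1 : (∑ z ∈ Finset.univ.filter (fun z : ZMod p => z ≠ 0),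
            ζ ^ ((δ * (-ρ)).val) * (ζ ^ ((-(δ ^ 2 * A) / 4 * z⁻¹).val) * Gm))
        = (ζ ^ ((δ * (-ρ)).val) * Gm) *
            ∑ z ∈ Finset.univ.filter (fun z : ZMod p => z ≠ 0),
              ζ ^ ((-(δ ^ 2 * A) / 4 * z⁻¹).val) := by
      rw [Finset.mul_sum]
      exact Finset.sum_congr rfl (fun z _ => by ring)
    rw [step1, aux_sum_inv hζ htδ]
    ring
  rw [Finset.sum_congr rfl (fun δ hδ => hzsum δ (by
    simpa using (Finset.mem_filter.mp hδ).2))]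
  rw [← Finset.sum_mul, aux_sum_mul hζ (neg_ne_zero.mpr hρ)]
  ring
end

section
/- Let p be an odd prime, r = p^m with m odd, and a ∈ F_r^* with A := Tr(a²). Let ρ ∈ F_p^* and Ω₃ = Σ_{x∈F_r} Σ_{z∈F_p^*} ζ_p^{z·Tr(x²)} Σ_{δ∈F_p^*} ζ_p^{δ(Tr(ax)-ρ)}. Then Ω₃ = 0 if A = 0, and Ω₃ = -η(-A)·G_m·G if A ≠ 0, where η is the quadratic character of F_p, G its Gauss sum over F_p, and G_m the quadratic Gauss sum over F_r. -/
open Finset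

section AuxZMod

variable {p : ℕ} [Fact p.Prime] {ζ : ℂ}

lemma psi_add (hζ : IsPrimitiveRoot ζ p) (a b : ZMod p) :
    ζ ^ (a + b).val = ζ ^ a.val * ζ ^ b.val := by
  rw [← pow_add, ZMod.val_add, ← pow_eq_pow_mod _ hζ.pow_eq_one]

lemma psi_zero (hζ : IsPrimitiveRoot ζ p) : ζ ^ (0 : ZMod p).val = 1 := by
  rw [ZMod.val_zero, pow_zero]

lemma psi_ne_one (hζ : IsPrimitiveRoot ζ p) {a : ZMod p} (ha : a ≠ 0) :
    ζ ^ a.val ≠ 1 := by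
  intro h
  rw [hζ.pow_eq_one_iff_dvd] at h
  have h0 : a.val = 0 := Nat.eq_zero_of_dvd_of_lt h (ZMod.val_lt a)
  exact ha ((ZMod.val_eq_zero a).mp h0)

lemma sum_psi_mul (hζ : IsPrimitiveRoot ζ p) {b : ZMod p} (hb : b ≠ 0) :
    ∑ n : ZMod p, ζ ^ (b * n).val = 0 := by
  set S := ∑ n : ZMod p, ζ ^ (b * n).val with hS
  have h1 : ∑ n : ZMod p, ζ ^ (b * (n + 1)).val = S :=
    Fintype.sum_equiv (Equiv.addRight 1) _ _ (fun n => rfl)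
  have h2 : ∑ n : ZMod p, ζ ^ (b * (n + 1)).val = S * ζ ^ b.val := by
    rw [hS, Finset.sum_mul]
    refine Finset.sum_congr rfl fun n _ => ?_
    rw [mul_add, mul_one, psi_add hζ]
  have h3 : S * (ζ ^ b.val - 1) = 0 := by
    rw [mul_sub, mul_one, ← h2, h1]
    exact sub_self S
  rcases mul_eq_zero.mp h3 with h | h
  · exact h
  · exact absurd (by linear_combination h) (psi_ne_one hζ hb)

lemma sum_psi_mul_filter (hζ : IsPrimitiveRoot ζ p) {b : ZMod p} (hb : b ≠ 0) :
    ∑ n ∈ Finset.univ.filter (fun n : ZMod p => n ≠ 0), ζ ^ (b * n).val = -1 := by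
  rw [Finset.filter_ne', Finset.sum_erase_eq_sub (Finset.mem_univ 0), sum_psi_mul hζ hb,
    mul_zero, psi_zero hζ]
  ring

end AuxZMod

section AuxEta

variable {K : Type} [Field K] [Fintype K] [DecidableEq K] {ηf : K → ℂ}
  (hf : ∀ a : K, ηf a = if a = 0 then 0 else if IsSquare a then 1 else -1)

include hf

lemma eta_eq_quadChar (a : K) : ηf a = ((quadraticChar K a : ℤ) : ℂ) := by
  rw [hf, quadraticChar_apply, quadraticCharFun]
  split_ifs <;> norm_num

lemma eta_zero : ηf 0 = 0 := by simp [hf]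

lemma eta_one : ηf 1 = 1 := by simp [hf, IsSquare.one]

lemma eta_mul (x y : K) : ηf (x * y) = ηf x * ηf y := by
  rw [eta_eq_quadChar hf, eta_eq_quadChar hf, eta_eq_quadChar hf, map_mul]
  push_cast
  ring

lemma eta_inv (x : K) : ηf x⁻¹ = ηf x := by
  by_cases hx : x = 0
  · simp [hx]
  · have h1 : ηf x * ηf x⁻¹ = 1 := by
      rw [← eta_mul hf, mul_inv_cancel₀ hx, eta_one hf]
    have h2 : ηf x * ηf x = 1 := by
      rw [hf]
      simp only [hx, if_false]
      split_ifs <;> norm_num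
    have hne : ηf x ≠ 0 := by
      intro h; rw [h, zero_mul] at h1; exact one_ne_zero h1.symm
    exact mul_left_cancel₀ hne (h1.trans h2.symm)

lemma eta_sq {x : K} (hx : x ≠ 0) : ηf (x ^ 2) = 1 := by
  rw [eta_eq_quadChar hf, quadraticChar_sq_one' hx]
  norm_num

lemma eta_sum_zero (hK : ringChar K ≠ 2) : ∑ x : K, ηf x = 0 := by
  have := quadraticChar_sum_zero hK
  calc ∑ x : K, ηf x = ∑ x : K, ((quadraticChar K x : ℤ) : ℂ) :=
        Finset.sum_congr rfl fun x _ => eta_eq_quadChar hf x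
    _ = (((∑ x : K, quadraticChar K x : ℤ)) : ℂ) := by push_cast; ring
    _ = 0 := by rw [this]; norm_num

end AuxEta

section AuxSq

variable {K : Type} [Field K] [Fintype K] [DecidableEq K]

lemma sum_sq_decomp (h2 : (2 : K) ≠ 0) (f : K → ℂ) :
    ∑ x : K, f (x ^ 2) = ∑ y : K, f y
      + ∑ y : K, (if y = 0 then 0 else if IsSquare y then (1 : ℂ) else -1) * f y := by
  have key : ∀ y : K, ((Finset.univ.filter fun x : K => x ^ 2 = y).card : ℂ)
      = 1 + (if y = 0 then 0 else if IsSquare y then (1 : ℂ) else -1) := by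
    intro y
    by_cases hy : y = 0
    · subst hy
      have h : (Finset.univ.filter fun x : K => x ^ 2 = 0) = {0} := by
        ext x; simp [pow_eq_zero_iff]
      rw [h]
      simp
    · by_cases hs : IsSquare y
      · obtain ⟨c, rfl⟩ := hs
        have hc : c ≠ 0 := by rintro rfl; simp at hy
        have hcc : c ≠ -c := by
          intro h
          have : (2 : K) * c = 0 := by linear_combination h
          exact hc ((mul_eq_zero.mp this).resolve_left h2)
        have h : (Finset.univ.filter fun x : K => x ^ 2 = c * c) = {c, -c} := by
          ext x
          simp only [Finset.mem_filter, Finset.mem_univ, true_and, Finset.mem_insert,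
            Finset.mem_singleton]
          constructor
          · intro h
            have h' : (x - c) * (x + c) = 0 := by linear_combination h
            rcases mul_eq_zero.mp h' with h'' | h''
            · left; exact sub_eq_zero.mp h''
            · right; exact eq_neg_of_add_eq_zero_left h''
          · rintro (rfl | rfl) <;> ring
        rw [h, Finset.card_insert_of_notMem (by simpa using hcc), Finset.card_singleton]
        have hsq : IsSquare (c * c) := ⟨c, rfl⟩
        simp only [hy, if_false, hsq, if_true]
        norm_num
      · have h : (Finset.univ.filter fun x : K => x ^ 2 = y) = ∅ := by
          ext x
          simp only [Finset.mem_filter, Finset.mem_univ, true_and, Finset.notMem_empty,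
            iff_false]
          intro h
          exact hs ⟨x, by rw [← h]; ring⟩
        simp [h, hy, hs]
  calc ∑ x : K, f (x ^ 2)
      = ∑ y : K, ∑ x ∈ Finset.univ.filter (fun x : K => x ^ 2 = y), f y := by
        rw [Finset.sum_fiberwise_of_maps_to' (fun x _ => Finset.mem_univ (x ^ 2)) f]
        all_goals simp
    _ = ∑ y : K, ((Finset.univ.filter fun x : K => x ^ 2 = y).card : ℂ) * f y := by
        refine Finset.sum_congr rfl fun y _ => ?_
        rw [Finset.sum_const, nsmul_eq_mul]
    _ = ∑ y : K, (1 + (if y = 0 then 0 else if IsSquare y then (1 : ℂ) else -1)) * f y := by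
        refine Finset.sum_congr rfl fun y _ => ?_
        rw [key y]
    _ = _ := by
        rw [← Finset.sum_add_distrib]
        refine Finset.sum_congr rfl fun y _ => ?_
        ring

end AuxSq

section AuxAlg

variable {p m : ℕ} [Fact p.Prime] {F : Type} [Field F] [Fintype F] [DecidableEq F]
  [Algebra (ZMod p) F]

lemma exists_trace_ne_zero : ∃ c : F, Algebra.trace (ZMod p) F c ≠ 0 := by
  have : FiniteDimensional (ZMod p) F := Module.Finite.of_finite
  obtain ⟨c, hc⟩ := Algebra.trace_surjective (ZMod p) F 1
  exact ⟨c, by rw [hc]; exact one_ne_zero⟩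

lemma sum_EF_one {ζ : ℂ} (hζ : IsPrimitiveRoot ζ p) :
    ∑ x : F, ζ ^ (Algebra.trace (ZMod p) F x).val = 0 := by
  obtain ⟨c, hc⟩ := exists_trace_ne_zero (p := p) (F := F)
  set S := ∑ x : F, ζ ^ (Algebra.trace (ZMod p) F x).val with hS
  have h1 : ∑ x : F, ζ ^ (Algebra.trace (ZMod p) F (x + c)).val = S :=
    Fintype.sum_equiv (Equiv.addRight c) _ _ (fun x => rfl)
  have h2 : ∑ x : F, ζ ^ (Algebra.trace (ZMod p) F (x + c)).val
      = S * ζ ^ (Algebra.trace (ZMod p) F c).val := by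
    rw [hS, Finset.sum_mul]
    refine Finset.sum_congr rfl fun x _ => ?_
    rw [map_add, psi_add hζ]
  have h3 : S * (ζ ^ (Algebra.trace (ZMod p) F c).val - 1) = 0 := by
    rw [mul_sub, mul_one, ← h2, h1]
    exact sub_self S
  rcases mul_eq_zero.mp h3 with h | h
  · exact h
  · exact absurd (by linear_combination h) (psi_ne_one hζ hc)

lemma sum_EF_mul {ζ : ℂ} (hζ : IsPrimitiveRoot ζ p) {b : F} (hb : b ≠ 0) :
    ∑ x : F, ζ ^ (Algebra.trace (ZMod p) F (b * x)).val = 0 := by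
  rw [Fintype.sum_equiv (Equiv.mulLeft₀ b hb)
    (fun x => ζ ^ (Algebra.trace (ZMod p) F (b * x)).val)
    (fun x => ζ ^ (Algebra.trace (ZMod p) F x).val) (fun x => rfl)]
  exact sum_EF_one hζ

lemma odd_geom_sum (hodd : p ≠ 2) {m : ℕ} (hmo : Odd m) :
    Odd (∑ i ∈ Finset.range m, p ^ i) := by
  have hp : p % 2 = 1 := Nat.odd_iff.mp ((Fact.out : p.Prime).odd_of_ne_two hodd)
  rcases Nat.even_or_odd (∑ i ∈ Finset.range m, p ^ i) with he | ho
  · exfalso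
    have h2 : ((∑ i ∈ Finset.range m, p ^ i : ℕ) : ZMod 2) = 0 := by
      obtain ⟨k, hk⟩ := he
      rw [hk]; push_cast; ring_nf
      rw [show ((2:ZMod 2)) = 0 by decide]
      ring
    rw [Nat.cast_sum] at h2
    have h3 : ∀ i ∈ Finset.range m, ((p ^ i : ℕ) : ZMod 2) = 1 := by
      intro i _
      rw [Nat.cast_pow, show ((p : ZMod 2)) = 1 from ?_, one_pow]
      · rw [← Nat.mod_add_div p 2, hp]; push_cast
        rw [show ((2:ZMod 2)) = 0 by decide]; ring
    rw [Finset.sum_congr rfl h3, Finset.sum_const, Finset.card_range, nsmul_eq_mul, mul_one] at h2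
    have hm1 : m % 2 = 1 := Nat.odd_iff.mp hmo
    rw [← Nat.mod_add_div m 2, hm1] at h2
    push_cast at h2
    rw [show ((2:ZMod 2)) = 0 by decide] at h2
    simp at h2
  · exact ho

lemma geom_sum_nat (hp : 1 ≤ p) (m : ℕ) :
    (p - 1) * (∑ i ∈ Finset.range m, p ^ i) = p ^ m - 1 := by
  have hZ : ((p : ℤ) - 1) * (∑ i ∈ Finset.range m, (p : ℤ) ^ i) = (p : ℤ) ^ m - 1 := by
    rw [mul_comm, geom_sum_mul]
  have h1 : (1 : ℕ) ≤ p ^ m := Nat.one_le_pow _ _ hp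
  have : (((p - 1) * (∑ i ∈ Finset.range m, p ^ i) : ℕ) : ℤ) = ((p ^ m - 1 : ℕ) : ℤ) := by
    push_cast [Nat.cast_sub hp, Nat.cast_sub h1]
    exact hZ
  exact_mod_cast this

lemma isSquare_algebraMap_iff (hodd : p ≠ 2) {m : ℕ} (hmo : Odd m)
    (hcard : Fintype.card F = p ^ m) {z : ZMod p} (hz : z ≠ 0) :
    IsSquare (algebraMap (ZMod p) F z) ↔ IsSquare z := by
  have hp : p.Prime := Fact.out
  have hchar : CharP F p := charP_of_injective_algebraMap (algebraMap (ZMod p) F).injective p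
  constructor
  · rintro ⟨w, hw⟩
    by_contra hns
    have hp2 : p % 2 = 1 := Nat.odd_iff.mp (hp.odd_of_ne_two hodd)
    have h1 : (z ^ (p / 2)) ^ 2 = 1 := by
      rw [← pow_mul, show p / 2 * 2 = p - 1 by omega]
      exact ZMod.pow_card_sub_one_eq_one hz
    have h2 : z ^ (p / 2) = -1 := by
      rcases sq_eq_one_iff.mp h1 with h | h
      · exact absurd ((ZMod.euler_criterion p hz).mpr h) hns
      · exact h
    set zA := algebraMap (ZMod p) F z with hzA
    have hzA0 : zA ≠ 0 := fun h => hz ((map_eq_zero _).mp h)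
    have hw0 : w ≠ 0 := by rintro rfl; rw [mul_zero] at hw; exact hzA0 hw
    obtain ⟨k, hkdef⟩ : ∃ k, k = ∑ i ∈ Finset.range m, p ^ i := ⟨_, rfl⟩
    have hkodd : Odd k := hkdef ▸ odd_geom_sum hodd hmo
    have e1 : zA ^ (p / 2 * k) = -1 := by
      rw [pow_mul, hzA, ← map_pow, h2]
      rw [map_neg, map_one]
      exact Odd.neg_one_pow hkodd
    have e2 : zA ^ (p / 2 * k) = 1 := by
      have hgeo : (p - 1) * k = p ^ m - 1 := hkdef ▸ geom_sum_nat hp.one_lt.le m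
      have hexp : 2 * (p / 2 * k) = p ^ m - 1 := by
        rw [← hgeo, ← mul_assoc, show 2 * (p / 2) = p - 1 by omega]
      calc zA ^ (p / 2 * k) = (w * w) ^ (p / 2 * k) := by rw [← hw]
        _ = w ^ (2 * (p / 2 * k)) := by rw [two_mul, pow_add, pow_mul']; ring
        _ = w ^ (p ^ m - 1) := by rw [hexp]
        _ = 1 := by
            have := FiniteField.pow_card_sub_one_eq_one w hw0
            rwa [hcard] at this
    rw [e1] at e2
    have : ringChar F ≠ 2 := by rw [ringChar.eq F p]; exact hodd
    exact Ring.neg_one_ne_one_of_char_ne_two this e2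
  · rintro ⟨s, rfl⟩
    exact ⟨algebraMap (ZMod p) F s, by rw [map_mul]⟩

end AuxAlg

set_option maxHeartbeats 1600000 in
/-- For `m` odd, `a ∈ F_r^*`, `A = Tr(a²)`:
`Ω₃ = 0` if `A = 0`, and `Ω₃ = -η(-A)·G_m·G` if `A ≠ 0`. -/
theorem stmt7 (p m : ℕ) [Fact p.Prime] (hodd : p ≠ 2) (hm : 0 < m) (hmo : Odd m)
    (F : Type) [Field F] [Fintype F] [DecidableEq F] [Algebra (ZMod p) F]
    (hcard : Fintype.card F = p ^ m)
    (ζ : ℂ) (hζ : IsPrimitiveRoot ζ p)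
    (ηm : F → ℂ)
    (hηm : ∀ a : F, ηm a = if a = 0 then 0 else if IsSquare a then 1 else -1)
    (η : ZMod p → ℂ)
    (hη : ∀ a : ZMod p, η a = if a = 0 then 0 else if IsSquare a then 1 else -1)
    (Gm : ℂ)
    (hGm : Gm = ∑ x ∈ Finset.univ.filter (fun x : F => x ≠ 0),
        ηm x * ζ ^ (Algebra.trace (ZMod p) F x).val)
    (G : ℂ)
    (hG : G = ∑ x ∈ Finset.univ.filter (fun x : ZMod p => x ≠ 0), η x * ζ ^ x.val)
    (a : F) (ha : a ≠ 0) (ρ : ZMod p) (hρ : ρ ≠ 0)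
    (Ω₃ : ℂ)
    (hΩ : Ω₃ = ∑ x : F, ∑ z ∈ Finset.univ.filter (fun z : ZMod p => z ≠ 0),
        ∑ δ ∈ Finset.univ.filter (fun δ : ZMod p => δ ≠ 0),
          ζ ^ (z * Algebra.trace (ZMod p) F (x ^ 2)).val *
            ζ ^ (δ * (Algebra.trace (ZMod p) F (a * x) - ρ)).val) :
    (Algebra.trace (ZMod p) F (a ^ 2) = 0 → Ω₃ = 0) ∧
    (Algebra.trace (ZMod p) F (a ^ 2) ≠ 0 →
      Ω₃ = -η (-(Algebra.trace (ZMod p) F (a ^ 2))) * Gm * G) := by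
  have hp : p.Prime := Fact.out
  have hchar : CharP F p := charP_of_injective_algebraMap (algebraMap (ZMod p) F).injective p
  have hrcF : ringChar F ≠ 2 := by rw [ringChar.eq F p]; exact hodd
  have hrcp : ringChar (ZMod p) ≠ 2 := by rw [ZMod.ringChar_zmod_n]; exact hodd
  have h2F : (2 : F) ≠ 0 := Ring.two_ne_zero hrcF
  have h2p : (2 : ZMod p) ≠ 0 := Ring.two_ne_zero hrcp
  have h4p : (4 : ZMod p) ≠ 0 := by
    have : (4 : ZMod p) = 2 * 2 := by norm_num
    rw [this]; exact mul_ne_zero h2p h2p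
  have hηm0 : ηm 0 = 0 := eta_zero hηm
  have hηmmul : ∀ x y : F, ηm (x * y) = ηm x * ηm y := eta_mul hηm
  have hηminv : ∀ x : F, ηm x⁻¹ = ηm x := eta_inv hηm
  have hη0 : η 0 = 0 := eta_zero hη
  have hηmul : ∀ x y : ZMod p, η (x * y) = η x * η y := eta_mul hη
  have hηinv : ∀ x : ZMod p, η x⁻¹ = η x := eta_inv hη
  have hηsq : ∀ x : ZMod p, x ≠ 0 → η (x ^ 2) = 1 := fun x hx => eta_sq hη hx
  have hηsum : ∑ x : ZMod p, η x = 0 := eta_sum_zero hη hrcp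
  have hηmalg : ∀ z : ZMod p, ηm (algebraMap (ZMod p) F z) = η z := by
    intro z
    by_cases hz : z = 0
    · rw [hz, map_zero, hηm0, hη0]
    · have hzA : algebraMap (ZMod p) F z ≠ 0 := fun h => hz ((map_eq_zero _).mp h)
      rw [hηm, hη]
      simp only [hz, hzA, if_false]
      by_cases hsq : IsSquare z
      · rw [if_pos ((isSquare_algebraMap_iff hodd hmo hcard hz).mpr hsq), if_pos hsq]
      · rw [if_neg (fun h => hsq ((isSquare_algebraMap_iff hodd hmo hcard hz).mp h)),
          if_neg hsq]
  -- full-sum versions of the Gauss sums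
  have hGm' : ∑ y : F, ηm y * ζ ^ (Algebra.trace (ZMod p) F y).val = Gm := by
    rw [hGm, Finset.filter_ne', Finset.sum_erase_eq_sub (Finset.mem_univ 0), hηm0, zero_mul,
      sub_zero]
  have hG' : ∑ u : ZMod p, η u * ζ ^ u.val = G := by
    rw [hG, Finset.filter_ne', Finset.sum_erase_eq_sub (Finset.mem_univ 0), hη0, zero_mul,
      sub_zero]
  -- trace pulls out scalars
  have htr : ∀ (z : ZMod p) (y : F),
      Algebra.trace (ZMod p) F (algebraMap (ZMod p) F z * y) = z * Algebra.trace (ZMod p) F y := by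
    intro z y
    rw [← Algebra.smul_def, map_smul, smul_eq_mul]
  -- quadratic Gauss sum over F
  have hquad : ∀ b : F, b ≠ 0 →
      ∑ x : F, ζ ^ (Algebra.trace (ZMod p) F (b * x ^ 2)).val = ηm b * Gm := by
    intro b hb
    have hdec := sum_sq_decomp h2F (fun y => ζ ^ (Algebra.trace (ZMod p) F (b * y)).val)
    rw [hdec, sum_EF_mul hζ hb, zero_add]
    have hsub : ∑ y : F,
        (if y = 0 then 0 else if IsSquare y then (1 : ℂ) else -1) *
          ζ ^ (Algebra.trace (ZMod p) F (b * y)).val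
        = ∑ u : F, ηm (b⁻¹ * u) * ζ ^ (Algebra.trace (ZMod p) F u).val := by
      refine Fintype.sum_bijective (fun y => b * y) (Equiv.mulLeft₀ b hb).bijective _ _ fun y => ?_
      rw [inv_mul_cancel_left₀ hb, ← hηm y]
    rw [hsub]
    calc ∑ u : F, ηm (b⁻¹ * u) * ζ ^ (Algebra.trace (ZMod p) F u).val
        = ηm b⁻¹ * ∑ u : F, ηm u * ζ ^ (Algebra.trace (ZMod p) F u).val := by
          rw [Finset.mul_sum]
          exact Finset.sum_congr rfl fun u _ => by rw [hηmmul]; ring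
      _ = ηm b * Gm := by rw [hηminv, hGm']
  -- the inner x-sum, after completing the square
  have hx : ∀ (z δ : ZMod p), z ≠ 0 →
      ∑ x : F, ζ ^ (Algebra.trace (ZMod p) F
          (algebraMap (ZMod p) F z * x ^ 2 + algebraMap (ZMod p) F δ * (a * x))).val
      = η z * Gm * ζ ^ (-(δ ^ 2 * Algebra.trace (ZMod p) F (a ^ 2) / (4 * z))).val := by
    intro z δ hz
    have hzF : algebraMap (ZMod p) F z ≠ 0 := fun h => hz ((map_eq_zero _).mp h)
    have hid : ∀ x : F,
        algebraMap (ZMod p) F z * (x - algebraMap (ZMod p) F (δ / (2 * z)) * a) ^ 2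
          + algebraMap (ZMod p) F δ * (a * (x - algebraMap (ZMod p) F (δ / (2 * z)) * a))
        = algebraMap (ZMod p) F z * x ^ 2
          + algebraMap (ZMod p) F (-(δ ^ 2 / (4 * z))) * a ^ 2 := by
      intro x
      rw [map_div₀, map_neg, map_div₀, map_mul, map_pow, map_mul]
      rw [show ((algebraMap (ZMod p) F) (2 : ZMod p)) = (2 : F) from map_ofNat _ 2,
        show ((algebraMap (ZMod p) F) (4 : ZMod p)) = (4 : F) from map_ofNat _ 4]
      have h4F : (4 : F) ≠ 0 := by
        have h44 : (4 : F) = 2 * 2 := by norm_num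
        rw [h44]; exact mul_ne_zero h2F h2F
      field_simp [hzF, h4F]
      all_goals ring
    have hshift : ∑ x : F, ζ ^ (Algebra.trace (ZMod p) F
          (algebraMap (ZMod p) F z * x ^ 2 + algebraMap (ZMod p) F δ * (a * x))).val
        = ∑ x : F, ζ ^ (Algebra.trace (ZMod p) F
            (algebraMap (ZMod p) F z * (x - algebraMap (ZMod p) F (δ / (2 * z)) * a) ^ 2
              + algebraMap (ZMod p) F δ *
                (a * (x - algebraMap (ZMod p) F (δ / (2 * z)) * a)))).val := by
      refine Fintype.sum_equiv
        (Equiv.addRight (algebraMap (ZMod p) F (δ / (2 * z)) * a)) _ _ fun x => ?_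
      simp only [Equiv.coe_addRight, add_sub_cancel_right]
    rw [hshift]
    have hterm : ∀ x : F, ζ ^ (Algebra.trace (ZMod p) F
          (algebraMap (ZMod p) F z * (x - algebraMap (ZMod p) F (δ / (2 * z)) * a) ^ 2
            + algebraMap (ZMod p) F δ *
              (a * (x - algebraMap (ZMod p) F (δ / (2 * z)) * a)))).val
        = ζ ^ (Algebra.trace (ZMod p) F (algebraMap (ZMod p) F z * x ^ 2)).val *
            ζ ^ (-(δ ^ 2 * Algebra.trace (ZMod p) F (a ^ 2) / (4 * z))).val := by
      intro x
      rw [hid x, map_add, psi_add hζ, htr (-(δ ^ 2 / (4 * z))) (a ^ 2),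
        show -(δ ^ 2 / (4 * z)) * Algebra.trace (ZMod p) F (a ^ 2)
          = -(δ ^ 2 * Algebra.trace (ZMod p) F (a ^ 2) / (4 * z)) by ring]
    rw [Finset.sum_congr rfl fun x _ => hterm x, ← Finset.sum_mul, hquad _ hzF, hηmalg z]
  -- main reduction
  have hmain : Ω₃ = ∑ z ∈ Finset.univ.filter (fun z : ZMod p => z ≠ 0),
      ∑ δ ∈ Finset.univ.filter (fun δ : ZMod p => δ ≠ 0),
        η z * Gm * ζ ^ (-(δ ^ 2 * Algebra.trace (ZMod p) F (a ^ 2) / (4 * z))).val *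
          ζ ^ (-(δ * ρ)).val := by
    rw [hΩ, Finset.sum_comm]
    refine Finset.sum_congr rfl fun z hzm => ?_
    rw [Finset.sum_comm]
    refine Finset.sum_congr rfl fun δ hδm => ?_
    have hz0 : z ≠ 0 := (Finset.mem_filter.mp hzm).2
    have hterm : ∀ x : F,
        ζ ^ (z * Algebra.trace (ZMod p) F (x ^ 2)).val *
          ζ ^ (δ * (Algebra.trace (ZMod p) F (a * x) - ρ)).val
        = ζ ^ (Algebra.trace (ZMod p) F
            (algebraMap (ZMod p) F z * x ^ 2 + algebraMap (ZMod p) F δ * (a * x))).val *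
            ζ ^ (-(δ * ρ)).val := by
      intro x
      rw [map_add, psi_add hζ, htr z (x ^ 2), htr δ (a * x),
        show δ * (Algebra.trace (ZMod p) F (a * x) - ρ)
          = δ * Algebra.trace (ZMod p) F (a * x) + -(δ * ρ) by ring, psi_add hζ]
      ring
    rw [Finset.sum_congr rfl fun x _ => hterm x, ← Finset.sum_mul, hx z δ hz0]
  have hdelta : ∑ δ ∈ Finset.univ.filter (fun δ : ZMod p => δ ≠ 0), ζ ^ (-(δ * ρ)).val = -1 := by
    rw [Finset.sum_congr rfl fun δ _ => by rw [show -(δ * ρ) = (-ρ) * δ by ring]]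
    exact sum_psi_mul_filter hζ (neg_ne_zero.mpr hρ)
  constructor
  · intro hA
    rw [hmain]
    have : ∀ z ∈ Finset.univ.filter (fun z : ZMod p => z ≠ 0),
        ∑ δ ∈ Finset.univ.filter (fun δ : ZMod p => δ ≠ 0),
          η z * Gm * ζ ^ (-(δ ^ 2 * Algebra.trace (ZMod p) F (a ^ 2) / (4 * z))).val *
            ζ ^ (-(δ * ρ)).val
        = η z * Gm * (-1) := by
      intro z _
      have : ∀ δ : ZMod p,
          η z * Gm * ζ ^ (-(δ ^ 2 * Algebra.trace (ZMod p) F (a ^ 2) / (4 * z))).val *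
            ζ ^ (-(δ * ρ)).val = η z * Gm * ζ ^ (-(δ * ρ)).val := by
        intro δ
        rw [hA, show -(δ ^ 2 * (0 : ZMod p) / (4 * z)) = 0 by ring, psi_zero hζ]
        ring
      rw [Finset.sum_congr rfl fun δ _ => this δ, ← Finset.mul_sum, hdelta]
    rw [Finset.sum_congr rfl this]
    have hsz : ∑ z ∈ Finset.univ.filter (fun z : ZMod p => z ≠ 0), η z = 0 := by
      rw [Finset.filter_ne', Finset.sum_erase_eq_sub (Finset.mem_univ 0), hηsum, hη0, sub_zero]
    calc ∑ z ∈ Finset.univ.filter (fun z : ZMod p => z ≠ 0), η z * Gm * (-1)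
        = (∑ z ∈ Finset.univ.filter (fun z : ZMod p => z ≠ 0), η z) * (Gm * (-1)) := by
          rw [Finset.sum_mul]
          exact Finset.sum_congr rfl fun z _ => by ring
      _ = 0 := by rw [hsz, zero_mul]
  · intro hA
    rw [hmain, Finset.sum_comm]
    have hinner : ∀ δ : ZMod p, δ ≠ 0 →
        ∑ z ∈ Finset.univ.filter (fun z : ZMod p => z ≠ 0),
          η z * ζ ^ (-(δ ^ 2 * Algebra.trace (ZMod p) F (a ^ 2) / (4 * z))).val
        = η (-(Algebra.trace (ZMod p) F (a ^ 2))) * G := by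
      intro δ hδ
      have hc0 : -(δ ^ 2 * Algebra.trace (ZMod p) F (a ^ 2)) / 4 ≠ 0 :=
        div_ne_zero (neg_ne_zero.mpr (mul_ne_zero (pow_ne_zero 2 hδ) hA)) h4p
      set c : ZMod p := -(δ ^ 2 * Algebra.trace (ZMod p) F (a ^ 2)) / 4 with hc
      have e1 : ∑ z ∈ Finset.univ.filter (fun z : ZMod p => z ≠ 0),
          η z * ζ ^ (-(δ ^ 2 * Algebra.trace (ZMod p) F (a ^ 2) / (4 * z))).val
          = ∑ z ∈ Finset.univ.filter (fun z : ZMod p => z ≠ 0), η z * ζ ^ (c * z⁻¹).val := by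
        refine Finset.sum_congr rfl fun z hzm => ?_
        have hz0 : z ≠ 0 := (Finset.mem_filter.mp hzm).2
        rw [show -(δ ^ 2 * Algebra.trace (ZMod p) F (a ^ 2) / (4 * z)) = c * z⁻¹ by
          rw [hc]
          field_simp [hz0, h4p]
          all_goals ring]
      have e2 : ∑ z ∈ Finset.univ.filter (fun z : ZMod p => z ≠ 0), η z * ζ ^ (c * z⁻¹).val
          = ∑ z ∈ Finset.univ.filter (fun z : ZMod p => z ≠ 0), η z * ζ ^ (c * z).val := by
        refine Finset.sum_nbij' (fun z => z⁻¹) (fun z => z⁻¹) ?_ ?_ ?_ ?_ ?_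
        · intro z hzm
          simp only [Finset.mem_filter, Finset.mem_univ, true_and] at hzm ⊢
          exact inv_ne_zero hzm
        · intro z hzm
          simp only [Finset.mem_filter, Finset.mem_univ, true_and] at hzm ⊢
          exact inv_ne_zero hzm
        · intro z _; exact inv_inv z
        · intro z _; exact inv_inv z
        · intro z _
          simp only [hηinv]
      have e3 : ∑ z ∈ Finset.univ.filter (fun z : ZMod p => z ≠ 0), η z * ζ ^ (c * z).val
          = η c * G := by
        have hstep : ∑ z ∈ Finset.univ.filter (fun z : ZMod p => z ≠ 0), η z * ζ ^ (c * z).val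
            = ∑ u ∈ Finset.univ.filter (fun u : ZMod p => u ≠ 0), η (c⁻¹ * u) * ζ ^ u.val := by
          refine Finset.sum_nbij' (fun z => c * z) (fun u => c⁻¹ * u) ?_ ?_ ?_ ?_ ?_
          · intro z hzm
            simp only [Finset.mem_filter, Finset.mem_univ, true_and] at hzm ⊢
            exact mul_ne_zero hc0 hzm
          · intro u hum
            simp only [Finset.mem_filter, Finset.mem_univ, true_and] at hum ⊢
            exact mul_ne_zero (inv_ne_zero hc0) hum
          · intro z _; exact inv_mul_cancel_left₀ hc0 z
          · intro u _; exact mul_inv_cancel_left₀ hc0 u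
          · intro z _
            simp only [inv_mul_cancel_left₀ hc0]
        rw [hstep]
        calc ∑ u ∈ Finset.univ.filter (fun u : ZMod p => u ≠ 0), η (c⁻¹ * u) * ζ ^ u.val
            = η c⁻¹ * ∑ u ∈ Finset.univ.filter (fun u : ZMod p => u ≠ 0), η u * ζ ^ u.val := by
              rw [Finset.mul_sum]
              exact Finset.sum_congr rfl fun u _ => by rw [hηmul]; ring
          _ = η c * G := by rw [hηinv, ← hG]
      have e4 : η c = η (-(Algebra.trace (ZMod p) F (a ^ 2))) := by
        have h2inv : ((2 : ZMod p))⁻¹ ≠ 0 := inv_ne_zero h2p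
        rw [show c = -(Algebra.trace (ZMod p) F (a ^ 2)) * δ ^ 2 * ((2 : ZMod p)⁻¹) ^ 2 by
            rw [hc]
            have h422 : ((4 : ZMod p)) = 2 ^ 2 := by norm_num
            rw [h422]
            field_simp [h2p]
            all_goals ring]
        rw [hηmul, hηmul, hηsq δ hδ, hηsq _ h2inv, mul_one, mul_one]
      rw [e1, e2, e3, e4]
    have s1 : ∀ δ ∈ Finset.univ.filter (fun δ : ZMod p => δ ≠ 0),
        ∑ z ∈ Finset.univ.filter (fun z : ZMod p => z ≠ 0),
          η z * Gm * ζ ^ (-(δ ^ 2 * Algebra.trace (ZMod p) F (a ^ 2) / (4 * z))).val *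
            ζ ^ (-(δ * ρ)).val
        = η (-(Algebra.trace (ZMod p) F (a ^ 2))) * G * Gm * ζ ^ (-(δ * ρ)).val := by
      intro δ hδm
      have h1 : ∀ z ∈ Finset.univ.filter (fun z : ZMod p => z ≠ 0),
          η z * Gm * ζ ^ (-(δ ^ 2 * Algebra.trace (ZMod p) F (a ^ 2) / (4 * z))).val *
            ζ ^ (-(δ * ρ)).val
          = η z * ζ ^ (-(δ ^ 2 * Algebra.trace (ZMod p) F (a ^ 2) / (4 * z))).val *
            (Gm * ζ ^ (-(δ * ρ)).val) := fun z _ => by ring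
      rw [Finset.sum_congr rfl h1, ← Finset.sum_mul, hinner δ (Finset.mem_filter.mp hδm).2]
      ring
    rw [Finset.sum_congr rfl s1, ← Finset.mul_sum, hdelta]
    ring
end

section
/- Let p be an odd prime, r = p^m, m even with m ≡ 0 (mod p). Then the number of x ∈ F_r with Tr(x²) = 0 and Tr(x) = 0 equals p^{m-2} + p^{-1}(p-1)G_m, where G_m is the quadratic Gauss sum over F_r; and for each B ∈ F_p^*, the number of x ∈ F_r with Tr(x²) = 0 and Tr(x) = B equals p^{m-2}. -/
/-- For `m > 2` even with `p ∣ m`: `#{x : Tr(x²)=0, Tr(x)=0} = p^{m-2} + p⁻¹(p-1)G_m`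
and `#{x : Tr(x²)=0, Tr(x)=B} = p^{m-2}` for every `B ≠ 0`. -/
theorem stmt8 (p m : ℕ) [Fact p.Prime] (hodd : p ≠ 2) (hm : 2 < m) (hme : Even m)
    (hmp : p ∣ m)
    (F : Type) [Field F] [Fintype F] [DecidableEq F] [Algebra (ZMod p) F]
    (hcard : Fintype.card F = p ^ m)
    (ζ : ℂ) (hζ : IsPrimitiveRoot ζ p)
    (ηm : F → ℂ)
    (hηm : ∀ a : F, ηm a = if a = 0 then 0 else if IsSquare a then 1 else -1)
    (Gm : ℂ)
    (hGm : Gm = ∑ x ∈ Finset.univ.filter (fun x : F => x ≠ 0),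
        ηm x * ζ ^ (Algebra.trace (ZMod p) F x).val) :
    (((Finset.univ.filter (fun x : F =>
        Algebra.trace (ZMod p) F (x ^ 2) = 0 ∧ Algebra.trace (ZMod p) F x = 0)).card : ℂ)
      = (p : ℂ) ^ (m - 2) + (p : ℂ)⁻¹ * ((p : ℂ) - 1) * Gm) ∧
    (∀ B : ZMod p, B ≠ 0 →
      ((Finset.univ.filter (fun x : F =>
          Algebra.trace (ZMod p) F (x ^ 2) = 0 ∧ Algebra.trace (ZMod p) F x = B)).card : ℂ)
        = (p : ℂ) ^ (m - 2)) := by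
  classical
  have hp : p.Prime := Fact.out
  have hp1 : 1 < p := hp.one_lt
  have hpC : (p : ℂ) ≠ 0 := Nat.cast_ne_zero.mpr hp.ne_zero
  haveI : Module.Finite (ZMod p) F := Module.Finite.of_finite
  haveI : CharP F p := charP_of_injective_algebraMap (algebraMap (ZMod p) F).injective p
  have hrc : ringChar F = p := ringChar.eq F p
  have hrc2 : ringChar F ≠ 2 := by rw [hrc]; exact hodd
  have hfr : Fintype.card F = p ^ Module.finrank (ZMod p) F := by
    have := Module.card_eq_pow_finrank (K := ZMod p) (V := F)
    simpa [ZMod.card] using this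
  have hfm : Module.finrank (ZMod p) F = m :=
    Nat.pow_right_injective hp.two_le (hfr.symm.trans hcard)
  set Tr := Algebra.trace (ZMod p) F with hTrdef
  -- trace of prime field elements vanishes
  have htr0 : ∀ c : ZMod p, Tr (algebraMap (ZMod p) F c) = 0 := by
    intro c
    rw [hTrdef, Algebra.trace_algebraMap, hfm]
    have : ((m : ℕ) : ZMod p) = 0 := (ZMod.natCast_eq_zero_iff m p).mpr hmp
    simp [nsmul_eq_mul, this]
  -- the additive characters
  have hζp : ζ ^ p = 1 := hζ.pow_eq_one
  set ψ₀ : AddChar (ZMod p) ℂ := AddChar.zmodChar p hζp with hψ₀def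
  have hψ₀app : ∀ a : ZMod p, ψ₀ a = ζ ^ a.val := fun a => rfl
  have hprim : ψ₀.IsPrimitive := AddChar.zmodChar_primitive_of_primitive_root p hζ
  have horth : ∀ c : ZMod p, ∑ b : ZMod p, ψ₀ (b * c) = if c = 0 then (p : ℂ) else 0 := by
    intro c
    have := AddChar.sum_mulShift c hprim
    simpa [ZMod.card] using this
  set ψ : AddChar F ℂ := ψ₀.compAddMonoidHom (Tr : F →ₗ[ZMod p] ZMod p).toAddMonoidHom
    with hψdef
  have hψapp : ∀ x : F, ψ x = ψ₀ (Tr x) := fun x => rfl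
  have hψalg : ∀ c : ZMod p, ψ (algebraMap (ZMod p) F c) = 1 := by
    intro c; rw [hψapp, htr0, AddChar.map_zero_eq_one]
  have hψne : ψ ≠ 1 := by
    obtain ⟨x, hx⟩ := Algebra.trace_surjective (ZMod p) F (1 : ZMod p)
    rw [AddChar.ne_one_iff]
    refine ⟨x, ?_⟩
    have hx' : Tr x = 1 := hx
    rw [hψapp, hx', hψ₀app]
    simpa [ZMod.val_one, hp1] using hζ.ne_one hp1
  have hψsum : ∑ x : F, ψ x = 0 := AddChar.sum_eq_zero_of_ne_one hψne
  -- relation between ψ₀ of scaled traces and ψ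
  have hscale : ∀ (a : ZMod p) (y : F), ψ₀ (a * Tr y) = ψ (algebraMap (ZMod p) F a * y) := by
    intro a y
    rw [hψapp, ← Algebra.smul_def, hTrdef, LinearMap.map_smul, smul_eq_mul]
  -- quadratic character facts
  have hηχ : ∀ y : F, ηm y = ((quadraticChar F y : ℤ) : ℂ) := by
    intro y
    rw [hηm, quadraticChar_apply, quadraticCharFun]
    split_ifs <;> simp
  -- Gm as a full sum
  have hGm' : Gm = ∑ y : F, ηm y * ψ y := by
    rw [hGm]
    rw [Finset.sum_filter]
    refine Finset.sum_congr rfl fun y _ => ?_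
    by_cases hy : y = 0
    · simp [hy, hηm]
    · simp [hy, hψapp, hψ₀app]
  -- the basic Gauss-sum evaluation : ∑ ψ(x²) = Gm
  have hT0 : ∑ x : F, ψ (x ^ 2) = Gm := by
    have hfib : ∑ x : F, ψ (x ^ 2)
        = ∑ y : F, ∑ x ∈ Finset.univ.filter (fun x : F => x ^ 2 = y), ψ (x ^ 2) := by
      rw [Finset.sum_fiberwise]
    rw [hfib]
    have : ∀ y : F, ∑ x ∈ Finset.univ.filter (fun x : F => x ^ 2 = y), ψ (x ^ 2)
        = (((quadraticChar F y : ℤ) : ℂ) + 1) * ψ y := by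
      intro y
      have hcardy : ((Finset.univ.filter (fun x : F => x ^ 2 = y)).card : ℤ)
          = quadraticChar F y + 1 := by
        have := quadraticChar_card_sqrts hrc2 y
        rwa [show ({x : F | x ^ 2 = y}.toFinset) = Finset.univ.filter (fun x : F => x ^ 2 = y)
          by ext x; simp] at this
      calc ∑ x ∈ Finset.univ.filter (fun x : F => x ^ 2 = y), ψ (x ^ 2)
          = ∑ x ∈ Finset.univ.filter (fun x : F => x ^ 2 = y), ψ y := by
            refine Finset.sum_congr rfl fun x hx => ?_
            rw [Finset.mem_filter] at hx
            rw [hx.2]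
        _ = ((Finset.univ.filter (fun x : F => x ^ 2 = y)).card : ℂ) * ψ y := by
            rw [Finset.sum_const, nsmul_eq_mul]
        _ = (((quadraticChar F y : ℤ) : ℂ) + 1) * ψ y := by
            have : (((Finset.univ.filter (fun x : F => x ^ 2 = y)).card : ℕ) : ℂ)
                = ((quadraticChar F y : ℤ) : ℂ) + 1 := by
              exact_mod_cast congrArg (fun z : ℤ => (z : ℂ)) hcardy
            rw [this]
    rw [Finset.sum_congr rfl fun y _ => this y]
    simp_rw [add_mul, one_mul, Finset.sum_add_distrib, hψsum, add_zero, hGm']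
    refine (Finset.sum_congr rfl fun y _ => ?_).symm
    rw [hηχ]
  -- prime field elements are squares
  have hsq : ∀ a : ZMod p, a ≠ 0 → IsSquare (algebraMap (ZMod p) F a) := by
    intro a ha
    have hA : algebraMap (ZMod p) F a ≠ 0 := by
      simpa using (map_ne_zero_iff _ (algebraMap (ZMod p) F).injective).mpr ha
    rw [FiniteField.isSquare_iff hrc2 hA]
    -- card F / 2 = (p^m - 1)/2 and 2*(p-1) ∣ p^m - 1
    have hdvd : 2 * (p - 1) ∣ p ^ m - 1 := by
      obtain ⟨t, ht⟩ := hme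
      have h1 : p ^ 2 - 1 ∣ p ^ m - 1 := by
        have : p ^ m = (p ^ 2) ^ t := by rw [← pow_mul]; congr 1; omega
        rw [this]
        simpa using Nat.sub_dvd_pow_sub_pow (p ^ 2) 1 t
      refine dvd_trans ?_ h1
      have hpodd : Odd p := hp.odd_of_ne_two hodd
      obtain ⟨k, hk⟩ := hpodd
      have hgoal : p ^ 2 - 1 = 2 * (p - 1) * (k + 1) := by
        have h2 : p ^ 2 - 1 = (p + 1) * (p - 1) := by
          have := Nat.sq_sub_sq p 1
          simpa [pow_two] using this
        rw [h2, show p + 1 = 2 * (k + 1) by omega]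
        ring
      exact ⟨k + 1, hgoal⟩
    obtain ⟨k, hk⟩ := hdvd
    have hk2 : p ^ m - 1 = 2 * ((p - 1) * k) := by rw [← mul_assoc]; exact hk
    have hcard2 : Fintype.card F / 2 = (p - 1) * k := by
      rw [hcard]
      have hpm1 : 1 ≤ p ^ m := Nat.one_le_pow _ _ hp.pos
      have hodd' : p ^ m % 2 = 1 := Nat.odd_iff.mp (hp.odd_of_ne_two hodd).pow
      omega
    rw [hcard2, pow_mul, ← map_pow]
    have : a ^ (p - 1) = 1 := ZMod.pow_card_sub_one_eq_one ha
    rw [this, map_one, one_pow]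
  -- ∑ ψ(s² x²) = Gm for s ≠ 0
  have hSaux : ∀ s : F, s ≠ 0 → ∑ x : F, ψ (s ^ 2 * x ^ 2) = Gm := by
    intro s hs
    rw [← hT0]
    refine Fintype.sum_bijective (fun x => s * x) (Equiv.mulLeft₀ s hs).bijective _ _ fun x => ?_
    rw [mul_pow, mul_comm]
  -- the complete inner sum for a ≠ 0
  have hS : ∀ a b : ZMod p, a ≠ 0 →
      ∑ x : F, ψ (algebraMap (ZMod p) F a * x ^ 2 + algebraMap (ZMod p) F b * x) = Gm := by
    intro a b ha
    have h2 : (2 : ZMod p) ≠ 0 := by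
      intro h
      have h' : ((2 : ℕ) : ZMod p) = 0 := by exact_mod_cast h
      have hd := (ZMod.natCast_eq_zero_iff 2 p).mp h'
      exact hodd (Nat.le_antisymm (Nat.le_of_dvd two_pos hd) hp.two_le)
    have h2a : (2 : ZMod p) * a ≠ 0 := mul_ne_zero h2 ha
    set u : ZMod p := b / (2 * a) with hu
    set A : F := algebraMap (ZMod p) F a with hA
    set U : F := algebraMap (ZMod p) F u with hU
    have hAne : A ≠ 0 := by
      rw [hA]
      exact (map_ne_zero_iff _ (algebraMap (ZMod p) F).injective).mpr ha
    have hb' : algebraMap (ZMod p) F b = 2 * A * U := by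
      have hb : (2 : ZMod p) * a * u = b := by
        rw [hu]; field_simp
      have hmm := congrArg (algebraMap (ZMod p) F) hb
      rw [map_mul, map_mul, map_ofNat] at hmm
      rw [hA, hU, ← hmm]
    have hkey : ∀ x : F, A * x ^ 2 + algebraMap (ZMod p) F b * x
        = A * (x + U) ^ 2 + algebraMap (ZMod p) F (-(a * u ^ 2)) := by
      intro x
      have hmap : algebraMap (ZMod p) F (-(a * u ^ 2)) = -(A * U ^ 2) := by
        rw [map_neg, map_mul, map_pow, hA, hU]
      rw [hmap, hb']
      ring
    calc ∑ x : F, ψ (A * x ^ 2 + algebraMap (ZMod p) F b * x)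
        = ∑ x : F, ψ (A * (x + U) ^ 2) * ψ (algebraMap (ZMod p) F (-(a * u ^ 2))) := by
          refine Finset.sum_congr rfl fun x _ => ?_
          rw [hkey x, AddChar.map_add_eq_mul]
      _ = ∑ x : F, ψ (A * (x + U) ^ 2) := by
          simp_rw [hψalg, mul_one]
      _ = ∑ x : F, ψ (A * x ^ 2) := by
          refine Fintype.sum_bijective (fun x : F => x + U)
            (Equiv.addRight U).bijective _ _ fun x => rfl
      _ = Gm := by
          obtain ⟨s, hs⟩ := hsq a ha
          have hsne : s ≠ 0 := by
            intro h
            rw [h, mul_zero] at hs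
            exact hAne (hA.trans hs)
          have hax : ∀ x : F, A * x ^ 2 = s ^ 2 * x ^ 2 := by
            intro x; rw [hA, hs]; ring
          simp_rw [hax]
          exact hSaux s hsne
  -- inner sum for a = 0
  have hS0 : ∀ b : ZMod p,
      ∑ x : F, ψ (algebraMap (ZMod p) F (0 : ZMod p) * x ^ 2 + algebraMap (ZMod p) F b * x)
        = if b = 0 then ((p : ℂ) ^ m) else 0 := by
    intro b
    simp_rw [map_zero, zero_mul, zero_add]
    by_cases hb : b = 0
    · simp [hb, Finset.card_univ, hcard]
    · have hbne : algebraMap (ZMod p) F b ≠ 0 :=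
        (map_ne_zero_iff _ (algebraMap (ZMod p) F).injective).mpr hb
      rw [if_neg hb, ← hψsum]
      exact Fintype.sum_bijective (fun x : F => algebraMap (ZMod p) F b * x)
        (Equiv.mulLeft₀ _ hbne).bijective _ _ fun x => rfl
  -- the key double-counting identity
  have key : ∀ B : ZMod p,
      (p : ℂ) ^ 2 * ((Finset.univ.filter (fun x : F =>
          Tr (x ^ 2) = 0 ∧ Tr x = B)).card : ℂ)
        = (p : ℂ) ^ m + ((p : ℂ) - 1) * (if B = 0 then (p : ℂ) else 0) * Gm := by
    intro B
    have step1 : (p : ℂ) ^ 2 * ((Finset.univ.filter (fun x : F =>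
          Tr (x ^ 2) = 0 ∧ Tr x = B)).card : ℂ)
        = ∑ x : F, (∑ a : ZMod p, ψ₀ (a * Tr (x ^ 2))) * (∑ b : ZMod p, ψ₀ (b * (Tr x - B))) := by
      have hx : ∀ x : F, (∑ a : ZMod p, ψ₀ (a * Tr (x ^ 2))) * (∑ b : ZMod p, ψ₀ (b * (Tr x - B)))
          = if Tr (x ^ 2) = 0 ∧ Tr x = B then (p : ℂ) ^ 2 else 0 := by
        intro x
        rw [horth, horth]
        simp only [sub_eq_zero]
        by_cases h1 : Tr (x ^ 2) = 0 <;> by_cases h2 : Tr x = B <;>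
          simp [h1, h2, sq]
      rw [Finset.sum_congr rfl fun x _ => hx x, ← Finset.sum_filter]
      rw [Finset.sum_const, nsmul_eq_mul, mul_comm]
    have step2 : ∑ x : F, (∑ a : ZMod p, ψ₀ (a * Tr (x ^ 2))) * (∑ b : ZMod p, ψ₀ (b * (Tr x - B)))
        = ∑ a : ZMod p, ∑ b : ZMod p, ψ₀ (-(b * B)) *
            ∑ x : F, ψ (algebraMap (ZMod p) F a * x ^ 2 + algebraMap (ZMod p) F b * x) := by
      have hterm : ∀ (x : F) (a b : ZMod p),
          ψ₀ (a * Tr (x ^ 2)) * ψ₀ (b * (Tr x - B))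
          = ψ₀ (-(b * B)) *
              ψ (algebraMap (ZMod p) F a * x ^ 2 + algebraMap (ZMod p) F b * x) := by
        intro x a b
        have hsplit : b * (Tr x - B) = b * Tr x + (-(b * B)) := by ring
        rw [hsplit, AddChar.map_add_eq_mul, hscale, hscale, AddChar.map_add_eq_mul]
        ring
      calc ∑ x : F, (∑ a : ZMod p, ψ₀ (a * Tr (x ^ 2))) * (∑ b : ZMod p, ψ₀ (b * (Tr x - B)))
          = ∑ x : F, ∑ a : ZMod p, ∑ b : ZMod p,
              ψ₀ (a * Tr (x ^ 2)) * ψ₀ (b * (Tr x - B)) := by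
            refine Finset.sum_congr rfl fun x _ => ?_
            rw [Finset.sum_mul_sum]
        _ = ∑ a : ZMod p, ∑ b : ZMod p, ∑ x : F,
              ψ₀ (a * Tr (x ^ 2)) * ψ₀ (b * (Tr x - B)) := by
            rw [Finset.sum_comm]
            refine Finset.sum_congr rfl fun a _ => Finset.sum_comm
        _ = ∑ a : ZMod p, ∑ b : ZMod p, ψ₀ (-(b * B)) *
              ∑ x : F, ψ (algebraMap (ZMod p) F a * x ^ 2 + algebraMap (ZMod p) F b * x) := by
            refine Finset.sum_congr rfl fun a _ => Finset.sum_congr rfl fun b _ => ?_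
            rw [Finset.mul_sum]
            exact Finset.sum_congr rfl fun x _ => hterm x a b
    rw [step1, step2]
    rw [← Finset.add_sum_erase _ _ (Finset.mem_univ (0 : ZMod p))]
    have hzero : ∑ b : ZMod p, ψ₀ (-(b * B)) *
        ∑ x : F, ψ (algebraMap (ZMod p) F (0 : ZMod p) * x ^ 2 + algebraMap (ZMod p) F b * x)
        = (p : ℂ) ^ m := by
      rw [Finset.sum_congr rfl fun b _ => by rw [hS0 b]]
      rw [Finset.sum_eq_single (0 : ZMod p)]
      · simp
      · intro b _ hb; simp [hb]
      · intro h; exact absurd (Finset.mem_univ _) h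
    have hrest : ∑ a ∈ Finset.univ.erase (0 : ZMod p), ∑ b : ZMod p, ψ₀ (-(b * B)) *
        ∑ x : F, ψ (algebraMap (ZMod p) F a * x ^ 2 + algebraMap (ZMod p) F b * x)
        = ((p : ℂ) - 1) * (if B = 0 then (p : ℂ) else 0) * Gm := by
      have hinner : ∀ a ∈ Finset.univ.erase (0 : ZMod p),
          ∑ b : ZMod p, ψ₀ (-(b * B)) *
            ∑ x : F, ψ (algebraMap (ZMod p) F a * x ^ 2 + algebraMap (ZMod p) F b * x)
          = (if B = 0 then (p : ℂ) else 0) * Gm := by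
        intro a ha
        have ha0 : a ≠ 0 := Finset.ne_of_mem_erase ha
        rw [Finset.sum_congr rfl fun b _ => by rw [hS a b ha0]]
        rw [← Finset.sum_mul]
        congr 1
        have hneg : ∀ b : ZMod p, ψ₀ (-(b * B)) = ψ₀ (b * (-B)) := by
          intro b; congr 1; ring
        rw [Finset.sum_congr rfl fun b _ => hneg b, horth]
        simp [neg_eq_zero]
      rw [Finset.sum_congr rfl hinner, Finset.sum_const]
      rw [Finset.card_erase_of_mem (Finset.mem_univ _), Finset.card_univ, ZMod.card]
      rw [nsmul_eq_mul, ← mul_assoc]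
      congr 1
      push_cast [Nat.cast_sub hp.one_le]
      ring
    rw [hzero, hrest]
  -- conclude
  have hmsplit : (p : ℂ) ^ m = (p : ℂ) ^ 2 * (p : ℂ) ^ (m - 2) := by
    rw [← pow_add]
    congr 1
    omega
  constructor
  · have h0 := key 0
    apply mul_left_cancel₀ (pow_ne_zero 2 hpC)
    rw [h0, if_pos rfl, hmsplit]
    field_simp
  · intro B hB
    have hBkey := key B
    apply mul_left_cancel₀ (pow_ne_zero 2 hpC)
    rw [hBkey, if_neg hB, hmsplit]
    ring
end

section
/- Let p be an odd prime, r = p^m, m even with m ≢ 0 (mod p). Then for each B ∈ F_p^*, the number of x ∈ F_r with Tr(x²) = 0 and Tr(x) = B equals p^{m-2} + p^{-1}G_m, while the number of x with Tr(x²) = 0 and Tr(x) = 0 equals p^{m-2}. Here G_m = -(-1)^{(p-1)m/4} p^{m/2} is the quadratic Gauss sum over F_r. -/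
open Finset AddChar MulChar

section Aux
variable {K : Type*} [Field K] [Fintype K] [DecidableEq K]

private noncomputable def qc (K : Type*) [Field K] [Fintype K] [DecidableEq K] :
    MulChar K ℂ := (quadraticChar K).ringHomComp (Int.castRingHom ℂ)

private lemma qc_apply (a : K) : qc K a = ((quadraticChar K a : ℤ) : ℂ) := rfl

private lemma qc_ne_one (hK : ringChar K ≠ 2) : qc K ≠ 1 :=
  (ringHomComp_ne_one_iff (RingHom.injective_int _)).mpr (quadraticChar_ne_one hK)

private lemma qc_isQuadratic : (qc K).IsQuadratic :=
  (quadraticChar_isQuadratic K).comp _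

private lemma qc_sq_eq_one {a : K} (ha : a ≠ 0) : qc K a * qc K a = 1 := by
  rw [← map_mul, show a * a = a ^ 2 by ring, qc_apply, quadraticChar_sq_one' ha]
  norm_num

private lemma qc_inv {a : K} (ha : a ≠ 0) : qc K a⁻¹ = qc K a := by
  have h1 : qc K a * qc K a⁻¹ = 1 := by
    rw [← map_mul, mul_inv_cancel₀ ha]; exact map_one _
  have h2 := qc_sq_eq_one ha
  calc qc K a⁻¹ = qc K a * (qc K a * qc K a⁻¹) := by rw [← mul_assoc, h2, one_mul]
  _ = qc K a := by rw [h1, mul_one]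

private lemma qc_sum_eq_zero (hK : ringChar K ≠ 2) : ∑ a : K, qc K a = 0 :=
  MulChar.sum_eq_zero_of_ne_one (qc_ne_one hK)

/-- twisted gauss sum -/
private lemma qc_twisted (hK : ringChar K ≠ 2) {ψ : AddChar K ℂ} (hψ : ψ.IsPrimitive)
    (w : K) : ∑ u : K, qc K u * ψ (w * u) = qc K w * gaussSum (qc K) ψ := by
  rcases eq_or_ne w 0 with rfl | hw
  · simp [qc_sum_eq_zero hK]
  · have := gaussSum_mulShift (qc K) ψ (Units.mk0 w hw)
    have h2 : gaussSum (qc K) (mulShift ψ w) = ∑ u : K, qc K u * ψ (w * u) := by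
      simp only [gaussSum, mulShift_apply, mul_comm]
    rw [Units.val_mk0, h2] at this
    calc ∑ u : K, qc K u * ψ (w * u) = (qc K w * qc K w) * ∑ u : K, qc K u * ψ (w * u) := by
          rw [qc_sq_eq_one hw, one_mul]
      _ = qc K w * gaussSum (qc K) ψ := by rw [mul_assoc, this]

private lemma sum_psi_mul_s9 (hK : ringChar K ≠ 2) {ψ : AddChar K ℂ} (hψ : ψ.IsPrimitive)
    {a : K} (ha : a ≠ 0) : ∑ x : K, ψ (a * x) = 0 := by
  have := sum_mulShift a hψ
  simp only [mul_comm] at this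
  rw [this]
  simp [ha]

private lemma sum_psi_sq (hK : ringChar K ≠ 2) {ψ : AddChar K ℂ} (hψ : ψ.IsPrimitive)
    {a : K} (ha : a ≠ 0) :
    ∑ x : K, ψ (a * x ^ 2) = qc K a * gaussSum (qc K) ψ := by
  have key : ∑ x : K, ψ (a * x ^ 2) = ∑ t : K, ((quadraticChar K t : ℂ) + 1) * ψ (a * t) := by
    have h1 : ∀ t : K, (((univ.filter (fun x : K => x ^ 2 = t)).card : ℤ) : ℂ)
        = ((quadraticChar K t : ℂ) + 1) := by
      intro t
      have := quadraticChar_card_sqrts hK t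
      rw [Set.toFinset_setOf] at this
      rw [this]; push_cast; ring
    calc ∑ x : K, ψ (a * x ^ 2) = ∑ x : K, ∑ t : K, if x ^ 2 = t then ψ (a * t) else 0 := by
          refine Finset.sum_congr rfl fun x _ => ?_
          rw [Finset.sum_ite_eq (univ : Finset K) (x ^ 2) (fun t => ψ (a * t))]
          simp
      _ = ∑ t : K, ∑ x : K, if x ^ 2 = t then ψ (a * t) else 0 := Finset.sum_comm
      _ = ∑ t : K, ((univ.filter (fun x : K => x ^ 2 = t)).card : ℂ) * ψ (a * t) := by
          refine Finset.sum_congr rfl fun t _ => ?_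
          rw [← Finset.sum_filter, Finset.sum_const, nsmul_eq_mul]
      _ = ∑ t : K, ((quadraticChar K t : ℂ) + 1) * ψ (a * t) := by
          refine Finset.sum_congr rfl fun t _ => ?_
          rw [← h1 t]; norm_num
  rw [key]
  simp only [add_mul, one_mul, Finset.sum_add_distrib]
  rw [sum_psi_mul_s9 hK hψ ha, add_zero]
  have := qc_twisted hK hψ a
  simp only [qc_apply] at this ⊢
  rw [this]

private lemma sum_psi_quad (hK : ringChar K ≠ 2) {ψ : AddChar K ℂ} (hψ : ψ.IsPrimitive)
    {a : K} (ha : a ≠ 0) (b : K) :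
    ∑ x : K, ψ (a * x ^ 2 + b * x)
      = qc K a * gaussSum (qc K) ψ * ψ (-(b ^ 2) / (4 * a)) := by
  have h2 : (2 : K) ≠ 0 := Ring.two_ne_zero hK
  have harg : ∀ x : K, a * x ^ 2 + b * x
      = a * (x + b / (2 * a)) ^ 2 + -(b ^ 2) / (4 * a) := by
    have h4 : (4 : K) ≠ 0 := by
      have : (4 : K) = 2 * 2 := by norm_num
      rw [this]; exact mul_ne_zero h2 h2
    intro x; field_simp; ring
  calc ∑ x : K, ψ (a * x ^ 2 + b * x)
      = ∑ x : K, ψ (a * (x + b / (2 * a)) ^ 2) * ψ (-(b ^ 2) / (4 * a)) := by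
        refine Finset.sum_congr rfl fun x _ => ?_
        rw [← map_add_eq_mul, harg x]
    _ = (∑ x : K, ψ (a * (x + b / (2 * a)) ^ 2)) * ψ (-(b ^ 2) / (4 * a)) := by
        rw [← Finset.sum_mul]
    _ = (∑ y : K, ψ (a * y ^ 2)) * ψ (-(b ^ 2) / (4 * a)) := by
        congr 1
        exact Fintype.sum_equiv (Equiv.addRight (b / (2 * a)))
          (fun x => ψ (a * (x + b / (2 * a)) ^ 2)) (fun y => ψ (a * y ^ 2)) (fun x => rfl)
    _ = qc K a * gaussSum (qc K) ψ * ψ (-(b ^ 2) / (4 * a)) := by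
        rw [sum_psi_sq hK hψ ha]

end Aux

/-- For `m > 2` even with `p ∤ m`: `#{x : Tr(x²)=0, Tr(x)=B} = p^{m-2} + p⁻¹G_m`
for every `B ≠ 0`, and `#{x : Tr(x²)=0, Tr(x)=0} = p^{m-2}`. -/
theorem stmt9 (p m : ℕ) [Fact p.Prime] (hodd : p ≠ 2) (hm : 2 < m) (hme : Even m)
    (hmp : ¬ p ∣ m)
    (F : Type) [Field F] [Fintype F] [DecidableEq F] [Algebra (ZMod p) F]
    (hcard : Fintype.card F = p ^ m)
    (ζ : ℂ) (hζ : IsPrimitiveRoot ζ p)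
    (ηm : F → ℂ)
    (hηm : ∀ a : F, ηm a = if a = 0 then 0 else if IsSquare a then 1 else -1)
    (Gm : ℂ)
    (hGm : Gm = ∑ x ∈ Finset.univ.filter (fun x : F => x ≠ 0),
        ηm x * ζ ^ (Algebra.trace (ZMod p) F x).val) :
    (∀ B : ZMod p, B ≠ 0 →
      ((Finset.univ.filter (fun x : F =>
          Algebra.trace (ZMod p) F (x ^ 2) = 0 ∧ Algebra.trace (ZMod p) F x = B)).card : ℂ)
        = (p : ℂ) ^ (m - 2) + (p : ℂ)⁻¹ * Gm) ∧
    (((Finset.univ.filter (fun x : F =>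
        Algebra.trace (ZMod p) F (x ^ 2) = 0 ∧ Algebra.trace (ZMod p) F x = 0)).card : ℂ)
      = (p : ℂ) ^ (m - 2)) := by
  have hp : p.Prime := Fact.out
  have hp2 : 2 ≤ p := hp.two_le
  haveI : NeZero p := ⟨hp.ne_zero⟩
  -- characteristic facts
  haveI : CharP F p := charP_of_injective_algebraMap (algebraMap (ZMod p) F).injective p
  have hFchar : ringChar F = p := ringChar.eq F p
  have hF2 : ringChar F ≠ 2 := by rw [hFchar]; exact hodd
  have hZ2 : ringChar (ZMod p) ≠ 2 := by rw [ZMod.ringChar_zmod_n]; exact hodd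
  -- additive characters
  have hζp : ζ ^ p = 1 := hζ.pow_eq_one
  set e : AddChar (ZMod p) ℂ := AddChar.zmodChar p hζp with he_def
  have he : e.IsPrimitive := AddChar.zmodChar_primitive_of_primitive_root p hζ
  have he1 : ∀ t : ZMod p, e t = 1 ↔ t = 0 := fun t =>
    AddChar.IsPrimitive.zmod_char_eq_one_iff p he t
  set T : F →ₗ[ZMod p] ZMod p := Algebra.trace (ZMod p) F with hT_def
  set ψ : AddChar F ℂ := e.compAddMonoidHom T.toAddMonoidHom with hψ_def
  have hψ_apply : ∀ x : F, ψ x = e (T x) := fun x => rfl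
  -- finrank
  have hfr : Module.finrank (ZMod p) F = m := by
    have hc := Module.card_eq_pow_finrank (K := ZMod p) (V := F)
    rw [ZMod.card, hcard] at hc
    exact (Nat.pow_right_injective hp2 hc.symm)
  set A : ZMod p →+* F := algebraMap (ZMod p) F with hA_def
  have hTA : ∀ c : ZMod p, T (A c) = (m : ZMod p) * c := by
    intro c
    rw [hT_def, hA_def, Algebra.trace_algebraMap, hfr]
    rw [nsmul_eq_mul]
  set M : ZMod p := (m : ZMod p) with hM_def
  have hM : M ≠ 0 := by
    rw [hM_def, Ne, ZMod.natCast_eq_zero_iff]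
    exact hmp
  have hTsmul : ∀ (c : ZMod p) (y : F), T (A c * y) = c * T y := by
    intro c y
    rw [hA_def, ← Algebra.smul_def, map_smul, smul_eq_mul]
  -- ψ is primitive
  have hψ : ψ.IsPrimitive := by
    apply AddChar.IsPrimitive.of_ne_one
    rw [AddChar.ne_one_iff]
    refine ⟨1, ?_⟩
    have h1 : T 1 = M := by
      have := hTA 1
      rwa [map_one, mul_one] at this
    rw [hψ_apply, h1]
    exact fun hcon => hM ((he1 M).mp hcon)
  -- the Gauss sums
  set G : ℂ := gaussSum (qc F) ψ with hG_def
  set g : ℂ := gaussSum (qc (ZMod p)) e with hg_def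
  have hGmG : Gm = G := by
    rw [hGm, hG_def, gaussSum]
    rw [Finset.sum_filter_of_ne (by
      intro x _ hx
      intro h0
      apply hx
      rw [h0, hηm]
      simp)]
    refine Finset.sum_congr rfl fun x _ => ?_
    rw [hηm x, hψ_apply, qc_apply]
    rcases eq_or_ne x 0 with rfl | hx
    · simp
    · rw [if_neg hx]
      by_cases hsq : IsSquare x
      · rw [if_pos hsq, (quadraticChar_one_iff_isSquare hx).mpr hsq,
          show e (T x) = ζ ^ (T x).val from rfl]
        norm_num
      · rw [if_neg hsq, quadraticChar_neg_one_iff_not_isSquare.mpr hsq,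
          show e (T x) = ζ ^ (T x).val from rfl]
        norm_num
  have hA0 : ∀ a : ZMod p, a ≠ 0 → A a ≠ 0 := by
    intro a ha h0
    exact ha (A.injective (by rw [h0, map_zero]))
  -- elements of prime field are squares
  have hsqA : ∀ a : ZMod p, a ≠ 0 → qc F (A a) = 1 := by
    intro a ha
    have hAa := hA0 a ha
    have hsq : IsSquare (A a) := by
      rw [FiniteField.isSquare_iff hF2 hAa]
      -- card F / 2 = (p - 1) * (s / 2) with s = ∑ i in range m, p ^ i even
      set s : ℕ := ∑ i ∈ Finset.range m, p ^ i with hs_def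
      have hgeom : (p - 1) * s = p ^ m - 1 := by
        have hZ : ((p : ℤ) - 1) * (s : ℤ) = (p : ℤ) ^ m - 1 := by
          rw [hs_def]
          push_cast
          rw [mul_comm]
          exact geom_sum_mul (p : ℤ) m
        have h1p : 1 ≤ p := hp.pos
        have h1q : 1 ≤ p ^ m := Nat.one_le_pow _ _ hp.pos
        zify [h1p, h1q]
        exact hZ
      have hseven : 2 ∣ s := by
        have : s % 2 = 0 := by
          rw [hs_def, Finset.sum_nat_mod]
          have : ∀ i ∈ Finset.range m, p ^ i % 2 = 1 := by
            intro i _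
            rw [Nat.pow_mod]
            have : p % 2 = 1 := Nat.odd_iff.mp (hp.odd_of_ne_two hodd)
            rw [this, Nat.one_pow]
          rw [Finset.sum_congr rfl this]
          simp [Nat.even_iff.mp hme]
        omega
      have hqodd : Odd (p ^ m) := (hp.odd_of_ne_two hodd).pow
      obtain ⟨k, hk⟩ := hseven
      have h2 : p ^ m = 2 * ((p - 1) * k) + 1 := by
        have h1q : 1 ≤ p ^ m := Nat.one_le_pow _ _ hp.pos
        calc p ^ m = (p ^ m - 1) + 1 := by omega
          _ = (p - 1) * s + 1 := by rw [hgeom]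
          _ = 2 * ((p - 1) * k) + 1 := by rw [hk]; ring
      have hdiv : Fintype.card F / 2 = (p - 1) * (s / 2) := by
        have e1 : (2 * k) / 2 = k := Nat.mul_div_cancel_left k (by norm_num)
        rw [hcard, h2, hk, e1, Nat.mul_add_div (by norm_num)]
        simp
      rw [hdiv, pow_mul, ← map_pow, ZMod.pow_card_sub_one_eq_one ha, map_one, one_pow]
    rw [qc_apply, (quadraticChar_one_iff_isSquare hAa).mpr hsq]
    norm_num
  -- basic nonzero facts
  have h2Z : (2 : ZMod p) ≠ 0 := Ring.two_ne_zero hZ2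
  have h4Z : (4 : ZMod p) ≠ 0 := by
    have : (4 : ZMod p) = 2 * 2 := by norm_num
    rw [this]; exact mul_ne_zero h2Z h2Z
  have hpC : (p : ℂ) ≠ 0 := by exact_mod_cast hp.ne_zero
  -- orthogonality
  have horth : ∀ t : ZMod p, (∑ a : ZMod p, e (a * t)) = if t = 0 then (p : ℂ) else 0 := by
    intro t
    have h := AddChar.sum_mulShift t he
    rw [ZMod.card] at h
    simpa using h
  -- counting via characters
  have hcount : ∀ B : ZMod p,
      ∑ x : F, (∑ a : ZMod p, e (a * T (x ^ 2))) * (∑ b : ZMod p, e (b * (T x - B)))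
      = ((Finset.univ.filter (fun x : F => T (x ^ 2) = 0 ∧ T x = B)).card : ℂ) * (p : ℂ) ^ 2 := by
    intro B
    have hterm : ∀ x : F,
        (∑ a : ZMod p, e (a * T (x ^ 2))) * (∑ b : ZMod p, e (b * (T x - B)))
        = if (T (x ^ 2) = 0 ∧ T x = B) then (p : ℂ) ^ 2 else 0 := by
      intro x
      rw [horth, horth]
      by_cases h1 : T (x ^ 2) = 0 <;> by_cases h2 : T x = B <;>
        simp [h1, h2, sub_eq_zero, pow_two]
    rw [Finset.sum_congr rfl (fun x _ => hterm x), ← Finset.sum_filter, Finset.sum_const,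
      nsmul_eq_mul]
  -- expansion of the phase
  have hsplit : ∀ (B a b : ZMod p) (x : F),
      e (a * T (x ^ 2)) * e (b * (T x - B))
      = e (-(b * B)) * ψ (A a * x ^ 2 + A b * x) := by
    intro B a b x
    have h1 : ψ (A a * x ^ 2 + A b * x) = e (a * T (x ^ 2)) * e (b * T x) := by
      rw [AddChar.map_add_eq_mul, hψ_apply, hψ_apply, hTsmul, hTsmul]
    have h2 : e (b * (T x - B)) = e (b * T x) * e (-(b * B)) := by
      rw [← AddChar.map_add_eq_mul]
      congr 1
      ring
    rw [h1, h2]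
    ring
  have hswap : ∀ B : ZMod p,
      ∑ x : F, (∑ a : ZMod p, e (a * T (x ^ 2))) * (∑ b : ZMod p, e (b * (T x - B)))
      = ∑ a : ZMod p, ∑ b : ZMod p, e (-(b * B)) * ∑ x : F, ψ (A a * x ^ 2 + A b * x) := by
    intro B
    calc ∑ x : F, (∑ a : ZMod p, e (a * T (x ^ 2))) * (∑ b : ZMod p, e (b * (T x - B)))
        = ∑ x : F, ∑ a : ZMod p, ∑ b : ZMod p,
            e (a * T (x ^ 2)) * e (b * (T x - B)) := by
          refine Finset.sum_congr rfl fun x _ => ?_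
          rw [Finset.sum_mul_sum]
      _ = ∑ a : ZMod p, ∑ b : ZMod p, ∑ x : F,
            e (a * T (x ^ 2)) * e (b * (T x - B)) := by
          rw [Finset.sum_comm]
          exact Finset.sum_congr rfl fun a _ => Finset.sum_comm
      _ = ∑ a : ZMod p, ∑ b : ZMod p, e (-(b * B)) * ∑ x : F, ψ (A a * x ^ 2 + A b * x) := by
          refine Finset.sum_congr rfl fun a _ => Finset.sum_congr rfl fun b _ => ?_
          rw [Finset.mul_sum]
          exact Finset.sum_congr rfl fun x _ => hsplit B a b x
  -- the inner x-sums
  have hS00 : ∑ x : F, ψ (A (0 : ZMod p) * x ^ 2 + A (0 : ZMod p) * x) = (p : ℂ) ^ m := by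
    simp only [map_zero, zero_mul, zero_add, AddChar.map_zero_eq_one]
    rw [Finset.sum_const, nsmul_eq_mul, mul_one, Finset.card_univ, hcard]
    push_cast
    ring
  have hS0b : ∀ b : ZMod p, b ≠ 0 →
      ∑ x : F, ψ (A (0 : ZMod p) * x ^ 2 + A b * x) = 0 := by
    intro b hb
    simp only [map_zero, zero_mul, zero_add]
    exact sum_psi_mul_s9 hF2 hψ (hA0 b hb)
  have hSab : ∀ a b : ZMod p, a ≠ 0 →
      ∑ x : F, ψ (A a * x ^ 2 + A b * x) = G * e (M * (-(b ^ 2) / (4 * a))) := by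
    intro a b ha
    rw [sum_psi_quad hF2 hψ (hA0 a ha) (A b), hsqA a ha, one_mul]
    congr 1
    have harg : -(A b ^ 2) / (4 * A a) = A (-(b ^ 2) / (4 * a)) := by
      rw [map_div₀, map_neg, map_pow, map_mul, map_ofNat]
    rw [harg, hψ_apply, hTA]
  -- row at a = 0
  have hrow0 : ∀ B : ZMod p,
      ∑ b : ZMod p, e (-(b * B)) * ∑ x : F, ψ (A (0 : ZMod p) * x ^ 2 + A b * x)
      = (p : ℂ) ^ m := by
    intro B
    rw [← Finset.add_sum_erase _ _ (Finset.mem_univ (0 : ZMod p))]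
    rw [hS00]
    have hz : ∀ b ∈ Finset.univ.erase (0 : ZMod p),
        e (-(b * B)) * ∑ x : F, ψ (A (0 : ZMod p) * x ^ 2 + A b * x) = 0 := by
      intro b hb
      rw [hS0b b (Finset.ne_of_mem_erase hb), mul_zero]
    rw [Finset.sum_congr rfl hz, Finset.sum_const_zero, add_zero]
    norm_num
  -- rows at a ≠ 0
  have hrowa : ∀ (B a : ZMod p), a ≠ 0 →
      ∑ b : ZMod p, e (-(b * B)) * ∑ x : F, ψ (A a * x ^ 2 + A b * x)
      = G * (qc (ZMod p) (-M / 4) * qc (ZMod p) a * (g * e ((B ^ 2 / M) * a))) := by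
    intro B a ha
    have hc : -M / (4 * a) ≠ 0 := by
      apply div_ne_zero (neg_ne_zero.mpr hM) (mul_ne_zero h4Z ha)
    calc ∑ b : ZMod p, e (-(b * B)) * ∑ x : F, ψ (A a * x ^ 2 + A b * x)
        = G * ∑ b : ZMod p, e ((-M / (4 * a)) * b ^ 2 + (-B) * b) := by
          rw [Finset.mul_sum]
          refine Finset.sum_congr rfl fun b _ => ?_
          rw [hSab a b ha]
          rw [show e ((-M / (4 * a)) * b ^ 2 + (-B) * b)
              = e (-(b * B)) * e (M * (-(b ^ 2) / (4 * a))) by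
            rw [← AddChar.map_add_eq_mul]
            congr 1
            field_simp
            ring]
          ring
      _ = G * (qc (ZMod p) (-M / (4 * a)) * g
            * e (-((-B) ^ 2) / (4 * (-M / (4 * a))))) := by
          rw [sum_psi_quad hZ2 he hc (-B)]
      _ = G * (qc (ZMod p) (-M / 4) * qc (ZMod p) a * (g * e ((B ^ 2 / M) * a))) := by
          have h1 : -M / (4 * a) = (-M / 4) * a⁻¹ := by field_simp
          have h2 : -((-B) ^ 2) / (4 * (-M / (4 * a))) = (B ^ 2 / M) * a := by
            field_simp
          rw [h2, h1, map_mul, qc_inv ha]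
          ring
  -- total sum over rows
  have htotal : ∀ B : ZMod p,
      ∑ a : ZMod p, ∑ b : ZMod p, e (-(b * B)) * ∑ x : F, ψ (A a * x ^ 2 + A b * x)
      = (p : ℂ) ^ m
        + G * (qc (ZMod p) (-M / 4) * qc (ZMod p) (B ^ 2 / M) * (g * g)) := by
    intro B
    rw [← Finset.add_sum_erase _ _ (Finset.mem_univ (0 : ZMod p)), hrow0 B]
    congr 1
    rw [Finset.sum_congr rfl (fun a ha =>
      hrowa B a (Finset.ne_of_mem_erase ha))]
    have hext : ∑ a ∈ Finset.univ.erase (0 : ZMod p),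
        G * (qc (ZMod p) (-M / 4) * qc (ZMod p) a * (g * e ((B ^ 2 / M) * a)))
        = ∑ a : ZMod p,
        G * (qc (ZMod p) (-M / 4) * qc (ZMod p) a * (g * e ((B ^ 2 / M) * a))) := by
      rw [← Finset.add_sum_erase _ _ (Finset.mem_univ (0 : ZMod p))]
      rw [MulChar.map_zero, mul_zero, zero_mul, mul_zero, zero_add]
    rw [hext]
    have htw := qc_twisted hZ2 he (B ^ 2 / M)
    calc ∑ a : ZMod p,
        G * (qc (ZMod p) (-M / 4) * qc (ZMod p) a * (g * e ((B ^ 2 / M) * a)))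
        = G * (qc (ZMod p) (-M / 4) * g)
            * ∑ a : ZMod p, qc (ZMod p) a * e ((B ^ 2 / M) * a) := by
          rw [Finset.mul_sum]
          exact Finset.sum_congr rfl fun a _ => by ring
      _ = G * (qc (ZMod p) (-M / 4) * g) * (qc (ZMod p) (B ^ 2 / M) * g) := by rw [htw]
      _ = G * (qc (ZMod p) (-M / 4) * qc (ZMod p) (B ^ 2 / M) * (g * g)) := by ring
  -- the master identity
  have hmaster : ∀ B : ZMod p,
      ((Finset.univ.filter (fun x : F => T (x ^ 2) = 0 ∧ T x = B)).card : ℂ) * (p : ℂ) ^ 2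
      = (p : ℂ) ^ m
        + G * (qc (ZMod p) (-M / 4) * qc (ZMod p) (B ^ 2 / M) * (g * g)) := by
    intro B
    rw [← hcount B, hswap B, htotal B]
  -- evaluate the character factor
  have hgg : g * g = qc (ZMod p) (-1) * (p : ℂ) := by
    have h := gaussSum_sq (qc_ne_one hZ2) qc_isQuadratic he
    rw [pow_two] at h
    rw [h, ZMod.card]
  have hXpos : ∀ B : ZMod p, B ≠ 0 →
      qc (ZMod p) (-M / 4) * qc (ZMod p) (B ^ 2 / M) * (g * g) = (p : ℂ) := by
    intro B hB
    have h1 : qc (ZMod p) (-M / 4) * qc (ZMod p) (B ^ 2 / M)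
        = qc (ZMod p) (-1) * qc (ZMod p) ((B / 2) ^ 2) := by
      rw [← map_mul, ← map_mul]
      congr 1
      field_simp
      ring
    have h2 : qc (ZMod p) ((B / 2) ^ 2) = 1 := by
      rw [qc_apply, quadraticChar_sq_one' (div_ne_zero hB h2Z)]
      norm_num
    rw [h1, h2, mul_one, hgg, ← mul_assoc, qc_sq_eq_one (by norm_num : (-1 : ZMod p) ≠ 0),
      one_mul]
  have hX0 : qc (ZMod p) (-M / 4) * qc (ZMod p) ((0 : ZMod p) ^ 2 / M) * (g * g) = 0 := by
    rw [show ((0 : ZMod p) ^ 2 / M) = 0 by simp, MulChar.map_zero]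
    ring
  -- finish
  have hpow : (p : ℂ) ^ m = (p : ℂ) ^ (m - 2) * (p : ℂ) ^ 2 := by
    rw [← pow_add, Nat.sub_add_cancel (by omega)]
  constructor
  · intro B hB
    have h := hmaster B
    rw [hXpos B hB] at h
    apply mul_right_cancel₀ (pow_ne_zero 2 hpC)
    rw [h, hpow, hGmG]
    field_simp
  · have h := hmaster 0
    rw [hX0] at h
    apply mul_right_cancel₀ (pow_ne_zero 2 hpC)
    rw [h, hpow]
    ring
end

section
/- Let p be an odd prime, r = p^m with m even and m ≡ 0 (mod p). For A ∈ F_p^* and B ∈ F_p, let N(A,B) = #{x ∈ F_r : Tr(x²) = A, Tr(x) = B}. Then N(A,0) = p^{m-2} - p^{-1}G_m and N(A,B) = p^{m-2} for B ≠ 0, where G_m is the quadratic Gauss sum over F_r. -/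
open Finset

/-- For `m` even with `p ∣ m` and `A ∈ F_p^*`:
`N(A,0) = p^{m-2} - p⁻¹G_m` and `N(A,B) = p^{m-2}` for `B ≠ 0`. -/
theorem stmt10 (p m : ℕ) [Fact p.Prime] (hodd : p ≠ 2) (hm : 2 < m) (hme : Even m)
    (hmp : p ∣ m)
    (F : Type) [Field F] [Fintype F] [DecidableEq F] [Algebra (ZMod p) F]
    (hcard : Fintype.card F = p ^ m)
    (ζ : ℂ) (hζ : IsPrimitiveRoot ζ p)
    (ηm : F → ℂ)
    (hηm : ∀ a : F, ηm a = if a = 0 then 0 else if IsSquare a then 1 else -1)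
    (Gm : ℂ)
    (hGm : Gm = ∑ x ∈ Finset.univ.filter (fun x : F => x ≠ 0),
        ηm x * ζ ^ (Algebra.trace (ZMod p) F x).val)
    (A : ZMod p) (hA : A ≠ 0) :
    (((Finset.univ.filter (fun x : F =>
        Algebra.trace (ZMod p) F (x ^ 2) = A ∧ Algebra.trace (ZMod p) F x = 0)).card : ℂ)
      = (p : ℂ) ^ (m - 2) - (p : ℂ)⁻¹ * Gm) ∧
    (∀ B : ZMod p, B ≠ 0 →
      ((Finset.univ.filter (fun x : F =>
          Algebra.trace (ZMod p) F (x ^ 2) = A ∧ Algebra.trace (ZMod p) F x = B)).card : ℂ)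
        = (p : ℂ) ^ (m - 2)) := by
  have hp : p.Prime := Fact.out
  haveI : NeZero p := ⟨hp.ne_zero⟩
  have hpodd : Odd p := hp.odd_of_ne_two hodd
  haveI : CharP F p := charP_of_injective_algebraMap (algebraMap (ZMod p) F).injective p
  have hF2 : ringChar F ≠ 2 := by rw [ringChar.eq F p]; exact hodd
  haveI : FiniteDimensional (ZMod p) F := Module.Finite.of_finite
  have htrsurj : Function.Surjective (Algebra.trace (ZMod p) F) := Algebra.trace_surjective _ _
  have hfinrank : Module.finrank (ZMod p) F = m := by
    have h := Module.card_eq_pow_finrank (K := ZMod p) (V := F)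
    rw [ZMod.card, hcard] at h
    exact (Nat.pow_right_injective hp.two_le h.symm)
  -- the additive character on ZMod p
  set e : AddChar (ZMod p) ℂ := AddChar.zmodChar p hζ.pow_eq_one with hedef
  have he : ∀ a : ZMod p, e a = ζ ^ a.val := fun a => rfl
  have heprim : e.IsPrimitive := AddChar.zmodChar_primitive_of_primitive_root p hζ
  have hL1 : ∀ c : ZMod p, ∑ a : ZMod p, e (a * c) = if c = 0 then (p : ℂ) else 0 := by
    intro c
    rw [AddChar.sum_mulShift c heprim, ZMod.card]
    split_ifs <;> simp
  -- the additive character on F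
  set ψ : AddChar F ℂ :=
    { toFun := fun x => e (Algebra.trace (ZMod p) F x)
      map_zero_eq_one' := by simp
      map_add_eq_mul' := by intro x y; simp [map_add, AddChar.map_add_eq_mul] } with hψdef
  have hψapp : ∀ x : F, ψ x = e (Algebra.trace (ZMod p) F x) := fun _ => rfl
  have hψne : ψ ≠ 1 := by
    obtain ⟨x, hx⟩ := htrsurj 1
    rw [AddChar.ne_one_iff]
    refine ⟨x, ?_⟩
    rw [hψapp, hx]
    intro h
    exact one_ne_zero ((heprim.zmod_char_eq_one_iff p 1).mp h)
  have hψ0 : ∑ x : F, ψ x = 0 := AddChar.sum_eq_zero_of_ne_one hψne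
  -- trace of scalars vanishes
  have htr_alg : ∀ d : ZMod p, Algebra.trace (ZMod p) F (algebraMap (ZMod p) F d) = 0 := by
    intro d
    rw [Algebra.trace_algebraMap, hfinrank, nsmul_eq_mul,
      (ZMod.natCast_eq_zero_iff m p).mpr hmp, zero_mul]
  have htr_smul : ∀ (a : ZMod p) (y : F),
      Algebra.trace (ZMod p) F (algebraMap (ZMod p) F a * y) = a * Algebra.trace (ZMod p) F y := by
    intro a y
    rw [← Algebra.smul_def, map_smul, smul_eq_mul]
  -- scalars are squares
  have hsq : ∀ a : ZMod p, a ≠ 0 → IsSquare (algebraMap (ZMod p) F a) := by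
    intro a ha
    have ha' : algebraMap (ZMod p) F a ≠ 0 := by
      simpa using ha
    rw [FiniteField.isSquare_iff hF2 ha']
    have hpow : (algebraMap (ZMod p) F a) ^ (p - 1) = 1 := by
      rw [← map_pow, ZMod.pow_card_sub_one_eq_one ha, map_one]
    obtain ⟨t, ht⟩ : (p - 1) ∣ Fintype.card F / 2 := by
      set s : ℕ := ∑ i ∈ Finset.range m, p ^ i with hsdef
      have hp1 : 1 ≤ p := hp.one_le
      have hpm : 1 ≤ p ^ m := Nat.one_le_pow _ _ hp.pos
      have hgeom : (p - 1) * s = p ^ m - 1 := by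
        have h1 : ((p:ℤ) - 1) * ((s : ℕ) : ℤ) = (p:ℤ)^m - 1 := by
          rw [hsdef]; push_cast; rw [mul_comm]; exact geom_sum_mul _ m
        zify [hp1, hpm]
        exact h1
      obtain ⟨t, ht2⟩ : 2 ∣ s := by
        apply Nat.dvd_of_mod_eq_zero
        have hterm : ∀ i ∈ Finset.range m, p ^ i % 2 = 1 % 2 := fun i _ => by
          rw [Nat.pow_mod, Nat.odd_iff.mp hpodd, one_pow]
        rw [hsdef, Finset.sum_nat_mod, Finset.sum_congr rfl hterm, Finset.sum_const,
          Finset.card_range, smul_eq_mul]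
        have := Nat.even_iff.mp hme
        omega
      refine ⟨t, ?_⟩
      rw [hcard]
      rw [ht2] at hgeom
      have h3 : (p - 1) * (2 * t) = 2 * ((p - 1) * t) := by ring
      rw [h3] at hgeom
      omega
    rw [ht, pow_mul, hpow, one_pow]
  -- Gm as a full sum
  have hGm' : (∑ z : F, ηm z * ψ z) = Gm := by
    have h1 : ∑ z ∈ univ.filter (fun z : F => z ≠ 0), ηm z * ψ z = ∑ z : F, ηm z * ψ z :=
      Finset.sum_filter_of_ne (fun z _ hz h0 => hz (by rw [h0, hηm]; simp))
    rw [← h1, hGm]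
    exact Finset.sum_congr rfl fun z _ => by rw [hψapp, he]
  -- #sqrt fibers
  have hcardsq : ∀ z : F, ((univ.filter fun y : F => y ^ 2 = z).card : ℂ) = 1 + ηm z := by
    intro z
    have h1 := quadraticChar_card_sqrts hF2 z
    have h2 : {x : F | x ^ 2 = z}.toFinset = univ.filter fun y : F => y ^ 2 = z := by
      ext y; simp
    rw [h2] at h1
    have h3 : ((quadraticChar F z : ℤ) : ℂ) = ηm z := by
      rw [hηm, quadraticChar_apply, quadraticCharFun]
      split_ifs <;> norm_num
    calc ((univ.filter fun y : F => y ^ 2 = z).card : ℂ)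
        = (((univ.filter fun y : F => y ^ 2 = z).card : ℤ) : ℂ) := by push_cast; ring
      _ = ((quadraticChar F z + 1 : ℤ) : ℂ) := by rw [h1]
      _ = 1 + ηm z := by push_cast [h3]; ring
  -- char sum for pure squares
  have hsum_sq : ∀ u : F, u ≠ 0 → IsSquare u → (∑ x : F, ψ (u * x ^ 2)) = Gm := by
    intro u hu hsqu
    obtain ⟨s, hs⟩ := hsqu
    have hs0 : s ≠ 0 := by rintro rfl; simp at hs; exact hu hs
    calc (∑ x : F, ψ (u * x ^ 2))
        = ∑ x : F, ψ ((s * x) ^ 2) := by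
          refine Finset.sum_congr rfl fun x _ => ?_; rw [hs]; ring_nf
      _ = ∑ y : F, ψ (y ^ 2) := Fintype.sum_bijective (fun x => s * x)
          (mulLeft_bijective₀ s hs0) _ _ (fun x => rfl)
      _ = ∑ z : F, ∑ y ∈ univ.filter (fun y : F => y ^ 2 = z), ψ (y ^ 2) :=
          (Finset.sum_fiberwise univ (fun y : F => y ^ 2) (fun y => ψ (y ^ 2))).symm
      _ = ∑ z : F, (1 + ηm z) * ψ z := by
          refine Finset.sum_congr rfl fun z _ => ?_
          have : ∀ y ∈ univ.filter (fun y : F => y ^ 2 = z), ψ (y ^ 2) = ψ z := by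
            intro y hy; rw [(Finset.mem_filter.mp hy).2]
          rw [Finset.sum_congr rfl this, Finset.sum_const, nsmul_eq_mul, hcardsq]
      _ = Gm := by
          simp_rw [add_mul, one_mul, Finset.sum_add_distrib, hψ0, hGm', zero_add]
  -- sum with zero quadratic part
  have hS0 : ∀ b : ZMod p, (∑ x : F, ψ (algebraMap (ZMod p) F b * x))
      = if b = 0 then ((p:ℂ)^m) else 0 := by
    intro b
    by_cases hb : b = 0
    · rw [if_pos hb, hb]
      simp only [map_zero, zero_mul, AddChar.map_zero_eq_one]
      rw [Finset.sum_const, Finset.card_univ, hcard, nsmul_eq_mul, mul_one]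
      push_cast
      ring
    · rw [if_neg hb]
      have hb' : algebraMap (ZMod p) F b ≠ 0 := by simpa using hb
      calc (∑ x : F, ψ (algebraMap (ZMod p) F b * x)) = ∑ y : F, ψ y :=
            Fintype.sum_bijective _ (mulLeft_bijective₀ _ hb') _ _ (fun x => rfl)
        _ = 0 := hψ0
  -- sum with nonzero quadratic part
  have hS : ∀ a b : ZMod p, a ≠ 0 →
      (∑ x : F, ψ (algebraMap (ZMod p) F a * x ^ 2 + algebraMap (ZMod p) F b * x)) = Gm := by
    intro a b ha
    have ha' : algebraMap (ZMod p) F a ≠ 0 := by simpa using ha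
    have h2 : (2 : F) ≠ 0 := Ring.two_ne_zero hF2
    set a' := algebraMap (ZMod p) F a with ha'd
    set b' := algebraMap (ZMod p) F b with hb'd
    set c : F := -b' / (2 * a') with hc
    set d : ZMod p := -(b ^ 2) / (4 * a) with hd
    have hmapd : algebraMap (ZMod p) F d = -(b' ^ 2) / (4 * a') := by
      rw [hd, map_div₀, map_neg, map_pow, map_mul, map_ofNat]
    have h4 : (4 : F) ≠ 0 := by
      have : (4 : F) = 2 * 2 := by norm_num
      rw [this]
      exact mul_ne_zero h2 h2
    have key : ∀ x : F, a' * (x + c) ^ 2 + b' * (x + c) = a' * x ^ 2 + algebraMap (ZMod p) F d := by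
      intro x
      rw [hmapd, hc]
      field_simp
      ring
    calc (∑ x : F, ψ (a' * x ^ 2 + b' * x))
        = ∑ x : F, ψ (a' * (x + c) ^ 2 + b' * (x + c)) :=
          (Fintype.sum_bijective (fun x : F => x + c)
            (Equiv.addRight c).bijective _ _ (fun x => rfl)).symm
      _ = ∑ x : F, ψ (a' * x ^ 2) * ψ (algebraMap (ZMod p) F d) := by
          refine Finset.sum_congr rfl fun x _ => ?_
          rw [key x, AddChar.map_add_eq_mul]
      _ = ∑ x : F, ψ (a' * x ^ 2) := by
          refine Finset.sum_congr rfl fun x _ => ?_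
          rw [hψapp (algebraMap (ZMod p) F d), htr_alg, AddChar.map_zero_eq_one, mul_one]
      _ = Gm := hsum_sq a' ha' (hsq a ha)
  -- main identity
  have main : ∀ B : ZMod p,
      (p : ℂ) ^ 2 * ((univ.filter (fun x : F =>
        Algebra.trace (ZMod p) F (x ^ 2) = A ∧ Algebra.trace (ZMod p) F x = B)).card : ℂ)
      = (p : ℂ) ^ m - (if B = 0 then (p : ℂ) else 0) * Gm := by
    intro B
    have step1 : (p : ℂ) ^ 2 * ((univ.filter (fun x : F =>
          Algebra.trace (ZMod p) F (x ^ 2) = A ∧ Algebra.trace (ZMod p) F x = B)).card : ℂ)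
        = ∑ x : F, (∑ a : ZMod p, e (a * (Algebra.trace (ZMod p) F (x ^ 2) - A)))
            * (∑ b : ZMod p, e (b * (Algebra.trace (ZMod p) F x - B))) := by
      rw [Finset.card_filter]
      push_cast
      rw [Finset.mul_sum]
      refine Finset.sum_congr rfl fun x _ => ?_
      rw [hL1, hL1]
      by_cases h1 : Algebra.trace (ZMod p) F (x ^ 2) = A <;>
        by_cases h2 : Algebra.trace (ZMod p) F x = B <;>
        simp [h1, h2, sub_eq_zero] <;> ring
    have step2 : ∀ x : F, (∑ a : ZMod p, e (a * (Algebra.trace (ZMod p) F (x ^ 2) - A)))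
        * (∑ b : ZMod p, e (b * (Algebra.trace (ZMod p) F x - B)))
        = ∑ a : ZMod p, ∑ b : ZMod p, (e (a * -A) * e (b * -B)) *
            ψ (algebraMap (ZMod p) F a * x ^ 2 + algebraMap (ZMod p) F b * x) := by
      intro x
      rw [Finset.sum_mul_sum]
      refine Finset.sum_congr rfl fun a _ => Finset.sum_congr rfl fun b _ => ?_
      rw [hψapp, map_add, htr_smul, htr_smul, AddChar.map_add_eq_mul]
      have h1 : a * (Algebra.trace (ZMod p) F (x ^ 2) - A)
          = a * -A + a * Algebra.trace (ZMod p) F (x ^ 2) := by ring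
      have h2 : b * (Algebra.trace (ZMod p) F x - B)
          = b * -B + b * Algebra.trace (ZMod p) F x := by ring
      rw [h1, h2, AddChar.map_add_eq_mul, AddChar.map_add_eq_mul]
      ring
    have hsplit : ∀ a : ZMod p, (∑ b : ZMod p, (e (a * -A) * e (b * -B)) *
        ∑ x : F, ψ (algebraMap (ZMod p) F a * x ^ 2 + algebraMap (ZMod p) F b * x))
        = if a = 0 then (p:ℂ)^m
          else e (a * -A) * ((if B = 0 then (p:ℂ) else 0) * Gm) := by
      intro a
      by_cases ha : a = 0
      · subst ha
        rw [if_pos rfl]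
        have hterm : ∀ b : ZMod p, (e ((0:ZMod p) * -A) * e (b * -B)) *
            (∑ x : F, ψ (algebraMap (ZMod p) F 0 * x ^ 2 + algebraMap (ZMod p) F b * x))
            = if b = 0 then e (b * -B) * (p:ℂ)^m else 0 := by
          intro b
          have hx : (∑ x : F, ψ (algebraMap (ZMod p) F 0 * x ^ 2 + algebraMap (ZMod p) F b * x))
              = ∑ x : F, ψ (algebraMap (ZMod p) F b * x) := by
            refine Finset.sum_congr rfl fun x _ => ?_
            rw [map_zero, zero_mul, zero_add]
          rw [hx, hS0 b, zero_mul, AddChar.map_zero_eq_one, one_mul]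
          by_cases hb : b = 0 <;> simp [hb]
        rw [Finset.sum_congr rfl fun b _ => hterm b, Finset.sum_ite_eq' univ (0 : ZMod p)
          (fun b => e (b * -B) * (p:ℂ)^m)]
        simp
      · rw [if_neg ha]
        have hterm : ∀ b : ZMod p, (e (a * -A) * e (b * -B)) *
            (∑ x : F, ψ (algebraMap (ZMod p) F a * x ^ 2 + algebraMap (ZMod p) F b * x))
            = (e (a * -A) * Gm) * e (b * -B) := by
          intro b
          rw [hS a b ha]
          ring
        rw [Finset.sum_congr rfl fun b _ => hterm b, ← Finset.mul_sum, hL1 (-B)]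
        simp only [neg_eq_zero]
        ring
    have hminus : (∑ a ∈ univ.erase (0 : ZMod p), e (a * -A)) = -1 := by
      have h0 := hL1 (-A)
      rw [if_neg (by simpa using hA)] at h0
      rw [← Finset.add_sum_erase univ (fun a : ZMod p => e (a * -A)) (Finset.mem_univ 0)] at h0
      simp only [zero_mul, AddChar.map_zero_eq_one] at h0
      exact eq_neg_of_add_eq_zero_right h0
    calc (p : ℂ) ^ 2 * ((univ.filter (fun x : F =>
          Algebra.trace (ZMod p) F (x ^ 2) = A ∧ Algebra.trace (ZMod p) F x = B)).card : ℂ)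
        = ∑ x : F, ∑ a : ZMod p, ∑ b : ZMod p, (e (a * -A) * e (b * -B)) *
            ψ (algebraMap (ZMod p) F a * x ^ 2 + algebraMap (ZMod p) F b * x) := by
          rw [step1]; exact Finset.sum_congr rfl fun x _ => step2 x
      _ = ∑ a : ZMod p, ∑ b : ZMod p, (e (a * -A) * e (b * -B)) *
            ∑ x : F, ψ (algebraMap (ZMod p) F a * x ^ 2 + algebraMap (ZMod p) F b * x) := by
          rw [Finset.sum_comm]
          refine Finset.sum_congr rfl fun a _ => ?_
          rw [Finset.sum_comm]
          refine Finset.sum_congr rfl fun b _ => ?_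
          rw [Finset.mul_sum]
      _ = ∑ a : ZMod p, (if a = 0 then (p:ℂ)^m
            else e (a * -A) * ((if B = 0 then (p:ℂ) else 0) * Gm)) :=
          Finset.sum_congr rfl fun a _ => hsplit a
      _ = (p : ℂ) ^ m - (if B = 0 then (p : ℂ) else 0) * Gm := by
          rw [← Finset.add_sum_erase univ _ (Finset.mem_univ (0 : ZMod p)), if_pos rfl]
          have : ∀ a ∈ univ.erase (0 : ZMod p), (if a = 0 then (p:ℂ)^m
              else e (a * -A) * ((if B = 0 then (p:ℂ) else 0) * Gm))
              = e (a * -A) * ((if B = 0 then (p:ℂ) else 0) * Gm) := by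
            intro a ha
            rw [if_neg (Finset.mem_erase.mp ha).1]
          rw [Finset.sum_congr rfl this, ← Finset.sum_mul, hminus]
          ring
  have hp0 : (p : ℂ) ≠ 0 := Nat.cast_ne_zero.mpr hp.ne_zero
  have hppow : (p:ℂ)^2 * (p:ℂ)^(m-2) = (p:ℂ)^m := by
    rw [← pow_add]
    congr 1
    omega
  constructor
  · have h := main 0
    rw [if_pos rfl] at h
    apply mul_left_cancel₀ (pow_ne_zero 2 hp0)
    rw [h, mul_sub, hppow]
    congr 1
    field_simp
  · intro B hB
    have h := main B
    rw [if_neg hB, zero_mul, sub_zero] at h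
    apply mul_left_cancel₀ (pow_ne_zero 2 hp0)
    rw [h, hppow]
end

section
/- Let p be an odd prime, r = p^m with m even and m_p := m mod p nonzero. For A ∈ F_p^* and B ∈ F_p, let N(A,B) = #{x ∈ F_r : Tr(x²) = A, Tr(x) = B} and Δ = B² - m_p·A in F_p. Then N(A,B) = p^{m-2} if Δ = 0, and N(A,B) = p^{m-2} + η(Δ)·p^{-1}·G_m if Δ ≠ 0, where η is the quadratic character of F_p and G_m the quadratic Gauss sum over F_r. -/
open Finset

lemma auxShiftSum {M : Type*} [AddCommGroup M] [Fintype M] (f : M → ℂ) (x₀ : M)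
    (h : ∀ x, f (x + x₀) = f x₀ * f x) (h1 : f x₀ ≠ 1) : ∑ x, f x = 0 := by
  have h3 : ∑ x, f x₀ * f x = ∑ x, f x :=
    Fintype.sum_bijective (· + x₀) (Equiv.addRight x₀).bijective _ _ (fun x => (h x).symm)
  have h4 : (f x₀ - 1) * ∑ x, f x = 0 := by
    rw [sub_mul, one_mul, Finset.mul_sum, h3, sub_self]
  rcases mul_eq_zero.mp h4 with h5 | h5
  · exact absurd (sub_eq_zero.mp h5) h1
  · exact h5

lemma auxCompleteSq {K : Type*} [Field K] [Fintype K] (Ψ : K → ℂ)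
    (hΨ : ∀ a b, Ψ (a + b) = Ψ a * Ψ b) (a b : K) (ha : a ≠ 0) (h2 : (2 : K) ≠ 0) :
    ∑ x, Ψ (a * x ^ 2 + b * x) = Ψ (-b ^ 2 / (4 * a)) * ∑ x, Ψ (a * x ^ 2) := by
  have h4 : (4 : K) ≠ 0 := by
    intro h; apply h2
    have : (4 : K) = 2 * 2 := by norm_num
    rcases mul_eq_zero.mp (this ▸ h) with h' | h' <;> exact h'
  have key : ∀ x : K, a * (x - b / (2 * a)) ^ 2 + b * (x - b / (2 * a))
      = a * x ^ 2 + -b ^ 2 / (4 * a) := by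
    intro x; field_simp; ring
  calc ∑ x, Ψ (a * x ^ 2 + b * x)
      = ∑ x, Ψ (a * (x - b / (2 * a)) ^ 2 + b * (x - b / (2 * a))) :=
        (Fintype.sum_bijective (· - b / (2 * a)) (Equiv.subRight _).bijective _ _
          (fun x => rfl)).symm
    _ = ∑ x, Ψ (-b ^ 2 / (4 * a)) * Ψ (a * x ^ 2) := by
        refine Finset.sum_congr rfl fun x _ => ?_
        rw [key x, add_comm, hΨ]
    _ = Ψ (-b ^ 2 / (4 * a)) * ∑ x, Ψ (a * x ^ 2) := by rw [Finset.mul_sum]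

lemma auxSqCount {K : Type*} [Field K] [Fintype K] [DecidableEq K] (hK : ringChar K ≠ 2)
    (f : K → ℂ) :
    ∑ x : K, f (x ^ 2) = ∑ u : K, (1 + ((quadraticChar K u : ℤ) : ℂ)) * f u := by
  have fib : ∑ x : K, f (x ^ 2)
      = ∑ u : K, ∑ x ∈ univ.filter (fun x => x ^ 2 = u), f (x ^ 2) :=
    (Finset.sum_fiberwise univ (fun x => x ^ 2) (fun x => f (x ^ 2))).symm
  rw [fib]
  refine Finset.sum_congr rfl fun u _ => ?_
  have : ∑ x ∈ univ.filter (fun x => x ^ 2 = u), f (x ^ 2)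
      = ∑ x ∈ univ.filter (fun x => x ^ 2 = u), f u := by
    refine Finset.sum_congr rfl fun x hx => ?_
    rw [(Finset.mem_filter.mp hx).2]
  rw [this, Finset.sum_const, nsmul_eq_mul]
  congr 1
  have hc := quadraticChar_card_sqrts hK u
  have hset : {x : K | x ^ 2 = u}.toFinset = univ.filter (fun x => x ^ 2 = u) := by
    ext x; simp [Set.mem_toFinset]
  rw [hset] at hc
  have : ((univ.filter (fun x : K => x ^ 2 = u)).card : ℤ) = quadraticChar K u + 1 := hc
  have h2 : ((univ.filter (fun x : K => x ^ 2 = u)).card : ℂ)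
      = (((univ.filter (fun x : K => x ^ 2 = u)).card : ℤ) : ℂ) := by push_cast; ring
  rw [h2, this]
  push_cast
  ring

lemma auxSqSum {K : Type*} [Field K] [Fintype K] [DecidableEq K] (hK : ringChar K ≠ 2)
    (Ψ : K → ℂ) (hsum : ∑ u : K, Ψ u = 0) :
    ∑ x : K, Ψ (x ^ 2) = ∑ u : K, ((quadraticChar K u : ℤ) : ℂ) * Ψ u := by
  rw [auxSqCount hK Ψ]
  simp only [add_mul, one_mul, Finset.sum_add_distrib, hsum, zero_add]

lemma auxOrth (p : ℕ) [Fact p.Prime] (ψ : AddChar (ZMod p) ℂ) (hψ : ∀ a, ψ a = 1 → a = 0)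
    (c : ZMod p) : ∑ y : ZMod p, ψ (y * c) = if c = 0 then (p : ℂ) else 0 := by
  split_ifs with h
  · subst h
    simp only [mul_zero, AddChar.map_zero_eq_one]
    rw [Finset.sum_const, Finset.card_univ, ZMod.card, nsmul_eq_mul, mul_one]
  · apply auxShiftSum (fun y => ψ (y * c)) 1
    · intro x
      rw [add_mul, one_mul, AddChar.map_add_eq_mul, mul_comm]
    · rw [one_mul]
      intro hc; exact h (hψ c hc)

lemma auxGaussShift (p : ℕ) [Fact p.Prime] (ψ : AddChar (ZMod p) ℂ) (c : ZMod p) (hc : c ≠ 0) :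
    ∑ u : ZMod p, ((quadraticChar (ZMod p) u : ℤ) : ℂ) * ψ (c * u)
      = ((quadraticChar (ZMod p) c : ℤ) : ℂ)
        * gaussSum ((quadraticChar (ZMod p)).ringHomComp (Int.castRingHom ℂ)) ψ := by
  set χ := (quadraticChar (ZMod p)).ringHomComp (Int.castRingHom ℂ) with hχ
  have hχa : ∀ a : ZMod p, χ a = ((quadraticChar (ZMod p) a : ℤ) : ℂ) := fun a => rfl
  have h1 : ∑ u : ZMod p, ((quadraticChar (ZMod p) u : ℤ) : ℂ) * ψ (c * u)
      = gaussSum χ (ψ.mulShift c) := by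
    unfold gaussSum
    refine Finset.sum_congr rfl fun u _ => ?_
    rw [AddChar.mulShift_apply, hχa]
  have hcc : χ c * χ c = 1 := by
    rw [hχa, ← Int.cast_mul, ← pow_two, quadraticChar_sq_one hc]
    norm_num
  have h2 := gaussSum_mulShift χ ψ (Units.mk0 c hc)
  have h3 : χ c * gaussSum χ (ψ.mulShift c) = gaussSum χ ψ := h2
  calc ∑ u : ZMod p, ((quadraticChar (ZMod p) u : ℤ) : ℂ) * ψ (c * u)
      = gaussSum χ (ψ.mulShift c) := h1
    _ = (χ c * χ c) * gaussSum χ (ψ.mulShift c) := by rw [hcc, one_mul]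
    _ = χ c * gaussSum χ ψ := by rw [mul_assoc, h3]

/-- For `m` even with `p ∤ m`, `A ∈ F_p^*`, `B ∈ F_p`, `Δ = B² - m_p·A`:
`N(A,B) = p^{m-2}` if `Δ = 0`, and `N(A,B) = p^{m-2} + η(Δ)p⁻¹G_m` if `Δ ≠ 0`. -/
theorem stmt11 (p m : ℕ) [Fact p.Prime] (hodd : p ≠ 2) (hm : 2 < m) (hme : Even m)
    (hmp : ¬ p ∣ m)
    (F : Type) [Field F] [Fintype F] [DecidableEq F] [Algebra (ZMod p) F]
    (hcard : Fintype.card F = p ^ m)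
    (ζ : ℂ) (hζ : IsPrimitiveRoot ζ p)
    (ηm : F → ℂ)
    (hηm : ∀ a : F, ηm a = if a = 0 then 0 else if IsSquare a then 1 else -1)
    (η : ZMod p → ℂ)
    (hη : ∀ a : ZMod p, η a = if a = 0 then 0 else if IsSquare a then 1 else -1)
    (Gm : ℂ)
    (hGm : Gm = ∑ x ∈ Finset.univ.filter (fun x : F => x ≠ 0),
        ηm x * ζ ^ (Algebra.trace (ZMod p) F x).val)
    (A B : ZMod p) (hA : A ≠ 0) :
    (B ^ 2 - (m : ZMod p) * A = 0 →
      ((Finset.univ.filter (fun x : F =>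
          Algebra.trace (ZMod p) F (x ^ 2) = A ∧ Algebra.trace (ZMod p) F x = B)).card : ℂ)
        = (p : ℂ) ^ (m - 2)) ∧
    (B ^ 2 - (m : ZMod p) * A ≠ 0 →
      ((Finset.univ.filter (fun x : F =>
          Algebra.trace (ZMod p) F (x ^ 2) = A ∧ Algebra.trace (ZMod p) F x = B)).card : ℂ)
        = (p : ℂ) ^ (m - 2) + η (B ^ 2 - (m : ZMod p) * A) * (p : ℂ)⁻¹ * Gm) := by
  have hp : p.Prime := Fact.out
  have hpC : (p : ℂ) ≠ 0 := Nat.cast_ne_zero.mpr hp.pos.ne'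
  have hchZ2 : ringChar (ZMod p) ≠ 2 := by rw [ZMod.ringChar_zmod_n]; exact hodd
  have h2Z : (2 : ZMod p) ≠ 0 := by
    intro h
    have h2 : ((2 : ℕ) : ZMod p) = 0 := by exact_mod_cast h
    rw [ZMod.natCast_eq_zero_iff] at h2
    exact hodd ((Nat.prime_dvd_prime_iff_eq hp Nat.prime_two).mp h2)
  have hmZ : (m : ZMod p) ≠ 0 := by
    rw [Ne, ZMod.natCast_eq_zero_iff]; exact hmp
  have hinj : Function.Injective (algebraMap (ZMod p) F) := (algebraMap (ZMod p) F).injective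
  haveI : CharP F p := charP_of_injective_algebraMap hinj p
  have hchF : ringChar F = p := ringChar.eq F p
  have hchF2 : ringChar F ≠ 2 := by rw [hchF]; exact hodd
  haveI : Module.Finite (ZMod p) F := Module.finite_iff_finite.mpr inferInstance
  have hrank : Module.finrank (ZMod p) F = m := by
    have h := Module.card_eq_pow_finrank (K := ZMod p) (V := F)
    rw [ZMod.card, hcard] at h
    exact (Nat.pow_right_injective hp.two_le h.symm)
  set T : F → ZMod p := ⇑(Algebra.trace (ZMod p) F) with hT
  -- the additive character
  set ψp : AddChar (ZMod p) ℂ := AddChar.zmodChar p hζ.pow_eq_one with hψpdef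
  have hψprim : ψp.IsPrimitive := AddChar.zmodChar_primitive_of_primitive_root p hζ
  have hψp1 : ∀ a, ψp a = 1 → a = 0 := fun a ha =>
    (AddChar.IsPrimitive.zmod_char_eq_one_iff p hψprim a).mp ha
  -- the multiplicative character
  set χ : MulChar (ZMod p) ℂ := (quadraticChar (ZMod p)).ringHomComp (Int.castRingHom ℂ)
    with hχdef
  have hχa : ∀ a : ZMod p, χ a = ((quadraticChar (ZMod p) a : ℤ) : ℂ) := fun a => rfl
  have hηχ : ∀ a : ZMod p, η a = χ a := by
    intro a
    rw [hη a, hχa, quadraticChar_apply, quadraticCharFun]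
    split_ifs <;> norm_num
  have hχ1 : χ ≠ 1 := by
    obtain ⟨a, ha⟩ := FiniteField.exists_nonsquare hchZ2
    have ha0 : a ≠ 0 := by rintro rfl; exact ha (IsSquare.zero)
    intro h
    have h1 : χ a = 1 := by
      rw [h]; exact MulChar.one_apply_coe (Units.mk0 a ha0)
    rw [hχa, quadraticChar_neg_one_iff_not_isSquare.mpr ha] at h1
    norm_num at h1
  have hχsq : ∀ u : ZMod p, u ≠ 0 → χ u * χ u = 1 := by
    intro u hu
    rw [hχa, ← Int.cast_mul, ← pow_two, quadraticChar_sq_one hu]; norm_num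
  have hχmul : ∀ u v : ZMod p, χ (u * v) = χ u * χ v := fun u v => map_mul χ u v
  have hχinv : ∀ u : ZMod p, u ≠ 0 → χ u⁻¹ = χ u := by
    intro u hu
    have h1 : χ u⁻¹ * χ u = 1 := by rw [← hχmul, inv_mul_cancel₀ hu, map_one]
    have h2 := hχsq u hu
    have hu0 : χ u ≠ 0 := by
      rw [hχa, Int.cast_ne_zero]; exact fun h => hu (quadraticChar_eq_zero_iff.mp h)
    exact mul_right_cancel₀ hu0 (h1.trans h2.symm)
  set g : ℂ := gaussSum χ ψp with hgdef
  have hgsq : g ^ 2 = χ (-1) * p := by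
    have := gaussSum_sq hχ1 ((quadraticChar_isQuadratic (ZMod p)).comp (Int.castRingHom ℂ))
      hψprim
    rwa [ZMod.card] at this
  -- trace facts
  haveI : Algebra.IsAlgebraic (ZMod p) F := Algebra.IsAlgebraic.of_finite _ _
  have htr0 : ∃ x₀ : F, T x₀ ≠ 0 := by
    by_contra h
    push_neg at h
    exact Algebra.trace_ne_zero (ZMod p) F (LinearMap.ext fun x => by simpa using h x)
  have hTadd : ∀ x y : F, T (x + y) = T x + T y := fun x y => map_add _ x y
  have hTsmul : ∀ (c : ZMod p) (x : F), T (algebraMap (ZMod p) F c * x) = c * T x := by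
    intro c x
    rw [hT]
    simp only [← Algebra.smul_def, map_smul, smul_eq_mul]
  have hTalg : ∀ c : ZMod p, T (algebraMap (ZMod p) F c) = (m : ZMod p) * c := by
    intro c
    rw [hT]
    simp only [Algebra.trace_algebraMap, hrank, nsmul_eq_mul]
  have hTsum : ∀ z : ZMod p, ∑ x : F, ψp (z * T x) = if z = 0 then ((p : ℂ)) ^ m else 0 := by
    intro z
    split_ifs with h
    · subst h
      simp only [zero_mul, AddChar.map_zero_eq_one]
      rw [Finset.sum_const, Finset.card_univ, hcard, nsmul_eq_mul, mul_one]
      push_cast; ring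
    · obtain ⟨x₀, hx₀⟩ := htr0
      apply auxShiftSum (fun x => ψp (z * T x)) x₀
      · intro x
        rw [hTadd, mul_add, AddChar.map_add_eq_mul, mul_comm]
      · intro hc
        exact mul_ne_zero h hx₀ (hψp1 _ hc)
  -- elements of ZMod p are squares in F
  have hsqF : ∀ y : ZMod p, y ≠ 0 → IsSquare (algebraMap (ZMod p) F y) := by
    intro y hy
    have hy0 : algebraMap (ZMod p) F y ≠ 0 := fun h => hy (hinj (by simpa using h))
    rw [FiniteField.isSquare_iff hchF2 hy0]
    obtain ⟨k, hk⟩ := hme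
    have hmk : m = 2 * k := by omega
    have hd1 : p ^ 2 - 1 ∣ p ^ m - 1 := by
      have h := Nat.sub_dvd_pow_sub_pow (p ^ 2) 1 k
      rwa [one_pow, ← pow_mul, ← hmk] at h
    have hd2 : (p - 1) * 2 ∣ p ^ 2 - 1 := by
      have hpo : Odd p := hp.odd_of_ne_two hodd
      obtain ⟨t, ht⟩ := hpo
      refine ⟨t + 1, ?_⟩
      have hsq : p ^ 2 = 4 * t ^ 2 + 4 * t + 1 := by subst ht; ring
      have hexp : (p - 1) * 2 * (t + 1) = (p - 1) * (2 * t + 2) := by ring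
      rw [hexp]
      subst ht
      have h1 : 2 * t + 1 - 1 = 2 * t := by omega
      rw [h1]
      have : 2 * t * (2 * t + 2) = 4 * t ^ 2 + 4 * t := by ring
      omega
    obtain ⟨s, hs⟩ := hd2.trans hd1
    have hps : 1 ≤ p ^ m := Nat.one_le_pow _ _ hp.pos
    have hs2 : p ^ m - 1 = 2 * ((p - 1) * s) := by rw [hs]; ring
    have hcard2 : Fintype.card F / 2 = (p - 1) * s := by
      rw [hcard]
      have hodd' : Odd (p ^ m) := (hp.odd_of_ne_two hodd).pow
      obtain ⟨t, ht⟩ := hodd'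
      set w := (p - 1) * s
      omega
    rw [hcard2, pow_mul, ← map_pow, ZMod.pow_card_sub_one_eq_one hy, map_one,
      one_pow]
  -- Gm as a full sum
  have hηmχ : ∀ a : F, ηm a = ((quadraticChar F a : ℤ) : ℂ) := by
    intro a
    rw [hηm a, quadraticChar_apply, quadraticCharFun]
    split_ifs <;> norm_num
  have hGm' : Gm = ∑ x : F, ((quadraticChar F x : ℤ) : ℂ) * ψp (T x) := by
    rw [hGm]
    rw [show (∑ x ∈ Finset.univ.filter (fun x : F => x ≠ 0),
        ηm x * ζ ^ (Algebra.trace (ZMod p) F x).val)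
      = ∑ x ∈ Finset.univ.filter (fun x : F => x ≠ 0),
        ((quadraticChar F x : ℤ) : ℂ) * ψp (T x) from
      Finset.sum_congr rfl fun x _ => by rw [hηmχ x]; rfl]
    apply Finset.sum_filter_of_ne
    intro x _ hx
    intro hx0
    apply hx
    rw [hx0]
    simp
  -- sum of ψp ∘ T over F vanishes
  have hsumT : ∑ u : F, ψp (T u) = 0 := by
    have h := hTsum 1
    simp only [one_mul, if_neg (one_ne_zero : (1 : ZMod p) ≠ 0)] at h
    exact h
  -- the F-level Gauss sum evaluation
  have hQa : ∀ y : ZMod p, y ≠ 0 →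
      ∑ x : F, ψp (T (algebraMap (ZMod p) F y * x ^ 2)) = Gm := by
    intro y hy
    obtain ⟨w, hw⟩ := hsqF y hy
    have hw0 : w ≠ 0 := by
      rintro rfl
      rw [mul_zero] at hw
      exact hy (hinj (by simpa using hw))
    have step1 : ∑ x : F, ψp (T (algebraMap (ZMod p) F y * x ^ 2))
        = ∑ x : F, ψp (T ((w * x) ^ 2)) := by
      refine Finset.sum_congr rfl fun x _ => ?_
      rw [hw]; ring_nf
    have step2 : ∑ x : F, ψp (T ((w * x) ^ 2)) = ∑ x : F, ψp (T (x ^ 2)) :=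
      Fintype.sum_bijective (w * ·) (mulLeft_bijective₀ w hw0) _ _ (fun x => rfl)
    have step3 : ∑ x : F, ψp (T (x ^ 2))
        = ∑ u : F, ((quadraticChar F u : ℤ) : ℂ) * ψp (T u) :=
      auxSqSum hchF2 (fun u => ψp (T u)) hsumT
    rw [step1, step2, step3, ← hGm']
  -- the ZMod p-level weighted character sum
  have hL4 : ∀ D : ZMod p, ∑ y : ZMod p, χ y * ψp (y * D)
      = if D = 0 then 0 else χ D * g := by
    intro D
    split_ifs with h
    · subst h
      simp only [mul_zero, AddChar.map_zero_eq_one, mul_one]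
      exact MulChar.sum_eq_zero_of_ne_one hχ1
    · have h1 := auxGaussShift p ψp D h
      calc ∑ y : ZMod p, χ y * ψp (y * D)
          = ∑ y : ZMod p, ((quadraticChar (ZMod p) y : ℤ) : ℂ) * ψp (D * y) := by
            refine Finset.sum_congr rfl fun y _ => by rw [hχa, mul_comm y D]
        _ = χ D * g := by rw [h1, hχa, hgdef]
  -- ZMod p-level quadratic exponential sum
  have hZsq : ∀ c : ZMod p, c ≠ 0 → ∑ z : ZMod p, ψp (c * z ^ 2) = χ c * g := by
    intro c hc
    have hsum0 : ∑ u : ZMod p, ψp (c * u) = 0 := by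
      have h := auxOrth p ψp hψp1 c
      rw [if_neg hc] at h
      calc ∑ u : ZMod p, ψp (c * u) = ∑ u : ZMod p, ψp (u * c) := by
            refine Finset.sum_congr rfl fun u _ => by rw [mul_comm]
        _ = 0 := h
    have h1 := auxSqSum hchZ2 (fun u => ψp (c * u)) hsum0
    have h2 := auxGaussShift p ψp c hc
    rw [h1, h2, hχa, hgdef]
  have h4Z : (4 : ZMod p) ≠ 0 := by
    intro h
    apply h2Z
    have h44 : (4 : ZMod p) = 2 * 2 := by norm_num
    rcases mul_eq_zero.mp (h44 ▸ h) with h' | h' <;> exact h'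
  set Δ : ZMod p := B ^ 2 - (m : ZMod p) * A with hΔdef
  set D : ZMod p := Δ / (m : ZMod p) with hDdef
  set Nc : ℂ := ((Finset.univ.filter (fun x : F => T (x ^ 2) = A ∧ T x = B)).card : ℂ) with hNc
  -- Step A : orthogonality
  have stepA : (p : ℂ) ^ 2 * Nc = ∑ x : F,
      (∑ y : ZMod p, ψp (y * (T (x ^ 2) - A))) * (∑ z : ZMod p, ψp (z * (T x - B))) := by
    have hterm : ∀ x : F,
        (∑ y : ZMod p, ψp (y * (T (x ^ 2) - A))) * (∑ z : ZMod p, ψp (z * (T x - B)))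
        = if T (x ^ 2) = A ∧ T x = B then (p : ℂ) ^ 2 else 0 := by
      intro x
      rw [auxOrth p ψp hψp1, auxOrth p ψp hψp1]
      by_cases h1 : T (x ^ 2) = A <;> by_cases h2 : T x = B
      · rw [if_pos (sub_eq_zero.mpr h1), if_pos (sub_eq_zero.mpr h2), if_pos ⟨h1, h2⟩]; ring
      · rw [if_neg (fun hc => h2 (sub_eq_zero.mp hc)), mul_zero,
          if_neg (fun hc => h2 hc.2)]
      · rw [if_neg (fun hc => h1 (sub_eq_zero.mp hc)), zero_mul,
          if_neg (fun hc => h1 hc.1)]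
      · rw [if_neg (fun hc => h1 (sub_eq_zero.mp hc)), zero_mul,
          if_neg (fun hc => h1 hc.1)]
    rw [Finset.sum_congr rfl (fun x _ => hterm x), Finset.sum_ite, Finset.sum_const_zero,
      Finset.sum_const, add_zero, nsmul_eq_mul, hNc, mul_comm]
  -- pointwise rearrangement
  have key : ∀ (y z : ZMod p) (x : F),
      ψp (y * (T (x ^ 2) - A)) * ψp (z * (T x - B))
      = ψp (-(y * A) + -(z * B)) *
        ψp (T (algebraMap (ZMod p) F y * x ^ 2 + algebraMap (ZMod p) F z * x)) := by
    intro y z x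
    rw [← AddChar.map_add_eq_mul, ← AddChar.map_add_eq_mul]
    congr 1
    rw [hTadd, hTsmul, hTsmul]
    ring
  -- Step AB : swap sums
  have stepAB : (p : ℂ) ^ 2 * Nc = ∑ y : ZMod p, ∑ z : ZMod p,
      ψp (-(y * A) + -(z * B)) *
        ∑ x : F, ψp (T (algebraMap (ZMod p) F y * x ^ 2 + algebraMap (ZMod p) F z * x)) := by
    rw [stepA]
    calc ∑ x : F, (∑ y : ZMod p, ψp (y * (T (x ^ 2) - A))) * (∑ z : ZMod p, ψp (z * (T x - B)))
        = ∑ x : F, ∑ y : ZMod p, ∑ z : ZMod p,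
            ψp (y * (T (x ^ 2) - A)) * ψp (z * (T x - B)) := by
          exact Finset.sum_congr rfl fun x _ => Finset.sum_mul_sum _ _ _ _
      _ = ∑ y : ZMod p, ∑ x : F, ∑ z : ZMod p,
            ψp (y * (T (x ^ 2) - A)) * ψp (z * (T x - B)) := Finset.sum_comm
      _ = ∑ y : ZMod p, ∑ z : ZMod p, ∑ x : F,
            ψp (y * (T (x ^ 2) - A)) * ψp (z * (T x - B)) := by
          exact Finset.sum_congr rfl fun y _ => Finset.sum_comm
      _ = ∑ y : ZMod p, ∑ z : ZMod p, ψp (-(y * A) + -(z * B)) *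
            ∑ x : F, ψp (T (algebraMap (ZMod p) F y * x ^ 2 + algebraMap (ZMod p) F z * x)) := by
          refine Finset.sum_congr rfl fun y _ => Finset.sum_congr rfl fun z _ => ?_
          rw [Finset.sum_congr rfl (fun x _ => key y z x), ← Finset.mul_sum]
  -- y = 0 contribution
  have hy0 : ∑ z : ZMod p, ψp (-((0 : ZMod p) * A) + -(z * B)) *
      ∑ x : F, ψp (T (algebraMap (ZMod p) F (0 : ZMod p) * x ^ 2
        + algebraMap (ZMod p) F z * x)) = (p : ℂ) ^ m := by
    have hQ0 : ∀ z : ZMod p, ∑ x : F, ψp (T (algebraMap (ZMod p) F (0 : ZMod p) * x ^ 2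
        + algebraMap (ZMod p) F z * x)) = if z = 0 then (p : ℂ) ^ m else 0 := by
      intro z
      calc ∑ x : F, ψp (T (algebraMap (ZMod p) F (0 : ZMod p) * x ^ 2
            + algebraMap (ZMod p) F z * x))
          = ∑ x : F, ψp (z * T x) := by
            refine Finset.sum_congr rfl fun x _ => ?_
            rw [map_zero, zero_mul, zero_add, hTsmul]
        _ = _ := hTsum z
    rw [Finset.sum_congr rfl (fun z _ => by rw [hQ0 z])]
    rw [Finset.sum_eq_single (0 : ZMod p)
      (fun b _ hb => by rw [if_neg hb, mul_zero])
      (fun h => absurd (Finset.mem_univ (0 : ZMod p)) h)]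
    simp
  have h2F : (2 : F) ≠ 0 := by
    intro h
    apply h2Z
    apply hinj
    rw [map_ofNat, map_zero]
    exact_mod_cast h
  -- y ≠ 0 contribution
  have hyne : ∀ y : ZMod p, y ≠ 0 →
      ∑ z : ZMod p, ψp (-(y * A) + -(z * B)) *
        ∑ x : F, ψp (T (algebraMap (ZMod p) F y * x ^ 2 + algebraMap (ZMod p) F z * x))
      = Gm * g * χ (-(m : ZMod p)) * (χ y * ψp (y * D)) := by
    intro y hy
    have hay : algebraMap (ZMod p) F y ≠ 0 := fun h => hy (hinj (by simpa using h))
    have h4y : (4 : ZMod p) * y ≠ 0 := mul_ne_zero h4Z hy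
    set c : ZMod p := -(m : ZMod p) / (4 * y) with hcdef
    have hc0 : c ≠ 0 := div_ne_zero (neg_ne_zero.mpr hmZ) h4y
    have hQ : ∀ z : ZMod p,
        ∑ x : F, ψp (T (algebraMap (ZMod p) F y * x ^ 2 + algebraMap (ZMod p) F z * x))
        = ψp ((m : ZMod p) * (-(z ^ 2) / (4 * y))) * Gm := by
      intro z
      have hcs := auxCompleteSq (fun u => ψp (T u))
        (fun a b => by
          show ψp (T (a + b)) = ψp (T a) * ψp (T b)
          rw [hTadd, AddChar.map_add_eq_mul])
        (algebraMap (ZMod p) F y) (algebraMap (ZMod p) F z) hay h2F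
      rw [hcs, hQa y hy]
      congr 1
      have halg : -(algebraMap (ZMod p) F z) ^ 2 / (4 * algebraMap (ZMod p) F y)
          = algebraMap (ZMod p) F (-(z ^ 2) / (4 * y)) := by
        rw [map_div₀, map_neg, map_pow, map_mul, map_ofNat]
      rw [halg]
      show ψp (T (algebraMap (ZMod p) F (-(z ^ 2) / (4 * y)))) = _
      rw [hTalg]
    have hstep : ∑ z : ZMod p, ψp (-(y * A) + -(z * B)) *
        ∑ x : F, ψp (T (algebraMap (ZMod p) F y * x ^ 2 + algebraMap (ZMod p) F z * x))
        = Gm * ψp (-(y * A)) * ∑ z : ZMod p, ψp (c * z ^ 2 + -B * z) := by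
      rw [Finset.mul_sum]
      refine Finset.sum_congr rfl fun z _ => ?_
      rw [hQ z]
      have hexp : (-(y * A) + -(z * B)) + (m : ZMod p) * (-(z ^ 2) / (4 * y))
          = -(y * A) + (c * z ^ 2 + -B * z) := by
        rw [hcdef]
        field_simp
        ring
      have hsplit : ∀ u v : ZMod p, ψp (u + v) = ψp u * ψp v :=
        fun u v => AddChar.map_add_eq_mul ψp u v
      calc ψp (-(y * A) + -(z * B)) * (ψp ((m : ZMod p) * (-(z ^ 2) / (4 * y))) * Gm)
          = ψp ((-(y * A) + -(z * B)) + (m : ZMod p) * (-(z ^ 2) / (4 * y))) * Gm := by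
            rw [hsplit (-(y * A) + -(z * B)) ((m : ZMod p) * (-(z ^ 2) / (4 * y)))]; ring
        _ = ψp (-(y * A) + (c * z ^ 2 + -B * z)) * Gm := by rw [hexp]
        _ = Gm * ψp (-(y * A)) * (ψp (c * z ^ 2 + -B * z)) := by
            rw [hsplit (-(y * A)) (c * z ^ 2 + -B * z)]; ring
    have hzsum : ∑ z : ZMod p, ψp (c * z ^ 2 + -B * z)
        = ψp (-(-B) ^ 2 / (4 * c)) * (χ c * g) := by
      rw [auxCompleteSq (fun u => ψp u) (fun a b => AddChar.map_add_eq_mul ψp a b)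
        c (-B) hc0 h2Z, hZsq c hc0]
    have hχc : χ c = χ (-(m : ZMod p)) * χ y := by
      rw [hcdef, div_eq_mul_inv, hχmul, hχinv _ h4y, hχmul]
      have h4sq : χ (4 : ZMod p) = 1 := by
        have h44 : (4 : ZMod p) = 2 ^ 2 := by norm_num
        rw [h44, hχa, quadraticChar_sq_one' h2Z]; norm_num
      rw [h4sq, one_mul]
    have hexp2 : -(y * A) + -(-B) ^ 2 / (4 * c) = y * D := by
      rw [hcdef, hDdef, hΔdef]
      field_simp
      ring
    rw [hstep, hzsum, hχc, ← hexp2, AddChar.map_add_eq_mul]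
    ring
  -- assembling the main identity
  have main : (p : ℂ) ^ 2 * Nc
      = (p : ℂ) ^ m + Gm * g * χ (-(m : ZMod p)) * (if D = 0 then 0 else χ D * g) := by
    rw [stepAB]
    rw [← Finset.add_sum_erase Finset.univ _ (Finset.mem_univ (0 : ZMod p)), hy0]
    congr 1
    rw [Finset.sum_congr rfl (fun y hy => hyne y (Finset.ne_of_mem_erase hy)),
      ← Finset.mul_sum]
    congr 1
    have h := hL4 D
    rw [← Finset.add_sum_erase Finset.univ (fun y => χ y * ψp (y * D))
      (Finset.mem_univ (0 : ZMod p)),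
      show χ (0 : ZMod p) * ψp ((0 : ZMod p) * D) = 0 from by
        rw [hχa, quadraticChar_zero]; norm_num,
      zero_add] at h
    exact h
  have hp2C : (p : ℂ) ^ 2 ≠ 0 := pow_ne_zero 2 hpC
  have hpm : (p : ℂ) ^ m = (p : ℂ) ^ 2 * (p : ℂ) ^ (m - 2) := by
    rw [← pow_add]
    congr 1
    omega
  constructor
  · intro hΔ0
    have hD0 : D = 0 := by rw [hDdef, hΔ0, zero_div]
    rw [if_pos hD0, mul_zero, add_zero, hpm] at main
    exact mul_left_cancel₀ hp2C main.symm |>.symm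
  · intro hΔ0
    have hD0 : D ≠ 0 := div_ne_zero hΔ0 hmZ
    rw [if_neg hD0] at main
    have hm0 : (-1 : ZMod p) ≠ 0 := neg_ne_zero.mpr one_ne_zero
    have hchain : Gm * g * χ (-(m : ZMod p)) * (χ D * g) = χ Δ * (p : ℂ) * Gm := by
      have h1 : χ (-(m : ZMod p)) = χ (-1) * χ (m : ZMod p) := by
        rw [← hχmul]; congr 1; ring
      have h2 : χ D = χ Δ * χ (m : ZMod p) := by
        rw [hDdef, div_eq_mul_inv, hχmul, hχinv _ hmZ]
      have h3 : g * g = χ (-1) * (p : ℂ) := by rw [← pow_two]; exact hgsq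
      calc Gm * g * χ (-(m : ZMod p)) * (χ D * g)
          = (g * g) * (χ (-1) * (χ (m : ZMod p) * χ (m : ZMod p))) * χ Δ * Gm := by
            rw [h1, h2]; ring
        _ = (χ (-1) * (p : ℂ)) * (χ (-1) * 1) * χ Δ * Gm := by
            rw [h3, hχsq _ hmZ]
        _ = ((χ (-1) * χ (-1)) * (p : ℂ)) * χ Δ * Gm := by ring
        _ = χ Δ * (p : ℂ) * Gm := by rw [hχsq _ hm0]; ring
    rw [hchain] at main
    apply mul_left_cancel₀ hp2C
    rw [main, hpm, hηχ]
    field_simp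
end

section
/- Let p be an odd prime, r = p^m with m odd and m ≡ 0 (mod p). For A ∈ F_p^* and B ∈ F_p, let N(A,B) = #{x ∈ F_r : Tr(x²) = A, Tr(x) = B}. Then N(A,0) = p^{m-2} + η(-A)·p^{-1}·G_m·G and N(A,B) = p^{m-2} for B ≠ 0, where η is the quadratic character of F_p, G its Gauss sum over F_p, and G_m the quadratic Gauss sum over F_r. -/
lemma aux_e_add {p : ℕ} [NeZero p] {ζ : ℂ} (hζ : IsPrimitiveRoot ζ p) (a b : ZMod p) :
    ζ ^ (a + b).val = ζ ^ a.val * ζ ^ b.val := by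
  rw [← pow_add, ZMod.val_add]
  exact (pow_eq_pow_mod _ hζ.pow_eq_one).symm

lemma aux_e_sum {p : ℕ} [Fact p.Prime] {ζ : ℂ} (hζ : IsPrimitiveRoot ζ p) :
    ∑ a : ZMod p, ζ ^ a.val = 0 := by
  have h := hζ.geom_sum_eq_zero (Fact.out (p := p.Prime)).one_lt
  rw [← h]
  exact Finset.sum_nbij' (fun a => a.val) (fun i => (i : ZMod p))
    (by intro a _; simpa using a.val_lt) (by intros; simp)
    (by intro a _; simp [ZMod.natCast_val]) (by
      intro i hi
      simp only [Finset.mem_range] at hi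
      exact ZMod.val_cast_of_lt hi) (by intros; rfl)

lemma aux_orth {p : ℕ} [Fact p.Prime] {ζ : ℂ} (hζ : IsPrimitiveRoot ζ p) (t : ZMod p) :
    ∑ y : ZMod p, ζ ^ (y * t).val = if t = 0 then (p : ℂ) else 0 := by
  split_ifs with ht
  · subst ht; simp [ZMod.card]
  · rw [← aux_e_sum hζ]
    exact Fintype.sum_equiv (Equiv.mulRight₀ t ht) _ _ (fun y => rfl)

lemma aux_fiber (p m : ℕ) [Fact p.Prime] (hm : 0 < m)
    (F : Type) [Field F] [Fintype F] [DecidableEq F] [Algebra (ZMod p) F]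
    (hcard : Fintype.card F = p ^ m) (t : ZMod p) :
    (Finset.univ.filter (fun x : F => Algebra.trace (ZMod p) F x = t)).card = p ^ (m - 1) := by
  have hsurj := Algebra.trace_surjective (ZMod p) F
  have hconst : ∀ s : ZMod p,
      (Finset.univ.filter (fun x : F => Algebra.trace (ZMod p) F x = s)).card
      = (Finset.univ.filter (fun x : F => Algebra.trace (ZMod p) F x = 0)).card := by
    intro s
    obtain ⟨xs, hxs⟩ := hsurj s
    apply Finset.card_bij' (fun a _ => a - xs) (fun b _ => b + xs)
    · intro a ha
      simp only [Finset.mem_filter, Finset.mem_univ, true_and] at ha ⊢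
      rw [map_sub, ha, hxs, sub_self]
    · intro b hb
      simp only [Finset.mem_filter, Finset.mem_univ, true_and] at hb ⊢
      rw [map_add, hb, hxs, zero_add]
    · intros; ring
    · intros; ring
  have hpart := Finset.card_eq_sum_card_fiberwise
    (f := fun x : F => Algebra.trace (ZMod p) F x) (s := Finset.univ) (t := Finset.univ)
    (fun x _ => Finset.mem_univ _)
  rw [Finset.card_univ, hcard] at hpart
  rw [Finset.sum_congr rfl (fun s _ => hconst s), Finset.sum_const, Finset.card_univ,
    ZMod.card, smul_eq_mul] at hpart
  have hppos : 0 < p := (Fact.out (p := p.Prime)).pos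
  have : p ^ m = p * p ^ (m - 1) := by
    rw [← pow_succ']
    congr 1
    omega
  rw [this] at hpart
  have := Nat.eq_of_mul_eq_mul_left hppos hpart
  rw [hconst t, ← this]

lemma aux_finrank (p m : ℕ) [Fact p.Prime]
    (F : Type) [Field F] [Fintype F] [Algebra (ZMod p) F]
    (hcard : Fintype.card F = p ^ m) : Module.finrank (ZMod p) F = m := by
  have h := Module.card_eq_pow_finrank (K := ZMod p) (V := F)
  rw [ZMod.card, hcard] at h
  exact (Nat.pow_right_injective (Fact.out (p := p.Prime)).two_le h.symm)

lemma aux_trace_const (p m : ℕ) [Fact p.Prime] (hmp : p ∣ m)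
    (F : Type) [Field F] [Fintype F] [Algebra (ZMod p) F]
    (hcard : Fintype.card F = p ^ m) (c : ZMod p) :
    Algebra.trace (ZMod p) F (algebraMap (ZMod p) F c) = 0 := by
  rw [Algebra.trace_algebraMap, aux_finrank p m F hcard, nsmul_eq_mul,
    (ZMod.natCast_eq_zero_iff m p).2 hmp, zero_mul]

lemma aux_geom (p m : ℕ) (hp : 0 < p) : p ^ m = (p - 1) * (∑ i ∈ Finset.range m, p ^ i) + 1 := by
  have h : ((p : ℤ) - 1) * (∑ i ∈ Finset.range m, (p : ℤ) ^ i) = (p : ℤ) ^ m - 1 := by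
    rw [mul_comm]; exact geom_sum_mul _ _
  have : ((p : ℤ) ^ m) = ((p - 1 : ℕ) : ℤ) * ((∑ i ∈ Finset.range m, p ^ i : ℕ) : ℤ) + 1 := by
    push_cast [Nat.cast_sub hp]
    omega
  exact_mod_cast this

lemma aux_k_odd (p m : ℕ) (hp : p % 2 = 1) (hmo : Odd m) :
    Odd (∑ i ∈ Finset.range m, p ^ i) := by
  rw [Nat.odd_iff, Finset.sum_nat_mod]
  have : ∀ i ∈ Finset.range m, p ^ i % 2 = 1 := by
    intro i _; rw [Nat.pow_mod, hp, one_pow]; rfl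
  rw [Finset.sum_congr rfl this, Finset.sum_const, Finset.card_range, smul_eq_mul, mul_one]
  exact Nat.odd_iff.mp hmo

lemma aux_sq_iff (p m : ℕ) [Fact p.Prime] (hodd : p ≠ 2) (hmo : Odd m)
    (F : Type) [Field F] [Fintype F] [Algebra (ZMod p) F]
    (hcard : Fintype.card F = p ^ m) (y : ZMod p) (hy : y ≠ 0) :
    IsSquare (algebraMap (ZMod p) F y) ↔ IsSquare y := by
  have hp := Fact.out (p := p.Prime)
  have hp2 : 2 < p := hp.two_le.lt_of_ne (Ne.symm hodd)
  have hpm : p % 2 = 1 := Nat.odd_iff.mp (hp.odd_of_ne_two hodd)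
  haveI : CharP F p := charP_of_injective_algebraMap (algebraMap (ZMod p) F).injective p
  have hrc : ringChar F = p := ringChar.eq F p
  have hF2 : ringChar F ≠ 2 := by rw [hrc]; exact hodd
  have hZ2 : ringChar (ZMod p) ≠ 2 := by rw [ZMod.ringChar_zmod_n]; exact hodd
  have hινz : algebraMap (ZMod p) F y ≠ 0 := by
    simpa using (map_ne_zero_iff _ (algebraMap (ZMod p) F).injective).mpr hy
  rw [FiniteField.isSquare_iff hF2 hινz, FiniteField.isSquare_iff hZ2 hy]
  set q := p / 2 with hq
  set k := ∑ i ∈ Finset.range m, p ^ i with hk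
  have hgeom := aux_geom p m hp.pos
  have hNk : Fintype.card F / 2 = q * k := by
    have h1 : p - 1 = 2 * q := by omega
    rw [hcard, hgeom, ← hk, h1, mul_assoc]; omega
  have hcZ : Fintype.card (ZMod p) / 2 = q := by rw [ZMod.card]
  rw [hNk, hcZ]
  set s := y ^ q with hs
  have hss : s * s = 1 := by
    rw [hs, ← pow_add]
    have : q + q = p - 1 := by omega
    rw [this]
    exact ZMod.pow_card_sub_one_eq_one hy
  have hpow : (algebraMap (ZMod p) F y) ^ (q * k) = algebraMap (ZMod p) F (s ^ k) := by
    rw [← map_pow, ← pow_mul]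
  rw [hpow, show (1 : F) = algebraMap (ZMod p) F 1 from (map_one _).symm,
    (algebraMap (ZMod p) F).injective.eq_iff]
  rcases mul_self_eq_one_iff.mp hss with h1 | h1
  · simp [h1]
  · haveI : Fact (2 < p) := ⟨hp2⟩
    have hne : (-1 : ZMod p) ≠ 1 := ZMod.neg_one_ne_one
    rw [h1, (aux_k_odd p m hpm hmo).neg_one_pow]

lemma aux_char_cast {K : Type} [Field K] [Fintype K] [DecidableEq K] (χ : K → ℂ)
    (hχ : ∀ a, χ a = if a = 0 then 0 else if IsSquare a then 1 else -1) (a : K) :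
    χ a = ((quadraticCharFun K a : ℤ) : ℂ) := by
  rw [hχ, quadraticCharFun]; split_ifs <;> simp

lemma aux_char_mul {K : Type} [Field K] [Fintype K] [DecidableEq K] (χ : K → ℂ)
    (hχ : ∀ a, χ a = if a = 0 then 0 else if IsSquare a then 1 else -1) (a b : K) :
    χ (a * b) = χ a * χ b := by
  rw [aux_char_cast χ hχ, aux_char_cast χ hχ, aux_char_cast χ hχ, quadraticCharFun_mul]
  push_cast; ring

lemma aux_char_sq {K : Type} [Field K] [Fintype K] [DecidableEq K] (χ : K → ℂ)
    (hχ : ∀ a, χ a = if a = 0 then 0 else if IsSquare a then 1 else -1) {a : K} (ha : a ≠ 0) :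
    χ a * χ a = 1 := by
  rw [hχ]; split_ifs with h1 h2
  · exact absurd h1 ha
  · norm_num
  · norm_num

lemma aux_sqrts {K : Type} [Field K] [Fintype K] [DecidableEq K] (hK : ringChar K ≠ 2)
    (χ : K → ℂ)
    (hχ : ∀ a, χ a = if a = 0 then 0 else if IsSquare a then 1 else -1) (u : K) :
    ((Finset.univ.filter (fun x : K => x ^ 2 = u)).card : ℂ) = 1 + χ u := by
  have h := quadraticChar_card_sqrts hK u
  rw [Set.toFinset_setOf] at h
  rw [aux_char_cast χ hχ]
  have : quadraticChar K u = quadraticCharFun K u := rfl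
  rw [this] at h
  rw [show ((Finset.univ.filter (fun x : K => x ^ 2 = u)).card : ℂ)
      = (((Finset.univ.filter (fun x : K => x ^ 2 = u)).card : ℤ) : ℂ) by push_cast; rfl, h]
  push_cast; ring

lemma aux_shift (p m : ℕ) [Fact p.Prime] (hmp : p ∣ m)
    (F : Type) [Field F] [Fintype F] [Algebra (ZMod p) F]
    (hcard : Fintype.card F = p ^ m) (D : ZMod p) (x : F) :
    Algebra.trace (ZMod p) F ((x + algebraMap (ZMod p) F D) ^ 2)
      = Algebra.trace (ZMod p) F (x ^ 2) + 2 * D * Algebra.trace (ZMod p) F x := by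
  have hexp : (x + algebraMap (ZMod p) F D) ^ 2
      = x ^ 2 + algebraMap (ZMod p) F (2 * D) * x + algebraMap (ZMod p) F (D ^ 2) := by
    rw [map_mul, map_pow, map_ofNat]
    ring
  rw [hexp, map_add, map_add, aux_trace_const p m hmp F hcard, add_zero,
    ← Algebra.smul_def, map_smul, smul_eq_mul]

lemma aux_part2 (p m : ℕ) [Fact p.Prime] (hodd : p ≠ 2) (hm : 2 < m) (hmp : p ∣ m)
    (F : Type) [Field F] [Fintype F] [DecidableEq F] [Algebra (ZMod p) F]
    (hcard : Fintype.card F = p ^ m) (A B : ZMod p) (hB : B ≠ 0) :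
    (Finset.univ.filter (fun x : F =>
        Algebra.trace (ZMod p) F (x ^ 2) = A ∧ Algebra.trace (ZMod p) F x = B)).card
      = p ^ (m - 2) := by
  have hp : p.Prime := Fact.out
  have hp2 : 2 < p := hp.two_le.lt_of_ne (Ne.symm hodd)
  have h2Z : (2 : ZMod p) ≠ 0 := by
    have : ((2 : ℕ) : ZMod p) ≠ 0 := by
      rw [Ne, ZMod.natCast_eq_zero_iff]
      intro hdvd
      have := Nat.le_of_dvd (by norm_num) hdvd
      omega
    simpa using this
  -- independence of A
  have hind : ∀ A1 A2 : ZMod p,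
      (Finset.univ.filter (fun x : F =>
        Algebra.trace (ZMod p) F (x ^ 2) = A1 ∧ Algebra.trace (ZMod p) F x = B)).card
      = (Finset.univ.filter (fun x : F =>
        Algebra.trace (ZMod p) F (x ^ 2) = A2 ∧ Algebra.trace (ZMod p) F x = B)).card := by
    intro A1 A2
    set D := (A2 - A1) / (2 * B) with hD
    have h2B : 2 * B ≠ 0 := mul_ne_zero h2Z hB
    have h2DB : 2 * D * B = A2 - A1 := by
      rw [hD]; field_simp
    apply Finset.card_bij' (fun a _ => a + algebraMap (ZMod p) F D)
      (fun b _ => b - algebraMap (ZMod p) F D)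
    · intro a ha
      simp only [Finset.mem_filter, Finset.mem_univ, true_and] at ha ⊢
      obtain ⟨ha1, ha2⟩ := ha
      refine ⟨?_, by rw [map_add, ha2, aux_trace_const p m hmp F hcard, add_zero]⟩
      rw [aux_shift p m hmp F hcard, ha1, ha2]
      linear_combination h2DB
    · intro b hb
      simp only [Finset.mem_filter, Finset.mem_univ, true_and] at hb ⊢
      obtain ⟨hb1, hb2⟩ := hb
      have hb2' : Algebra.trace (ZMod p) F (b - algebraMap (ZMod p) F D) = B := by
        rw [map_sub, hb2, aux_trace_const p m hmp F hcard, sub_zero]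
      refine ⟨?_, hb2'⟩
      have hback := aux_shift p m hmp F hcard D (b - algebraMap (ZMod p) F D)
      rw [sub_add_cancel, hb1, hb2'] at hback
      linear_combination -hback - h2DB
    · intros; ring
    · intros; ring
  -- summing over A2
  have hsum : ∑ A2 : ZMod p, (Finset.univ.filter (fun x : F =>
        Algebra.trace (ZMod p) F (x ^ 2) = A2 ∧ Algebra.trace (ZMod p) F x = B)).card
      = (Finset.univ.filter (fun x : F => Algebra.trace (ZMod p) F x = B)).card := by
    rw [Finset.card_eq_sum_card_fiberwise
      (f := fun x : F => Algebra.trace (ZMod p) F (x ^ 2)) (t := Finset.univ)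
      (fun x _ => Finset.mem_univ _)]
    apply Finset.sum_congr rfl
    intro A2 _
    congr 1
    rw [Finset.filter_filter]
    exact Finset.filter_congr (fun x _ => by tauto)
  rw [Finset.sum_congr rfl (fun A2 _ => hind A2 A), Finset.sum_const, Finset.card_univ,
    ZMod.card, smul_eq_mul, aux_fiber p m (by omega) F hcard] at hsum
  have hpow : p ^ (m - 1) = p * p ^ (m - 2) := by
    rw [← pow_succ']; congr 1; omega
  rw [hpow] at hsum
  exact Nat.eq_of_mul_eq_mul_left hp.pos hsum

lemma aux_sumT (p m : ℕ) [Fact p.Prime] (hm : 0 < m)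
    (F : Type) [Field F] [Fintype F] [DecidableEq F] [Algebra (ZMod p) F]
    (hcard : Fintype.card F = p ^ m)
    (ζ : ℂ) (hζ : IsPrimitiveRoot ζ p) :
    ∑ u : F, ζ ^ (Algebra.trace (ZMod p) F u).val = 0 := by
  rw [← Finset.sum_fiberwise Finset.univ (fun u : F => Algebra.trace (ZMod p) F u)
    (fun u => ζ ^ (Algebra.trace (ZMod p) F u).val)]
  have : ∀ t : ZMod p, ∑ u ∈ Finset.univ.filter
      (fun u : F => Algebra.trace (ZMod p) F u = t), ζ ^ (Algebra.trace (ZMod p) F u).val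
      = (p : ℂ) ^ (m - 1) * ζ ^ t.val := by
    intro t
    rw [Finset.sum_congr rfl (fun u hu => by rw [(Finset.mem_filter.mp hu).2]),
      Finset.sum_const, aux_fiber p m hm F hcard t, nsmul_eq_mul]
    push_cast
    ring
  rw [Finset.sum_congr rfl (fun t _ => this t), ← Finset.mul_sum, aux_e_sum hζ, mul_zero]

lemma aux_Q (p m : ℕ) [Fact p.Prime] (hodd : p ≠ 2) (hm : 0 < m) (hmo : Odd m)
    (F : Type) [Field F] [Fintype F] [DecidableEq F] [Algebra (ZMod p) F]
    (hcard : Fintype.card F = p ^ m)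
    (ζ : ℂ) (hζ : IsPrimitiveRoot ζ p)
    (ηm : F → ℂ)
    (hηm : ∀ a : F, ηm a = if a = 0 then 0 else if IsSquare a then 1 else -1)
    (η : ZMod p → ℂ)
    (hη : ∀ a : ZMod p, η a = if a = 0 then 0 else if IsSquare a then 1 else -1)
    (Gm : ℂ)
    (hGm : Gm = ∑ x ∈ Finset.univ.filter (fun x : F => x ≠ 0),
        ηm x * ζ ^ (Algebra.trace (ZMod p) F x).val)
    (y : ZMod p) (hy : y ≠ 0) :
    ∑ x : F, ζ ^ (Algebra.trace (ZMod p) F (algebraMap (ZMod p) F y * x ^ 2)).val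
      = η y * Gm := by
  haveI : CharP F p := charP_of_injective_algebraMap (algebraMap (ZMod p) F).injective p
  have hrcF : ringChar F ≠ 2 := by rw [ringChar.eq F p]; exact hodd
  set Y := algebraMap (ZMod p) F y with hYdef
  have hY : Y ≠ 0 := fun h =>
    hy ((map_eq_zero_iff _ (algebraMap (ZMod p) F).injective).mp h)
  -- group by u = x^2
  rw [← Finset.sum_fiberwise Finset.univ (fun x : F => x ^ 2)
    (fun x => ζ ^ (Algebra.trace (ZMod p) F (Y * x ^ 2)).val)]
  have hfib : ∀ u : F, ∑ x ∈ Finset.univ.filter (fun x : F => x ^ 2 = u),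
      ζ ^ (Algebra.trace (ZMod p) F (Y * x ^ 2)).val
      = (1 + ηm u) * ζ ^ (Algebra.trace (ZMod p) F (Y * u)).val := by
    intro u
    rw [Finset.sum_congr rfl (fun x hx => by rw [(Finset.mem_filter.mp hx).2]),
      Finset.sum_const, nsmul_eq_mul, aux_sqrts hrcF ηm hηm u]
  rw [Finset.sum_congr rfl (fun u _ => hfib u)]
  have hsplit : ∀ u : F, (1 + ηm u) * ζ ^ (Algebra.trace (ZMod p) F (Y * u)).val
      = ζ ^ (Algebra.trace (ZMod p) F (Y * u)).val
        + ηm u * ζ ^ (Algebra.trace (ZMod p) F (Y * u)).val := fun u => by ring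
  rw [Finset.sum_congr rfl (fun u _ => hsplit u), Finset.sum_add_distrib]
  -- first sum is zero
  have hfirst : ∑ u : F, ζ ^ (Algebra.trace (ZMod p) F (Y * u)).val = 0 := by
    rw [Fintype.sum_bijective (fun u : F => Y * u) (Equiv.mulLeft₀ Y hY).bijective
      (fun u => ζ ^ (Algebra.trace (ZMod p) F (Y * u)).val)
      (fun w => ζ ^ (Algebra.trace (ZMod p) F w).val) (fun u => rfl)]
    exact aux_sumT p m hm F hcard ζ hζ
  rw [hfirst, zero_add]
  -- second sum
  have hsecond : ∑ u : F, ηm u * ζ ^ (Algebra.trace (ZMod p) F (Y * u)).val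
      = ∑ w : F, ηm (Y⁻¹ * w) * ζ ^ (Algebra.trace (ZMod p) F w).val := by
    refine Fintype.sum_bijective (fun u : F => Y * u) (Equiv.mulLeft₀ Y hY).bijective _ _ ?_
    intro u
    rw [inv_mul_cancel_left₀ hY]
  rw [hsecond]
  have hmul : ∀ w : F, ηm (Y⁻¹ * w) * ζ ^ (Algebra.trace (ZMod p) F w).val
      = ηm Y⁻¹ * (ηm w * ζ ^ (Algebra.trace (ZMod p) F w).val) := by
    intro w
    rw [aux_char_mul ηm hηm]
    ring
  rw [Finset.sum_congr rfl (fun w _ => hmul w), ← Finset.mul_sum]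
  have hGm' : ∑ w : F, ηm w * ζ ^ (Algebra.trace (ZMod p) F w).val = Gm := by
    rw [hGm]
    refine (Finset.sum_filter_of_ne ?_).symm
    intro x _ hne h0
    apply hne
    rw [h0, hηm]
    simp
  rw [hGm']
  congr 1
  -- ηm Y⁻¹ = η y
  have hsq : ηm Y * ηm Y = 1 := aux_char_sq ηm hηm hY
  have hprod : ηm Y⁻¹ * ηm Y = 1 := by
    rw [← aux_char_mul ηm hηm, inv_mul_cancel₀ hY, hηm]
    simp
  have hYne : ηm Y ≠ 0 := by
    intro h
    rw [h, mul_zero] at hsq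
    exact zero_ne_one hsq
  have hinv : ηm Y⁻¹ = ηm Y := mul_right_cancel₀ hYne (hprod.trans hsq.symm)
  rw [hinv, hηm, hη]
  have hIS := aux_sq_iff p m hodd hmo F hcard y hy
  simp only [hY, hy, if_false, ← hYdef, hIS]
  exact if_congr hIS rfl rfl

lemma aux_two (p : ℕ) [Fact p.Prime] (hodd : p ≠ 2) : (2 : ZMod p) ≠ 0 := by
  have hp : p.Prime := Fact.out
  have : ((2 : ℕ) : ZMod p) ≠ 0 := by
    rw [Ne, ZMod.natCast_eq_zero_iff]
    intro hdvd
    have := Nat.le_of_dvd (by norm_num) hdvd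
    have := hp.two_le
    interval_cases p
    · exact hodd rfl
  simpa using this

lemma aux_heart (p m : ℕ) [Fact p.Prime] (hodd : p ≠ 2) (hm : 0 < m) (hmo : Odd m)
    (hmp : p ∣ m)
    (F : Type) [Field F] [Fintype F] [DecidableEq F] [Algebra (ZMod p) F]
    (hcard : Fintype.card F = p ^ m)
    (ζ : ℂ) (hζ : IsPrimitiveRoot ζ p)
    (ηm : F → ℂ)
    (hηm : ∀ a : F, ηm a = if a = 0 then 0 else if IsSquare a then 1 else -1)
    (η : ZMod p → ℂ)
    (hη : ∀ a : ZMod p, η a = if a = 0 then 0 else if IsSquare a then 1 else -1)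
    (Gm : ℂ)
    (hGm : Gm = ∑ x ∈ Finset.univ.filter (fun x : F => x ≠ 0),
        ηm x * ζ ^ (Algebra.trace (ZMod p) F x).val)
    (y : ZMod p) (hy : y ≠ 0) :
    ∑ x ∈ Finset.univ.filter (fun x : F => Algebra.trace (ZMod p) F x = 0),
        ζ ^ (y * Algebra.trace (ZMod p) F (x ^ 2)).val
      = η y * Gm := by
  have hp : p.Prime := Fact.out
  have hpC : (p : ℂ) ≠ 0 := Nat.cast_ne_zero.mpr hp.pos.ne'
  have h2Z : (2 : ZMod p) ≠ 0 := aux_two p hodd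
  have hinj := (algebraMap (ZMod p) F).injective
  set Y := algebraMap (ZMod p) F y with hYdef
  have hY : Y ≠ 0 := fun h => hy ((map_eq_zero_iff _ hinj).mp h)
  have h2F : (2 : F) ≠ 0 := by
    have : algebraMap (ZMod p) F 2 = (2 : F) := map_ofNat _ 2
    rw [← this]
    exact fun h => h2Z ((map_eq_zero_iff _ hinj).mp h)
  have hTlin : ∀ (c : ZMod p) (x : F),
      Algebra.trace (ZMod p) F (algebraMap (ZMod p) F c * x)
        = c * Algebra.trace (ZMod p) F x := by
    intro c x
    rw [← Algebra.smul_def, map_smul, smul_eq_mul]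
  have hTY : ∀ x : F, Algebra.trace (ZMod p) F (Y * x ^ 2)
      = y * Algebra.trace (ZMod p) F (x ^ 2) := fun x => hTlin y (x ^ 2)
  -- the completed-square substitution
  have hsub : ∀ z : ZMod p,
      ∑ x : F, ζ ^ (Algebra.trace (ZMod p) F (Y * x ^ 2 + algebraMap (ZMod p) F z * x)).val
      = ∑ x : F, ζ ^ (Algebra.trace (ZMod p) F (Y * x ^ 2)).val := by
    intro z
    set Z := algebraMap (ZMod p) F z with hZdef
    set v : F := -(Z * (2 * Y)⁻¹) with hv
    set c : ZMod p := -(z ^ 2 / (4 * y)) with hc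
    have hιc : algebraMap (ZMod p) F c = -(Z ^ 2 / (4 * Y)) := by
      rw [hc, map_neg, map_div₀, map_pow, map_mul, map_ofNat]
    have h2Y : (2 * Y) * (2 * Y)⁻¹ = 1 := mul_inv_cancel₀ (mul_ne_zero h2F hY)
    set i : F := (2 * Y)⁻¹ with hi
    have h4Yinv : (4 * Y)⁻¹ = Y * i * i :=
      inv_eq_of_mul_eq_one_right (by linear_combination (2 * Y * i + 1) * h2Y)
    have hid : ∀ x : F, Y * (x + v) ^ 2 + Z * (x + v) = Y * x ^ 2 + algebraMap (ZMod p) F c := by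
      intro x
      rw [hιc, hv, div_eq_mul_inv, h4Yinv]
      linear_combination (-(Z * x) + Z ^ 2 * i) * h2Y
    refine (Fintype.sum_bijective (fun x : F => x + v) (Equiv.addRight v).bijective _ _ ?_).symm
    intro x
    rw [hid x, map_add, aux_trace_const p m hmp F hcard, add_zero]
  -- the double-count identity
  have hW : ∑ x : F, ζ ^ (Algebra.trace (ZMod p) F (Y * x ^ 2)).val
      * (∑ z : ZMod p, ζ ^ (z * Algebra.trace (ZMod p) F x).val)
      = (p : ℂ) * ∑ x ∈ Finset.univ.filter (fun x : F => Algebra.trace (ZMod p) F x = 0),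
          ζ ^ (y * Algebra.trace (ZMod p) F (x ^ 2)).val := by
    have h1 : ∀ x : F, ζ ^ (Algebra.trace (ZMod p) F (Y * x ^ 2)).val
        * (∑ z : ZMod p, ζ ^ (z * Algebra.trace (ZMod p) F x).val)
        = if Algebra.trace (ZMod p) F x = 0
          then ζ ^ (y * Algebra.trace (ZMod p) F (x ^ 2)).val * (p : ℂ) else 0 := by
      intro x
      rw [aux_orth hζ, hTY x, mul_ite, mul_zero]
    rw [Finset.sum_congr rfl (fun x _ => h1 x), ← Finset.sum_filter, ← Finset.sum_mul]
    ring
  have hW2 : ∑ x : F, ζ ^ (Algebra.trace (ZMod p) F (Y * x ^ 2)).val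
      * (∑ z : ZMod p, ζ ^ (z * Algebra.trace (ZMod p) F x).val)
      = (p : ℂ) * ∑ x : F, ζ ^ (Algebra.trace (ZMod p) F (Y * x ^ 2)).val := by
    have h2 : ∀ x : F, ζ ^ (Algebra.trace (ZMod p) F (Y * x ^ 2)).val
        * (∑ z : ZMod p, ζ ^ (z * Algebra.trace (ZMod p) F x).val)
        = ∑ z : ZMod p,
            ζ ^ (Algebra.trace (ZMod p) F (Y * x ^ 2 + algebraMap (ZMod p) F z * x)).val := by
      intro x
      rw [Finset.mul_sum]
      refine Finset.sum_congr rfl fun z _ => ?_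
      rw [← aux_e_add hζ, map_add, hTlin z x]
    rw [Finset.sum_congr rfl (fun x _ => h2 x), Finset.sum_comm,
      Finset.sum_congr rfl (fun z _ => hsub z), Finset.sum_const, Finset.card_univ, ZMod.card,
      nsmul_eq_mul]
  have := hW.symm.trans hW2
  have hS := mul_left_cancel₀ hpC this
  rw [hS]
  exact aux_Q p m hodd hm hmo F hcard ζ hζ ηm hηm η hη Gm hGm y hy

lemma aux_part1 (p m : ℕ) [Fact p.Prime] (hodd : p ≠ 2) (hm : 2 < m) (hmo : Odd m)
    (hmp : p ∣ m)
    (F : Type) [Field F] [Fintype F] [DecidableEq F] [Algebra (ZMod p) F]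
    (hcard : Fintype.card F = p ^ m)
    (ζ : ℂ) (hζ : IsPrimitiveRoot ζ p)
    (ηm : F → ℂ)
    (hηm : ∀ a : F, ηm a = if a = 0 then 0 else if IsSquare a then 1 else -1)
    (η : ZMod p → ℂ)
    (hη : ∀ a : ZMod p, η a = if a = 0 then 0 else if IsSquare a then 1 else -1)
    (Gm : ℂ)
    (hGm : Gm = ∑ x ∈ Finset.univ.filter (fun x : F => x ≠ 0),
        ηm x * ζ ^ (Algebra.trace (ZMod p) F x).val)
    (G : ℂ)
    (hG : G = ∑ x ∈ Finset.univ.filter (fun x : ZMod p => x ≠ 0), η x * ζ ^ x.val)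
    (A : ZMod p) (hA : A ≠ 0) :
    (((Finset.univ.filter (fun x : F =>
        Algebra.trace (ZMod p) F (x ^ 2) = A ∧ Algebra.trace (ZMod p) F x = 0)).card : ℂ)
      = (p : ℂ) ^ (m - 2) + η (-A) * (p : ℂ)⁻¹ * Gm * G) := by
  have hp : p.Prime := Fact.out
  have hpC : (p : ℂ) ≠ 0 := Nat.cast_ne_zero.mpr hp.pos.ne'
  set s0 := Finset.univ.filter (fun x : F => Algebra.trace (ZMod p) F x = 0) with hs0
  set N0 := (Finset.univ.filter (fun x : F =>
      Algebra.trace (ZMod p) F (x ^ 2) = A ∧ Algebra.trace (ZMod p) F x = 0)).card with hN0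
  -- Step 1 : p * N0 = double sum
  have step1 : ∑ x ∈ s0, ∑ y : ZMod p, ζ ^ (y * (Algebra.trace (ZMod p) F (x ^ 2) - A)).val
      = (p : ℂ) * N0 := by
    have h1 : ∀ x : F, ∑ y : ZMod p, ζ ^ (y * (Algebra.trace (ZMod p) F (x ^ 2) - A)).val
        = if Algebra.trace (ZMod p) F (x ^ 2) = A then (p : ℂ) else 0 := by
      intro x
      rw [aux_orth hζ]
      simp only [sub_eq_zero]
    rw [Finset.sum_congr rfl (fun x _ => h1 x), ← Finset.sum_filter, Finset.sum_const,
      nsmul_eq_mul, hs0, Finset.filter_filter]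
    have : Finset.univ.filter (fun x : F =>
          Algebra.trace (ZMod p) F x = 0 ∧ Algebra.trace (ZMod p) F (x ^ 2) = A)
        = Finset.univ.filter (fun x : F =>
          Algebra.trace (ZMod p) F (x ^ 2) = A ∧ Algebra.trace (ZMod p) F x = 0) :=
      Finset.filter_congr (fun x _ => by tauto)
    rw [this, ← hN0, mul_comm]
  -- Step 2 : swap and factor
  have step2 : ∑ x ∈ s0, ∑ y : ZMod p, ζ ^ (y * (Algebra.trace (ZMod p) F (x ^ 2) - A)).val
      = ∑ y : ZMod p, (∑ x ∈ s0, ζ ^ (y * Algebra.trace (ZMod p) F (x ^ 2)).val)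
          * ζ ^ (-(y * A)).val := by
    rw [Finset.sum_comm]
    refine Finset.sum_congr rfl fun y _ => ?_
    rw [Finset.sum_mul]
    refine Finset.sum_congr rfl fun x _ => ?_
    rw [← aux_e_add hζ]
    congr 2
    ring
  -- Step 3 : split off y = 0
  have step3 : ∑ y : ZMod p, (∑ x ∈ s0, ζ ^ (y * Algebra.trace (ZMod p) F (x ^ 2)).val)
          * ζ ^ (-(y * A)).val
      = (p : ℂ) ^ (m - 1) + Gm * (η (-A) * G) := by
    rw [← Finset.add_sum_erase Finset.univ _ (Finset.mem_univ (0 : ZMod p))]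
    have hzero : (∑ x ∈ s0, ζ ^ ((0 : ZMod p) * Algebra.trace (ZMod p) F (x ^ 2)).val)
        * ζ ^ (-((0 : ZMod p) * A)).val = (p : ℂ) ^ (m - 1) := by
      simp only [zero_mul, neg_zero, ZMod.val_zero, pow_zero, mul_one]
      rw [Finset.sum_const, nsmul_eq_mul, mul_one, hs0, aux_fiber p m (by omega) F hcard]
      push_cast
      ring
    rw [hzero]
    congr 1
    have hterm : ∀ y ∈ Finset.univ.erase (0 : ZMod p),
        (∑ x ∈ s0, ζ ^ (y * Algebra.trace (ZMod p) F (x ^ 2)).val) * ζ ^ (-(y * A)).val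
        = Gm * (η y * ζ ^ (-(y * A)).val) := by
      intro y hy
      have hy0 : y ≠ 0 := (Finset.mem_erase.mp hy).1
      rw [hs0, aux_heart p m hodd (by omega) hmo hmp F hcard ζ hζ ηm hηm η hη Gm hGm y hy0]
      ring
    rw [Finset.sum_congr rfl hterm, ← Finset.mul_sum]
    congr 1
    -- ∑_{y ≠ 0} η y e(-(yA)) = η(-A) G
    rw [hG, Finset.mul_sum]
    refine Finset.sum_bij' (fun y _ => -(y * A)) (fun u _ => -(u * A⁻¹)) ?_ ?_ ?_ ?_ ?_
    · intro y hy
      have hy0 : y ≠ 0 := (Finset.mem_erase.mp hy).1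
      simp only [Finset.mem_filter, Finset.mem_univ, true_and]
      exact neg_ne_zero.mpr (mul_ne_zero hy0 hA)
    · intro u hu
      have hu0 : u ≠ 0 := (Finset.mem_filter.mp hu).2
      simp only [Finset.mem_erase, Finset.mem_univ, and_true]
      exact neg_ne_zero.mpr (mul_ne_zero hu0 (inv_ne_zero hA))
    · intro y _
      field_simp
    · intro u _
      field_simp
    · intro y hy
      have hy0 : y ≠ 0 := (Finset.mem_erase.mp hy).1
      have hnA : (-A : ZMod p) ≠ 0 := neg_ne_zero.mpr hA
      have h1 : η (-(y * A)) = η (-A) * η y := by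
        rw [show -(y * A) = (-A) * y by ring, aux_char_mul η hη]
      rw [h1]
      have h2 : η (-A) * η (-A) = 1 := aux_char_sq η hη hnA
      linear_combination (-(η y * ζ ^ (-(y * A)).val)) * h2
  -- conclude
  have main : (p : ℂ) * N0 = (p : ℂ) ^ (m - 1) + Gm * (η (-A) * G) := by
    rw [← step1, step2, step3]
  have hpow : (p : ℂ) ^ (m - 1) = p * p ^ (m - 2) := by
    rw [← pow_succ']
    congr 1
    omega
  apply mul_left_cancel₀ hpC
  rw [main, hpow]
  field_simp

/-- For `m` odd with `p ∣ m` and `A ∈ F_p^*`: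
`N(A,0) = p^{m-2} + η(-A)p⁻¹G_mG` and `N(A,B) = p^{m-2}` for `B ≠ 0`. -/
theorem stmt12 (p m : ℕ) [Fact p.Prime] (hodd : p ≠ 2) (hm : 2 < m) (hmo : Odd m)
    (hmp : p ∣ m)
    (F : Type) [Field F] [Fintype F] [DecidableEq F] [Algebra (ZMod p) F]
    (hcard : Fintype.card F = p ^ m)
    (ζ : ℂ) (hζ : IsPrimitiveRoot ζ p)
    (ηm : F → ℂ)
    (hηm : ∀ a : F, ηm a = if a = 0 then 0 else if IsSquare a then 1 else -1)
    (η : ZMod p → ℂ)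
    (hη : ∀ a : ZMod p, η a = if a = 0 then 0 else if IsSquare a then 1 else -1)
    (Gm : ℂ)
    (hGm : Gm = ∑ x ∈ Finset.univ.filter (fun x : F => x ≠ 0),
        ηm x * ζ ^ (Algebra.trace (ZMod p) F x).val)
    (G : ℂ)
    (hG : G = ∑ x ∈ Finset.univ.filter (fun x : ZMod p => x ≠ 0), η x * ζ ^ x.val)
    (A : ZMod p) (hA : A ≠ 0) :
    (((Finset.univ.filter (fun x : F =>
        Algebra.trace (ZMod p) F (x ^ 2) = A ∧ Algebra.trace (ZMod p) F x = 0)).card : ℂ)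
      = (p : ℂ) ^ (m - 2) + η (-A) * (p : ℂ)⁻¹ * Gm * G) ∧
    (∀ B : ZMod p, B ≠ 0 →
      ((Finset.univ.filter (fun x : F =>
          Algebra.trace (ZMod p) F (x ^ 2) = A ∧ Algebra.trace (ZMod p) F x = B)).card : ℂ)
        = (p : ℂ) ^ (m - 2)) := by
  constructor
  · exact aux_part1 p m hodd hm hmo hmp F hcard ζ hζ ηm hηm η hη Gm hGm G hG A hA
  · intro B hB
    rw [aux_part2 p m hodd hm hmp F hcard A B hB]
    push_cast
    ring
end
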